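/- arXiv:1811.10424 — 11 statements merged into one kernel-verified Lean document; each statement's English description precedes it below -/
import Mathlib

section
/- Let α > 0, let r ∈ ℕ, and let (c_n)_{n≥0} be a sequence of complex numbers such that M := Σ_{n=0}^∞ (n!)^{1/α} · 2^{r·n} · |c_n| < ∞. Then the power series Σ_{n=0}^∞ c_n z^n converges absolutely for every z ∈ ℂ, and for all z ∈ ℂ one has |Σ_{n=0}^∞ c_n z^n| ≤ M · exp( |z|^α / (α · 2^{r·α}) ). -/
lemma pow_div_fact_le_exp (t : ℝ) (ht : 0 ≤ t) (n : ℕ) :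
    t ^ n ≤ (n.factorial : ℝ) * Real.exp t := by
  have h1 : t ^ n / (n.factorial : ℝ) ≤ ∑ i ∈ Finset.range (n + 1), t ^ i / i.factorial := by
    refine Finset.single_le_sum (f := fun i => t ^ i / (i.factorial : ℝ)) ?_ (Finset.self_mem_range_succ n)
    intro i _
    positivity
  have h2 := Real.sum_le_exp_of_nonneg ht (n + 1)
  have hf : (0 : ℝ) < n.factorial := by exact_mod_cast n.factorial_pos
  calc t ^ n = t ^ n / (n.factorial : ℝ) * n.factorial := by field_simp
    _ ≤ Real.exp t * n.factorial := by
        apply mul_le_mul_of_nonneg_right (h1.trans h2) hf.le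
    _ = (n.factorial : ℝ) * Real.exp t := mul_comm _ _

lemma key_bound (α : ℝ) (hα : 0 < α) (r n : ℕ) (x : ℝ) (hx : 0 ≤ x) :
    x ^ n ≤ (n.factorial : ℝ) ^ (1 / α) * 2 ^ (r * n) *
      Real.exp (x ^ α / (α * (2 : ℝ) ^ ((r : ℝ) * α))) := by
  set y : ℝ := x / 2 ^ r with hy_def
  have hy : 0 ≤ y := by positivity
  set t : ℝ := y ^ α with ht_def
  have ht : 0 ≤ t := Real.rpow_nonneg hy α
  have h1 : t ^ n ≤ (n.factorial : ℝ) * Real.exp t := pow_div_fact_le_exp t ht n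
  -- raise to power 1/α
  have h2 : (t ^ n) ^ (1 / α) ≤ ((n.factorial : ℝ) * Real.exp t) ^ (1 / α) :=
    Real.rpow_le_rpow (by positivity) h1 (by positivity)
  have hyn : (t ^ n) ^ (1 / α) = y ^ n := by
    rw [ht_def, ← Real.rpow_natCast (y ^ α) n, ← Real.rpow_mul hy, ← Real.rpow_mul hy]
    rw [mul_comm α n, mul_assoc, mul_one_div, div_self hα.ne', mul_one, Real.rpow_natCast]
  have hrhs : ((n.factorial : ℝ) * Real.exp t) ^ (1 / α) =
      (n.factorial : ℝ) ^ (1 / α) * Real.exp (t / α) := by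
    rw [Real.mul_rpow (by positivity) (Real.exp_nonneg t), ← Real.exp_one_rpow t,
      ← Real.rpow_mul (Real.exp_nonneg 1), Real.exp_one_rpow, mul_one_div]
  have h3 : y ^ n ≤ (n.factorial : ℝ) ^ (1 / α) * Real.exp (t / α) := by
    rw [← hyn, ← hrhs]; exact h2
  have h2r : (0 : ℝ) < 2 ^ r := by positivity
  have hx_eq : x ^ n = 2 ^ (r * n) * y ^ n := by
    rw [hy_def, div_pow, pow_mul]
    field_simp
  have ht_eq : t / α = x ^ α / (α * (2 : ℝ) ^ ((r : ℝ) * α)) := by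
    rw [ht_def, hy_def, Real.div_rpow hx h2r.le]
    rw [← Real.rpow_natCast (2 : ℝ) r, ← Real.rpow_mul (by norm_num : (0:ℝ) ≤ 2)]
    rw [div_div, mul_comm ((2:ℝ) ^ ((r:ℝ) * α)) α]
  calc x ^ n = 2 ^ (r * n) * y ^ n := hx_eq
    _ ≤ 2 ^ (r * n) * ((n.factorial : ℝ) ^ (1 / α) * Real.exp (t / α)) := by
        apply mul_le_mul_of_nonneg_left h3 (by positivity)
    _ = (n.factorial : ℝ) ^ (1 / α) * 2 ^ (r * n) *
          Real.exp (x ^ α / (α * (2 : ℝ) ^ ((r : ℝ) * α))) := by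
        rw [ht_eq]; ring

/-- One-dimensional case of Lemma A.1: an ℓ¹-type bound on weighted Taylor
coefficients yields a growth bound of exponential order `α`. -/
theorem weighted_coeff_bound_implies_growth
    (α : ℝ) (hα : 0 < α) (r : ℕ) (c : ℕ → ℂ)
    (hsum : Summable fun n : ℕ =>
      (n.factorial : ℝ) ^ (1 / α) * 2 ^ (r * n) * ‖c n‖) :
    ∀ z : ℂ, Summable (fun n : ℕ => ‖c n * z ^ n‖) ∧
      ‖∑' n : ℕ, c n * z ^ n‖ ≤
        (∑' n : ℕ, (n.factorial : ℝ) ^ (1 / α) * 2 ^ (r * n) * ‖c n‖) *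
          Real.exp (‖z‖ ^ α / (α * (2 : ℝ) ^ ((r : ℝ) * α))) := by
  intro z
  set E : ℝ := Real.exp (‖z‖ ^ α / (α * (2 : ℝ) ^ ((r : ℝ) * α))) with hE
  have hbound : ∀ n : ℕ, ‖c n * z ^ n‖ ≤
      (n.factorial : ℝ) ^ (1 / α) * 2 ^ (r * n) * ‖c n‖ * E := by
    intro n
    rw [norm_mul, norm_pow]
    calc ‖c n‖ * ‖z‖ ^ n
        ≤ ‖c n‖ * ((n.factorial : ℝ) ^ (1 / α) * 2 ^ (r * n) * E) := by
          apply mul_le_mul_of_nonneg_left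
            (key_bound α hα r n (‖z‖) (norm_nonneg z))
            (norm_nonneg (c n))
      _ = (n.factorial : ℝ) ^ (1 / α) * 2 ^ (r * n) * ‖c n‖ * E := by ring
  have hsum2 : Summable (fun n : ℕ =>
      (n.factorial : ℝ) ^ (1 / α) * 2 ^ (r * n) * ‖c n‖ * E) :=
    hsum.mul_right E
  have hsumabs : Summable (fun n : ℕ => ‖c n * z ^ n‖) :=
    Summable.of_nonneg_of_le (fun n => norm_nonneg _) hbound hsum2
  refine ⟨hsumabs, ?_⟩
  have h1 : ‖∑' n : ℕ, c n * z ^ n‖ ≤ ∑' n : ℕ, ‖c n * z ^ n‖ := by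
    exact norm_tsum_le_tsum_norm (f := fun n : ℕ => c n * z ^ n) hsumabs
  refine h1.trans ?_
  calc ∑' n : ℕ, ‖c n * z ^ n‖
      ≤ ∑' n : ℕ, (n.factorial : ℝ) ^ (1 / α) * 2 ^ (r * n) * ‖c n‖ * E :=
        Summable.tsum_le_tsum hbound hsumabs hsum2
    _ = (∑' n : ℕ, (n.factorial : ℝ) ^ (1 / α) * 2 ^ (r * n) * ‖c n‖) * E :=
        hsum.tsum_mul_right E
end

section
/- Let α > 0, ε > 0, M ≥ 0, and let f : ℂ → ℂ be an entire function satisfying |f(z)| ≤ M · exp(ε·|z|^α) for all z ∈ ℂ. Write f(z) = Σ_{n=0}^∞ c_n z^n for its Taylor expansion at 0. Then for every n ∈ ℕ one has |c_n| ≤ M · (α·ε·e)^{n/α} · (n!)^{-1/α}. -/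
/-- One-dimensional coefficient estimate from the proof of Lemma A.2:
a growth bound of exponential order `α` and type `ε` gives a factorial decay
estimate on the Taylor coefficients. -/
theorem growth_implies_coeff_bound
    (α ε M : ℝ) (hα : 0 < α) (hε : 0 < ε) (hM : 0 ≤ M)
    (f : ℂ → ℂ) (c : ℕ → ℂ)
    (hc : ∀ z : ℂ, HasSum (fun n : ℕ => c n * z ^ n) (f z))
    (hbound : ∀ z : ℂ, ‖f z‖ ≤ M * Real.exp (ε * ‖z‖ ^ α)) :
    ∀ n : ℕ, ‖c n‖ ≤
      M * (α * ε * Real.exp 1) ^ ((n : ℝ) / α) * (n.factorial : ℝ) ^ (-(1 / α)) := by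
  set p := FormalMultilinearSeries.ofScalars ℂ c with hp
  have hnorm : ∀ n, ‖p n‖ = ‖c n‖ := fun n => by
    rw [FormalMultilinearSeries.ofScalars_norm]
  have hrad : p.radius = ⊤ := by
    apply FormalMultilinearSeries.radius_eq_top_of_summable_norm
    intro r
    have h1 : Summable (fun n => c n * ((r : ℝ) : ℂ) ^ n) := (hc _).summable
    have h2 := summable_norm_iff.mpr h1
    simpa [hnorm, norm_mul, norm_pow, Complex.norm_real, abs_of_nonneg r.coe_nonneg] using h2
  have hfb : HasFPowerSeriesOnBall f p 0 ⊤ :=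
    { r_le := hrad.ge
      r_pos := ENNReal.zero_lt_top
      hasSum := fun {y} _ => by
        simp only [hp, FormalMultilinearSeries.ofScalars_apply_eq, smul_eq_mul, zero_add]
        exact hc y }
  have hd : Differentiable ℂ f := fun z =>
    (hfb.analyticAt_of_mem (by simp [EMetric.mem_ball])).differentiableAt
  intro n
  rcases Nat.eq_zero_or_pos n with rfl | hn
  · have h0 : c 0 = f 0 := by
      have := hasSum_single (f := fun n : ℕ => c n * (0 : ℂ) ^ n) 0
        (fun b hb => by simp [zero_pow hb])
      simpa using ((hc 0).unique (by simpa using this)).symm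
    have := hbound 0
    simp only [norm_zero, Real.zero_rpow hα.ne', mul_zero, Real.exp_zero, mul_one] at this
    simpa [h0, Real.rpow_zero] using this
  -- n ≥ 1
  set x : ℝ := (n : ℝ) / (α * ε) with hxdef
  have hn' : (0:ℝ) < n := by exact_mod_cast hn
  have hx : 0 < x := div_pos hn' (mul_pos hα hε)
  set R : ℝ := x ^ (1 / α) with hRdef
  have hR : 0 < R := Real.rpow_pos_of_pos hx _
  set Rn : NNReal := ⟨R, hR.le⟩ with hRn
  have hRn0 : 0 < Rn := by exact_mod_cast hR
  have hq := hd.hasFPowerSeriesOnBall 0 hRn0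
  have hpq : p = cauchyPowerSeries f 0 Rn :=
    hfb.hasFPowerSeriesAt.eq_formalMultilinearSeries hq.hasFPowerSeriesAt
  have hRabs : |(Rn : ℝ)| = R := by exact abs_of_nonneg hR.le
  have hcirc : ∀ θ : ℝ, ‖f (circleMap 0 Rn θ)‖ ≤ M * Real.exp (ε * R ^ α) := by
    intro θ
    simpa [norm_circleMap_zero, hRabs] using
      hbound (circleMap 0 Rn θ)
  have hint : (∫ θ : ℝ in (0)..2 * Real.pi, ‖f (circleMap 0 Rn θ)‖) ≤
      2 * Real.pi * (M * Real.exp (ε * R ^ α)) := by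
    have hcont : Continuous fun θ : ℝ => ‖f (circleMap 0 Rn θ)‖ :=
      (hd.continuous.comp (continuous_circleMap 0 Rn)).norm
    calc (∫ θ : ℝ in (0)..2 * Real.pi, ‖f (circleMap 0 Rn θ)‖)
        ≤ ∫ _ : ℝ in (0)..2 * Real.pi, M * Real.exp (ε * R ^ α) := by
          apply intervalIntegral.integral_mono_on Real.two_pi_pos.le
            (hcont.intervalIntegrable _ _) intervalIntegrable_const
          exact fun θ _ => hcirc θ
      _ = 2 * Real.pi * (M * Real.exp (ε * R ^ α)) := by
          simp [intervalIntegral.integral_const, smul_eq_mul]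
          ring
  have key : ‖c n‖ ≤ M * Real.exp (ε * R ^ α) * (R⁻¹) ^ n := by
    rw [← hnorm, hpq]
    refine (norm_cauchyPowerSeries_le f 0 Rn n).trans ?_
    rw [hRabs]
    apply mul_le_mul_of_nonneg_right _ (pow_nonneg (inv_nonneg.2 hR.le) n)
    calc (2 * Real.pi)⁻¹ * ∫ θ : ℝ in (0)..2 * Real.pi, ‖f (circleMap 0 Rn θ)‖
        ≤ (2 * Real.pi)⁻¹ * (2 * Real.pi * (M * Real.exp (ε * R ^ α))) :=
          mul_le_mul_of_nonneg_left hint (inv_nonneg.2 Real.two_pi_pos.le)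
      _ = M * Real.exp (ε * R ^ α) := by
          field_simp
  have hRα : R ^ α = x := by
    rw [hRdef, ← Real.rpow_mul hx.le, one_div_mul_cancel hα.ne', Real.rpow_one]
  have hεx : ε * x = (n : ℝ) / α := by
    rw [hxdef]; field_simp
  have hRinv : (R⁻¹) ^ n = x ^ (-((n : ℝ) / α)) := by
    rw [inv_pow, hRdef, ← Real.rpow_natCast (x ^ (1 / α)) n, ← Real.rpow_mul hx.le,
      ← Real.rpow_neg hx.le]
    congr 1
    field_simp
  rw [hRα, hεx, hRinv] at key
  refine key.trans ?_
  set s : ℝ := (n : ℝ) / α with hsdef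
  have hs : (0:ℝ) ≤ s := div_nonneg (Nat.cast_nonneg n) hα.le
  have h1 : x ^ (-s) = (α * ε) ^ s * (n : ℝ) ^ (-s) := by
    rw [Real.rpow_neg hx.le, Real.rpow_neg (Nat.cast_nonneg n), hxdef,
      Real.div_rpow (Nat.cast_nonneg n) (mul_pos hα hε).le, inv_div, div_eq_mul_inv]
  have h2 : (n : ℝ) ^ (-s) ≤ (n.factorial : ℝ) ^ (-(1 / α)) := by
    have hfact : ((n.factorial : ℝ)) ≤ ((n : ℝ)) ^ (n : ℕ) := by
      exact_mod_cast Nat.factorial_le_pow n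
    have hmono := Real.rpow_le_rpow_of_nonpos
      (by positivity : (0:ℝ) < (n.factorial : ℝ)) hfact
      (by rw [neg_nonpos]; positivity : -(1 / α) ≤ 0)
    refine le_trans (le_of_eq ?_) hmono
    rw [← Real.rpow_natCast ((n : ℝ)) n, ← Real.rpow_mul (Nat.cast_nonneg n)]
    congr 1
    rw [hsdef]
    field_simp
  have h3 : (α * ε * Real.exp 1) ^ s = (α * ε) ^ s * Real.exp 1 ^ s :=
    Real.mul_rpow (mul_pos hα hε).le (Real.exp_pos 1).le
  calc M * Real.exp s * x ^ (-s)
      = M * ((α * ε) ^ s * Real.exp 1 ^ s) * (n : ℝ) ^ (-s) := by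
        rw [h1, Real.exp_one_rpow]; ring
    _ = M * (α * ε * Real.exp 1) ^ s * (n : ℝ) ^ (-s) := by rw [h3]
    _ ≤ M * (α * ε * Real.exp 1) ^ s * (n.factorial : ℝ) ^ (-(1 / α)) := by
        apply mul_le_mul_of_nonneg_left h2
        positivity
end

section
/- Let α > 0 and l ∈ ℕ. Then there exist l' ∈ ℕ and C > 0 such that: for every entire function f : ℂ → ℂ with N := sup_{z∈ℂ} |f(z)| · exp(−2^{−l'}·|z|^α) < ∞, the Taylor coefficients (c_n)_{n≥0} of f at 0 satisfy Σ_{n=0}^∞ (n!)^{1/α} · 2^{l·n} · |c_n| ≤ C · N. -/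
open FormalMultilinearSeries in
lemma cauchy_coeff_bound {f : ℂ → ℂ} {c : ℕ → ℂ}
    (hsum : ∀ z : ℂ, HasSum (fun n : ℕ => c n * z ^ n) (f z))
    {r M : ℝ} (hr : 0 < r) (hM : ∀ θ : ℝ, ‖f (circleMap 0 r θ)‖ ≤ M) (n : ℕ) :
    ‖c n‖ ≤ M / r ^ n := by
  set p : FormalMultilinearSeries ℂ ℂ ℂ := ofScalars ℂ c with hp
  have hcoeff : ∀ n, p.coeff n = c n := fun n => by
    simp [hp, FormalMultilinearSeries.coeff, FormalMultilinearSeries.ofScalars, List.prod_ofFn]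
  have hprad : p.radius = ⊤ := by
    apply p.radius_eq_top_of_summable_norm
    intro r'
    have h1 : Summable fun n : ℕ => c n * ((r' : ℝ) : ℂ) ^ n := (hsum _).summable
    have h2 := summable_norm_iff.mpr h1
    simpa [hp, FormalMultilinearSeries.ofScalars_norm, norm_mul, norm_pow,
      Complex.norm_real, abs_of_nonneg r'.coe_nonneg, hcoeff] using h2
  have hpf : HasFPowerSeriesOnBall f p 0 ⊤ :=
    { r_le := by rw [hprad]
      r_pos := by simp
      hasSum := fun {y} _ => by
        simpa [hp, FormalMultilinearSeries.ofScalars_apply_eq, smul_eq_mul, mul_comm, hcoeff]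
          using hsum y }
  have hdall : ∀ z : ℂ, DifferentiableAt ℂ f z := by
    intro z
    have hd := hpf.differentiableOn
    have hz : z ∈ Metric.eball (0 : ℂ) ⊤ := by simp [Metric.mem_eball, edist_lt_top]
    exact (hd z hz).differentiableAt (EMetric.isOpen_ball.mem_nhds hz)
  lift r to NNReal using hr.le with R hR
  have hR0 : 0 < R := by exact_mod_cast hr
  have hdiff : DifferentiableOn ℂ f (Metric.closedBall 0 R) := fun z _ =>
    (hdall z).differentiableWithinAt
  have hq : HasFPowerSeriesOnBall f (cauchyPowerSeries f 0 R) 0 R :=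
    hdiff.hasFPowerSeriesOnBall hR0
  have heq : p = cauchyPowerSeries f 0 R :=
    hpf.hasFPowerSeriesAt.eq_formalMultilinearSeries hq.hasFPowerSeriesAt
  have hMnn : 0 ≤ M := le_trans (norm_nonneg _) (hM 0)
  have hcont : Continuous f := continuous_iff_continuousAt.2 fun z => (hdall z).continuousAt
  have hint : IntervalIntegrable (fun θ : ℝ => ‖f (circleMap 0 R θ)‖) MeasureTheory.volume 0 (2 * Real.pi) :=
    ((hcont.comp (continuous_circleMap 0 R)).norm).intervalIntegrable _ _
  have hIle : (∫ θ : ℝ in (0)..(2 * Real.pi), ‖f (circleMap 0 R θ)‖) ≤ 2 * Real.pi * M := by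
    calc (∫ θ : ℝ in (0)..(2 * Real.pi), ‖f (circleMap 0 R θ)‖)
        ≤ ∫ _ : ℝ in (0)..(2 * Real.pi), M :=
          intervalIntegral.integral_mono_on Real.two_pi_pos.le hint
            intervalIntegrable_const fun x _ => hM x
      _ = 2 * Real.pi * M := by simp [mul_comm]
  have hbound := norm_cauchyPowerSeries_le f 0 R n
  have hcn : ‖c n‖ = ‖p n‖ := by
    rw [FormalMultilinearSeries.norm_apply_eq_norm_coef, hcoeff]
  rw [hcn, heq]
  calc ‖cauchyPowerSeries f 0 R n‖
      ≤ ((2 * Real.pi)⁻¹ * ∫ θ : ℝ in (0)..(2 * Real.pi), ‖f (circleMap 0 R θ)‖) * |(R : ℝ)|⁻¹ ^ n := hbound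
    _ ≤ ((2 * Real.pi)⁻¹ * (2 * Real.pi * M)) * |(R : ℝ)|⁻¹ ^ n := by
        have : (0:ℝ) ≤ |(R:ℝ)|⁻¹ ^ n := pow_nonneg (inv_nonneg.2 (abs_nonneg _)) n
        gcongr
    _ = M / (R : ℝ) ^ n := by
        rw [inv_mul_cancel_left₀ Real.two_pi_pos.ne']
        rw [abs_of_nonneg R.coe_nonneg, inv_pow, div_eq_mul_inv]

/-- One-dimensional case of Lemma A.2: a growth bound of order `α` and small
type yields an ℓ¹-type bound on the weighted Taylor coefficients. -/
theorem growth_implies_weighted_coeff_summable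
    (α : ℝ) (hα : 0 < α) (l : ℕ) :
    ∃ (l' : ℕ) (C : ℝ), 0 < C ∧
      ∀ (f : ℂ → ℂ) (c : ℕ → ℂ),
        (∀ z : ℂ, HasSum (fun n : ℕ => c n * z ^ n) (f z)) →
        ∀ N : ℝ,
          (∀ z : ℂ, ‖f z‖ *
              Real.exp (-((2 : ℝ) ^ (l' : ℕ))⁻¹ * ‖z‖ ^ α) ≤ N) →
          Summable (fun n : ℕ =>
            (n.factorial : ℝ) ^ (1 / α) * 2 ^ (l * n) * ‖c n‖) ∧
          ∑' n : ℕ, (n.factorial : ℝ) ^ (1 / α) * 2 ^ (l * n) * ‖c n‖ ≤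
            C * N := by
  have hexp1 : (0:ℝ) < Real.exp (1 / α) := Real.exp_pos _
  set β : ℝ := ((2 : ℝ) ^ (l + 1))⁻¹ * (Real.exp (1 / α))⁻¹ with hβdef
  have hβ : 0 < β := by positivity
  set ε : ℝ := β ^ α with hεdef
  have hε : 0 < ε := Real.rpow_pos_of_pos hβ α
  obtain ⟨l', hl'⟩ := pow_unbounded_of_one_lt (α / ε) (one_lt_two (α := ℝ))
  set δ : ℝ := ((2 : ℝ) ^ (l' : ℕ))⁻¹ with hδdef
  have hδ : 0 < δ := by positivity
  have hαδpos : 0 < α * δ := mul_pos hα hδ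
  have hαδ : α * δ ≤ ε := by
    rw [div_lt_iff₀ hε] at hl'
    rw [hδdef]
    rw [mul_inv_le_iff₀ (by positivity)]
    nlinarith
  have hβ' : (α * δ) ^ (1 / α) ≤ β := by
    calc (α * δ) ^ (1 / α) ≤ ε ^ (1 / α) :=
          Real.rpow_le_rpow hαδpos.le hαδ (by positivity)
      _ = β := by
          rw [hεdef, ← Real.rpow_mul hβ.le, mul_one_div_cancel hα.ne', Real.rpow_one]
  have hhalf : (2 : ℝ) ^ l * (β * Real.exp (1 / α)) = 1 / 2 := by
    rw [hβdef]
    field_simp [pow_succ]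
    ring
  refine ⟨l', 2, by norm_num, ?_⟩
  intro f c hsum N hN
  have hc0 : c 0 = f 0 := by
    refine HasSum.unique ?_ (hsum 0)
    have := hasSum_single (f := fun n : ℕ => c n * (0:ℂ) ^ n) 0
      (fun b hb => by simp [zero_pow hb])
    simpa using this
  have hN0 : ‖f 0‖ ≤ N := by
    have := hN 0
    simpa [Real.zero_rpow hα.ne'] using this
  have hNnn : 0 ≤ N := le_trans (norm_nonneg _) hN0
  have key : ∀ n : ℕ,
      (n.factorial : ℝ) ^ (1 / α) * 2 ^ (l * n) * ‖c n‖ ≤ N * (1/2) ^ n := by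
    intro n
    rcases Nat.eq_zero_or_pos n with rfl | hn
    · simpa [Real.one_rpow, hc0] using hN0
    have hnR : (0:ℝ) < n := by exact_mod_cast hn
    set A : ℝ := (n : ℝ) / (α * δ) with hAdef
    have hA : 0 < A := div_pos hnR hαδpos
    set r : ℝ := A ^ (1 / α) with hrdef
    have hr : 0 < r := Real.rpow_pos_of_pos hA _
    have hrα : r ^ α = A := by
      rw [hrdef, ← Real.rpow_mul hA.le, one_div_mul_cancel hα.ne', Real.rpow_one]
    have hδA : δ * A = (n : ℝ) / α := by
      rw [hAdef]; field_simp
    have hM : ∀ θ : ℝ, ‖f (circleMap 0 r θ)‖ ≤ N * Real.exp ((n : ℝ) / α) := by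
      intro θ
      have h1 := hN (circleMap 0 r θ)
      rw [norm_circleMap_zero, abs_of_pos hr] at h1
      have h2 := mul_le_mul_of_nonneg_right h1 (Real.exp_pos (δ * r ^ α)).le
      rw [mul_assoc, ← Real.exp_add, neg_mul] at h2
      rw [hrα, hδA] at h2
      simpa using h2
    have hcb : ‖c n‖ ≤ N * Real.exp ((n : ℝ) / α) / r ^ n :=
      cauchy_coeff_bound hsum hr hM n
    have hrn : r ^ n = (A ^ n) ^ ((1:ℝ) / α) := by
      rw [hrdef, ← Real.rpow_natCast A n, ← Real.rpow_natCast (A ^ ((1:ℝ)/α)) n,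
        ← Real.rpow_mul hA.le, ← Real.rpow_mul hA.le]
      ring_nf
    have hq : (n.factorial : ℝ) / A ^ n ≤ (α * δ) ^ n := by
      have hfac : (n.factorial : ℝ) ≤ (n : ℝ) ^ n := by exact_mod_cast Nat.factorial_le_pow n
      rw [hAdef, div_pow, div_div_eq_mul_div, div_le_iff₀ (by positivity)]
      calc (n.factorial : ℝ) * (α * δ) ^ n ≤ (n : ℝ) ^ n * (α * δ) ^ n := by gcongr
        _ = (α * δ) ^ n * (n : ℝ) ^ n := mul_comm _ _
    have hw23 : (n.factorial : ℝ) ^ (1 / α) / r ^ n ≤ ((α * δ) ^ ((1:ℝ)/α)) ^ n := by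
      rw [hrn, ← Real.div_rpow (by positivity) (by positivity)]
      calc ((n.factorial : ℝ) / A ^ n) ^ ((1:ℝ) / α)
          ≤ ((α * δ) ^ n) ^ ((1:ℝ) / α) :=
            Real.rpow_le_rpow (by positivity) hq (by positivity)
        _ = ((α * δ) ^ ((1:ℝ)/α)) ^ n := by
            rw [← Real.rpow_natCast ((α * δ) ^ ((1:ℝ)/α)) n, ← Real.rpow_natCast (α * δ) n,
              ← Real.rpow_mul hαδpos.le, ← Real.rpow_mul hαδpos.le]
            ring_nf
    have hexpn : Real.exp ((n : ℝ) / α) = Real.exp (1 / α) ^ n := by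
      rw [← Real.exp_nat_mul, mul_one_div]
    have hw : (n.factorial : ℝ) ^ (1 / α) * Real.exp ((n : ℝ) / α) / r ^ n
        ≤ (β * Real.exp (1 / α)) ^ n := by
      calc (n.factorial : ℝ) ^ (1 / α) * Real.exp ((n : ℝ) / α) / r ^ n
          = ((n.factorial : ℝ) ^ (1 / α) / r ^ n) * Real.exp (1 / α) ^ n := by
            rw [hexpn]; ring
        _ ≤ ((α * δ) ^ ((1:ℝ)/α)) ^ n * Real.exp (1 / α) ^ n := by
            gcongr
        _ ≤ β ^ n * Real.exp (1 / α) ^ n := by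
            gcongr
        _ = (β * Real.exp (1 / α)) ^ n := (mul_pow _ _ _).symm
    calc (n.factorial : ℝ) ^ (1 / α) * 2 ^ (l * n) * ‖c n‖
        ≤ (n.factorial : ℝ) ^ (1 / α) * 2 ^ (l * n) * (N * Real.exp ((n : ℝ) / α) / r ^ n) := by
          gcongr
      _ = (N * (2 ^ l) ^ n) * ((n.factorial : ℝ) ^ (1 / α) * Real.exp ((n : ℝ) / α) / r ^ n) := by
          rw [pow_mul]; ring
      _ ≤ (N * (2 ^ l) ^ n) * (β * Real.exp (1 / α)) ^ n := by
          apply mul_le_mul_of_nonneg_left hw (by positivity)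
      _ = N * ((2:ℝ) ^ l * (β * Real.exp (1 / α))) ^ n := by rw [mul_pow]; ring
      _ = N * (1/2) ^ n := by rw [hhalf]
  have hnonneg : ∀ n : ℕ,
      0 ≤ (n.factorial : ℝ) ^ (1 / α) * 2 ^ (l * n) * ‖c n‖ := by
    intro n; positivity
  have hgeo : Summable fun n : ℕ => N * (1/2:ℝ) ^ n :=
    (summable_geometric_of_lt_one (by norm_num) (by norm_num)).mul_left N
  have hs : Summable (fun n : ℕ =>
      (n.factorial : ℝ) ^ (1 / α) * 2 ^ (l * n) * ‖c n‖) :=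
    Summable.of_nonneg_of_le hnonneg key hgeo
  refine ⟨hs, ?_⟩
  calc ∑' n : ℕ, (n.factorial : ℝ) ^ (1 / α) * 2 ^ (l * n) * ‖c n‖
      ≤ ∑' n : ℕ, N * (1/2:ℝ) ^ n := hs.tsum_le_tsum key hgeo
    _ = N * (1 - 1/2)⁻¹ := by rw [tsum_mul_left, tsum_geometric_of_lt_one (by norm_num) (by norm_num)]
    _ = 2 * N := by norm_num [mul_comm]
end

section
/- Let α > 0 and let f : ℂ → ℂ be an entire function with Taylor expansion f(z) = Σ_{n=0}^∞ c_n z^n at 0. Then the following are equivalent: (i) for every t > 0, sup_{z∈ℂ} |f(z)| · exp(−t·|z|^α) < ∞ (i.e., f is of order at most α and minimal type); (ii) for every l ∈ ℕ, Σ_{n=0}^∞ (n!)^{1/α} · 2^{l·n} · |c_n| < ∞. -/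
open Real Filter

namespace MinTypeAux

variable {c : ℕ → ℂ} {f : ℂ → ℂ}




lemma radius_top (hc : ∀ z : ℂ, HasSum (fun n : ℕ => c n * z ^ n) (f z)) :
    (FormalMultilinearSeries.ofScalars ℂ c).radius = ⊤ := by
  refine ENNReal.eq_top_of_forall_nnreal_le fun r => ?_
  refine FormalMultilinearSeries.le_radius_of_tendsto _ (l := 0) ?_
  have h := ((hc ((r : ℝ) : ℂ)).summable.tendsto_atTop_zero).norm
  simp only [norm_mul, norm_pow, Complex.norm_real, Real.norm_eq_abs, norm_zero] at h
  convert h using 2 with n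
  rw [FormalMultilinearSeries.ofScalars_norm]
  simp [abs_of_nonneg r.coe_nonneg]

lemma hasFPS (hc : ∀ z : ℂ, HasSum (fun n : ℕ => c n * z ^ n) (f z)) :
    HasFPowerSeriesOnBall f (FormalMultilinearSeries.ofScalars ℂ c) 0 ⊤ :=
  ⟨by rw [radius_top hc], by simp, fun {y} _ => by
    simpa only [FormalMultilinearSeries.ofScalars_apply_eq, smul_eq_mul, zero_add]
      using hc y⟩

lemma coeff_le (hc : ∀ z : ℂ, HasSum (fun n : ℕ => c n * z ^ n) (f z))
    {M r : ℝ} (hr : 0 < r)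
    (hM : ∀ z : ℂ, ‖z‖ = r → ‖f z‖ ≤ M) (n : ℕ) :
    ‖c n‖ * r ^ n ≤ M := by
  have hfp := hasFPS hc
  have hd : Differentiable ℂ f := fun z =>
    (hfp.analyticAt_of_mem (by simp [edist_lt_top])).differentiableAt
  have hR : (0 : NNReal) < r.toNNReal := by simpa using hr
  have h2 := hd.hasFPowerSeriesOnBall 0 hR
  have hpq := hfp.hasFPowerSeriesAt.eq_formalMultilinearSeries h2.hasFPowerSeriesAt
  have hcn : ‖c n‖ = ‖cauchyPowerSeries f 0 r.toNNReal n‖ := by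
    rw [← hpq, FormalMultilinearSeries.ofScalars_norm]
  have hint : (∫ θ : ℝ in (0)..2 * π, ‖f (circleMap 0 (r.toNNReal : ℝ) θ)‖)
      ≤ 2 * π * M := by
    calc (∫ θ : ℝ in (0)..2 * π, ‖f (circleMap 0 (r.toNNReal : ℝ) θ)‖)
        ≤ ∫ _ : ℝ in (0)..2 * π, M := by
          refine intervalIntegral.integral_mono_on (by positivity) ?_
            intervalIntegrable_const fun θ _ => ?_
          · exact ((hd.continuous.comp (continuous_circleMap _ _)).norm).intervalIntegrable _ _
          · refine hM _ ?_
            rw [show ‖circleMap 0 (↑r.toNNReal) θ‖ = |(r.toNNReal : ℝ)| from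
              norm_circleMap_zero _ _, Real.coe_toNNReal _ hr.le, abs_of_pos hr]
      _ = 2 * π * M := by simp [mul_comm]
  have hb := norm_cauchyPowerSeries_le f 0 (r.toNNReal : ℝ) n
  rw [Real.coe_toNNReal _ hr.le] at hb hcn
  have habs : |r| = r := abs_of_pos hr
  rw [habs] at hb
  have h3 : ‖c n‖ ≤ M * (r⁻¹) ^ n := by
    rw [hcn]
    refine hb.trans ?_
    have hI : (2 * π)⁻¹ * (∫ θ : ℝ in (0)..2 * π, ‖f (circleMap 0 r θ)‖) ≤ M := by
      have := mul_le_mul_of_nonneg_left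
        (by simpa [Real.coe_toNNReal _ hr.le] using hint : (∫ θ : ℝ in (0)..2 * π,
          ‖f (circleMap 0 r θ)‖) ≤ 2 * π * M)
        (inv_nonneg.2 Real.two_pi_pos.le)
      calc (2 * π)⁻¹ * (∫ θ : ℝ in (0)..2 * π, ‖f (circleMap 0 r θ)‖)
          ≤ (2 * π)⁻¹ * (2 * π * M) := this
        _ = M := by field_simp
    exact mul_le_mul_of_nonneg_right hI (pow_nonneg (inv_nonneg.2 hr.le) n)
  calc ‖c n‖ * r ^ n ≤ M * (r⁻¹) ^ n * r ^ n := by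
        gcongr
    _ = M := by rw [mul_assoc, ← mul_pow, inv_mul_cancel₀ hr.ne', one_pow, mul_one]



-- key elementary inequality for the reverse direction
lemma pow_le_weight {α t : ℝ} (hα : 0 < α) (ht : 0 < t) (l : ℕ)
    (hl : ((2:ℝ) ^ (-α)) ^ l ≤ t * α) {R : ℝ} (hR : 0 ≤ R) (n : ℕ) :
    R ^ n ≤ (n.factorial : ℝ) ^ (1 / α) * 2 ^ (l * n) * Real.exp (t * R ^ α) := by
  set s : ℝ := ((2:ℝ) ^ (-α)) ^ l with hs
  have hs0 : 0 < s := pow_pos (Real.rpow_pos_of_pos two_pos _) _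
  set x : ℝ := R ^ α with hxdef
  have hx : 0 ≤ x := Real.rpow_nonneg hR _
  have h1 : (s * x) ^ n / (n.factorial : ℝ) ≤ Real.exp (s * x) :=
    Real.pow_div_factorial_le_exp (x := s * x) (mul_nonneg hs0.le hx) n
  have h2 : x ^ n ≤ (n.factorial : ℝ) * Real.exp (s * x) / s ^ n := by
    rw [le_div_iff₀ (pow_pos hs0 n), div_le_iff₀ (by positivity : (0:ℝ) < (n.factorial : ℝ)),
      mul_pow] at *
    nlinarith [h1]
  -- raise to power 1/α
  have hRn : R ^ n = (x ^ n) ^ (1 / α) := by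
    rw [hxdef, ← Real.rpow_natCast (R ^ α) n, ← Real.rpow_mul hR, ← Real.rpow_mul hR,
      mul_comm α (n:ℝ), mul_assoc, mul_one_div, div_self hα.ne', mul_one,
      Real.rpow_natCast]
  rw [hRn]
  have h3 : (x ^ n) ^ (1 / α) ≤ ((n.factorial : ℝ) * Real.exp (s * x) / s ^ n) ^ (1 / α) :=
    Real.rpow_le_rpow (by positivity) h2 (by positivity)
  refine h3.trans ?_
  rw [Real.div_rpow (by positivity) (by positivity),
    Real.mul_rpow (by positivity) (by positivity)]
  have hsn : (s ^ n) ^ (1 / α) = ((2:ℝ) ^ (l * n) : ℝ)⁻¹ := by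
    rw [hs, ← pow_mul, ← Real.rpow_natCast ((2:ℝ) ^ (-α)) (l * n),
      ← Real.rpow_mul (by norm_num : (0:ℝ) ≤ 2), ← Real.rpow_mul (by norm_num : (0:ℝ) ≤ 2),
      ← Real.rpow_natCast (2:ℝ) (l * n), ← Real.rpow_neg (by norm_num : (0:ℝ) ≤ 2)]
    congr 1
    field_simp
  rw [div_eq_mul_inv, hsn, inv_inv]
  have hexp : (Real.exp (s * x)) ^ (1 / α) ≤ Real.exp (t * x) := by
    rw [← Real.exp_one_rpow (s * x), ← Real.rpow_mul (Real.exp_pos 1).le, Real.exp_one_rpow]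
    refine Real.exp_le_exp.2 ?_
    rw [mul_one_div, div_le_iff₀ hα]
    nlinarith [mul_le_mul_of_nonneg_right hl hx]
  calc (n.factorial : ℝ) ^ (1 / α) * (Real.exp (s * x)) ^ (1 / α) * 2 ^ (l * n)
      ≤ (n.factorial : ℝ) ^ (1 / α) * Real.exp (t * x) * 2 ^ (l * n) := by
        gcongr
    _ = (n.factorial : ℝ) ^ (1 / α) * 2 ^ (l * n) * Real.exp (t * x) := by ring



lemma q_eq {α : ℝ} (hα : 0 < α) (l : ℕ)
    (t : ℝ) (ht : t = (2:ℝ) ^ (-((l:ℝ)+1)*α) / (Real.exp 1 * α)) :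
    (2:ℝ) ^ l * Real.exp (1/α) * (t * α) ^ (1/α) = 1/2 := by
  have htα : t * α = (2:ℝ) ^ (-((l:ℝ)+1)*α) / Real.exp 1 := by
    rw [ht]; field_simp
  rw [htα, Real.div_rpow (Real.rpow_nonneg (by norm_num) _) (Real.exp_pos 1).le,
    ← Real.rpow_mul (by norm_num : (0:ℝ) ≤ 2), Real.exp_one_rpow]
  have he : -((l:ℝ)+1)*α*(1/α) = -((l:ℝ)+1) := by field_simp
  rw [he, ← Real.rpow_natCast (2:ℝ) l]
  rw [show ((2:ℝ) ^ ((l:ℝ)) * Real.exp (1/α) * ((2:ℝ) ^ (-((l:ℝ)+1)) / Real.exp (1/α)))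
      = (2:ℝ) ^ ((l:ℝ)) * (2:ℝ) ^ (-((l:ℝ)+1)) from by
    field_simp]
  rw [← Real.rpow_add two_pos]
  norm_num

lemma fwd_bound {α t : ℝ} (hα : 0 < α) (l : ℕ)
    (ht : t = (2:ℝ) ^ (-((l:ℝ)+1)*α) / (Real.exp 1 * α))
    {C A : ℝ} (hA : 0 ≤ A) (n : ℕ) (hn : 0 < n)
    (h : ∀ r : ℝ, 0 < r → A * r ^ n ≤ C * Real.exp (t * r ^ α)) :
    (n.factorial : ℝ) ^ (1/α) * 2 ^ (l*n) * A ≤ C * (1/2)^n := by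
  have ht0 : 0 < t := by rw [ht]; positivity
  have htα : 0 < t * α := mul_pos ht0 hα
  have hx : 0 < (n:ℝ)/(t*α) := div_pos (by exact_mod_cast hn) htα
  set r : ℝ := ((n:ℝ)/(t*α)) ^ (1/α) with hrdef
  have hr : 0 < r := Real.rpow_pos_of_pos hx _
  have hrα : r ^ α = (n:ℝ)/(t*α) := by
    rw [hrdef, ← Real.rpow_mul hx.le, one_div_mul_cancel hα.ne', Real.rpow_one]
  have htr : t * r ^ α = (n:ℝ) * (1/α) := by
    rw [hrα]; field_simp
  have hrn : r ^ n = (n:ℝ) ^ ((n:ℝ) * (1/α)) / (t*α) ^ ((n:ℝ) * (1/α)) := by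
    rw [hrdef, ← Real.rpow_natCast (((n:ℝ)/(t*α)) ^ (1/α)) n, ← Real.rpow_mul hx.le,
      Real.div_rpow (Nat.cast_nonneg n) htα.le]
    ring_nf
  have hAr : A ≤ C * Real.exp ((n:ℝ) * (1/α)) / r ^ n := by
    rw [le_div_iff₀ (pow_pos hr n), ← htr]
    exact h r hr
  have hfact : (n.factorial : ℝ) ^ (1/α) ≤ (n:ℝ) ^ ((n:ℝ) * (1/α)) := by
    rw [show (n:ℝ) ^ ((n:ℝ) * (1/α)) = ((n:ℝ) ^ (n:ℕ)) ^ (1/α) from by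
      rw [← Real.rpow_natCast (n:ℝ) n, ← Real.rpow_mul (Nat.cast_nonneg n)]]
    exact Real.rpow_le_rpow (by positivity) (by exact_mod_cast Nat.factorial_le_pow n)
      (by positivity)
  calc (n.factorial : ℝ) ^ (1/α) * 2 ^ (l*n) * A
      ≤ (n:ℝ) ^ ((n:ℝ) * (1/α)) * 2 ^ (l*n) * (C * Real.exp ((n:ℝ) * (1/α)) / r ^ n) := by
        gcongr
    _ = C * ((2:ℝ) ^ l * Real.exp (1/α) * (t * α) ^ (1/α)) ^ n := by
        rw [hrn, Real.exp_nat_mul, mul_pow, mul_pow, pow_mul,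
          show ((t*α) ^ (1/α)) ^ n = (t*α) ^ ((n:ℝ) * (1/α)) from by
            rw [← Real.rpow_natCast ((t*α) ^ (1/α)) n, ← Real.rpow_mul htα.le]; ring_nf]
        have hn0 : (0:ℝ) < (n:ℝ) ^ ((n:ℝ) * (1/α)) := Real.rpow_pos_of_pos (by exact_mod_cast hn) _
        field_simp
    _ = C * (1/2)^n := by rw [q_eq hα l t ht]




end MinTypeAux

open MinTypeAux in
/-- One-dimensional case of Theorem 2.12: an entire function is of order at
most `α` and minimal type iff all weighted ℓ¹-norms of its Taylor
coefficients are finite. -/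
theorem minimal_type_iff_weighted_coeff_summable
    (α : ℝ) (hα : 0 < α) (f : ℂ → ℂ) (c : ℕ → ℂ)
    (hc : ∀ z : ℂ, HasSum (fun n : ℕ => c n * z ^ n) (f z)) :
    (∀ t : ℝ, 0 < t → BddAbove (Set.range fun z : ℂ =>
        ‖f z‖ * Real.exp (-t * ‖z‖ ^ α))) ↔
      (∀ l : ℕ, Summable fun n : ℕ =>
        (n.factorial : ℝ) ^ (1 / α) * 2 ^ (l * n) * ‖c n‖) := by
  constructor
  · intro hb l
    set t : ℝ := (2:ℝ) ^ (-((l:ℝ)+1)*α) / (Real.exp 1 * α) with htdef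
    have ht0 : 0 < t := by rw [htdef]; positivity
    obtain ⟨C, hC⟩ := hb t ht0
    have hC' : ∀ z : ℂ, ‖f z‖ * Real.exp (-t * ‖z‖ ^ α) ≤ C :=
      fun z => hC ⟨z, rfl⟩
    have hCf : ∀ z : ℂ, ‖f z‖ ≤ C * Real.exp (t * ‖z‖ ^ α) := by
      intro z
      have h := hC' z
      rw [neg_mul, Real.exp_neg] at h
      have hE : (0:ℝ) < Real.exp (t * ‖z‖ ^ α) := Real.exp_pos _
      calc ‖f z‖
          = ‖f z‖ * (Real.exp (t * ‖z‖ ^ α))⁻¹ *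
            Real.exp (t * ‖z‖ ^ α) := by field_simp
        _ ≤ C * Real.exp (t * ‖z‖ ^ α) := by gcongr
    have hC0 : 0 ≤ C := le_trans (by positivity) (hC' 0)
    have hc0 : c 0 = f 0 := by
      refine HasSum.unique ?_ (hc 0)
      have := hasSum_single (f := fun n : ℕ => c n * (0:ℂ) ^ n) 0
        (fun b hb => by simp [zero_pow hb])
      simpa using this
    have key : ∀ n : ℕ, (n.factorial : ℝ) ^ (1 / α) * 2 ^ (l * n) * ‖c n‖
        ≤ C * (1/2)^n := by
      intro n
      rcases Nat.eq_zero_or_pos n with rfl | hn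
      · simpa [hc0, Real.zero_rpow hα.ne'] using hCf 0
      · refine fwd_bound hα l htdef (norm_nonneg _) n hn fun r hr => ?_
        exact coeff_le hc hr (fun z hz => by rw [← hz]; exact hCf z) n
    exact Summable.of_nonneg_of_le (fun n => by positivity) key
      (summable_geometric_two.mul_left C)
  · intro hs t ht
    have hb1 : (2:ℝ) ^ (-α) < 1 :=
      Real.rpow_lt_one_of_one_lt_of_neg one_lt_two (neg_lt_zero.2 hα)
    obtain ⟨l, hl⟩ := exists_pow_lt_of_lt_one (mul_pos ht hα) hb1
    have hS := hs l
    set S : ℝ := ∑' n, (n.factorial : ℝ) ^ (1 / α) * 2 ^ (l * n) * ‖c n‖ with hSdef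
    refine ⟨S, ?_⟩
    rintro y ⟨z, rfl⟩
    set E : ℝ := Real.exp (t * ‖z‖ ^ α) with hEdef
    have hE0 : 0 < E := Real.exp_pos _
    have hpt : ∀ n : ℕ, ‖c n * z ^ n‖ ≤
        (n.factorial : ℝ) ^ (1 / α) * 2 ^ (l * n) * ‖c n‖ * E := by
      intro n
      rw [norm_mul, norm_pow]
      calc ‖c n‖ * ‖z‖ ^ n
          ≤ ‖c n‖ * ((n.factorial : ℝ) ^ (1 / α) * 2 ^ (l * n) * E) := by
            gcongr
            exact pow_le_weight hα ht l hl.le (norm_nonneg _) n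
        _ = (n.factorial : ℝ) ^ (1 / α) * 2 ^ (l * n) * ‖c n‖ * E := by ring
    have hsum2 : Summable fun n : ℕ => ‖c n * z ^ n‖ :=
      Summable.of_nonneg_of_le (fun n => norm_nonneg _) hpt (hS.mul_right E)
    have hfz : ‖f z‖ ≤ S * E := by
      rw [← (hc z).tsum_eq]
      refine (norm_tsum_le_tsum_norm hsum2).trans ?_
      rw [hSdef, ← tsum_mul_right]
      exact Summable.tsum_le_tsum hpt hsum2 (hS.mul_right E)
    show ‖f z‖ * Real.exp (-t * ‖z‖ ^ α) ≤ S
    rw [neg_mul, Real.exp_neg, ← hEdef]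
    calc ‖f z‖ * E⁻¹ ≤ S * E * E⁻¹ := by gcongr
      _ = S := by field_simp
end

section
/- Let α > 0 and let f : ℂ → ℂ be an entire function such that for every t > 0, sup_{z∈ℂ} |f(z)|·exp(−t|z|^α) < ∞. Write f(z) = Σ_{n=0}^∞ c_n z^n for its Taylor expansion at 0. Then the Taylor series converges to f in the topology of E^α_min(ℂ); that is, for every t > 0, sup_{z∈ℂ} |f(z) − Σ_{n=0}^N c_n z^n| · exp(−t·|z|^α) → 0 as N → ∞. -/
open Filter

/-- One-dimensional case of Corollary 2.14: the Taylor series of a function of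
order at most `α` and minimal type converges in the topology of
`E^α_min(ℂ)`. -/
theorem taylor_series_converges_in_Emin
    (α : ℝ) (hα : 0 < α) (f : ℂ → ℂ) (c : ℕ → ℂ)
    (hc : ∀ z : ℂ, HasSum (fun n : ℕ => c n * z ^ n) (f z))
    (hmin : ∀ t : ℝ, 0 < t → BddAbove (Set.range fun z : ℂ =>
      ‖f z‖ * Real.exp (-t * ‖z‖ ^ α))) :
    ∀ t : ℝ, 0 < t → ∀ ε : ℝ, 0 < ε → ∃ N₀ : ℕ, ∀ N : ℕ, N₀ ≤ N → ∀ z : ℂ,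
      ‖f z - ∑ n ∈ Finset.range (N + 1), c n * z ^ n‖ *
        Real.exp (-t * ‖z‖ ^ α) ≤ ε := by
  classical
  -- the formal power series of `f`
  set p : FormalMultilinearSeries ℂ ℂ ℂ := FormalMultilinearSeries.ofScalars ℂ c with hpdef
  have hpnorm : ∀ n, ‖p n‖ = ‖c n‖ := fun n => by
    rw [hpdef, FormalMultilinearSeries.ofScalars_norm]
  have happly : ∀ (n : ℕ) (z : ℂ), (p n fun _ => z) = c n * z ^ n := fun n z => by
    rw [hpdef, FormalMultilinearSeries.ofScalars_apply_eq, smul_eq_mul]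
  -- the radius of convergence is infinite
  have hrad : p.radius = ⊤ := by
    apply ENNReal.eq_top_of_forall_nnreal_le
    intro r
    apply p.le_radius_of_isBigO
    have h0 : Tendsto (fun n => ‖c n * ((r : ℝ) : ℂ) ^ n‖) atTop (nhds 0) := by
      simpa using (hc ((r : ℝ) : ℂ)).summable.tendsto_atTop_zero.norm
    have heq : (fun n => ‖p n‖ * (r : ℝ) ^ n) = fun n => ‖c n * ((r : ℝ) : ℂ) ^ n‖ := by
      funext n
      rw [hpnorm, norm_mul, norm_pow, Complex.norm_real, Real.norm_eq_abs,
        abs_of_nonneg r.coe_nonneg]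
    rw [heq]
    exact h0.isBigO_one ℝ
  -- `f` is the sum of `p`
  have hsum : ∀ z, p.sum z = f z := fun z => by
    rw [FormalMultilinearSeries.sum]
    have : (fun n => p n fun _ => z) = fun n : ℕ => c n * z ^ n := funext fun n => happly n z
    rw [this]
    exact (hc z).tsum_eq
  have hball : HasFPowerSeriesOnBall f p 0 ⊤ := by
    have h := p.hasFPowerSeriesOnBall (by rw [hrad]; exact ENNReal.zero_lt_top)
    rw [hrad] at h
    exact h.congr fun z _ => hsum z
  have hdiff : Differentiable ℂ f := fun z =>
    (hball.analyticAt_of_mem (EMetric.mem_ball.2 (edist_lt_top _ _))).differentiableAt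
  -- main proof
  intro t ht ε hε
  have h2α : (0 : ℝ) < (2 : ℝ) ^ α := Real.rpow_pos_of_pos two_pos α
  set s : ℝ := t / (2 : ℝ) ^ α with hsdef
  have hs : 0 < s := div_pos ht h2α
  obtain ⟨M, hM⟩ := hmin s hs
  have hMle : ∀ z : ℂ, ‖f z‖ * Real.exp (-s * ‖z‖ ^ α) ≤ M := fun z =>
    hM (Set.mem_range_self z)
  have hM0 : 0 ≤ M :=
    le_trans (mul_nonneg (norm_nonneg _) (Real.exp_pos _).le) (hMle 0)
  have hfb : ∀ z : ℂ, ‖f z‖ ≤ M * Real.exp (s * ‖z‖ ^ α) := by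
    intro z
    have h1 := hMle z
    have h2 : ‖f z‖ =
        ‖f z‖ * Real.exp (-s * ‖z‖ ^ α) *
          Real.exp (s * ‖z‖ ^ α) := by
      rw [mul_assoc, ← Real.exp_add]
      ring_nf
      simp
    rw [h2]
    exact mul_le_mul_of_nonneg_right h1 (Real.exp_pos _).le
  -- Cauchy estimates
  have key : ∀ (n : ℕ) (ρ : ℝ), 0 < ρ →
      ‖c n‖ * ρ ^ n ≤ M * Real.exp (s * ρ ^ α) := by
    intro n ρ hρ
    set K : ℝ := M * Real.exp (s * ρ ^ α) with hKdef
    have hK0 : 0 ≤ K := mul_nonneg hM0 (Real.exp_pos _).le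
    set R : NNReal := ⟨ρ, hρ.le⟩ with hRdef
    have hR : (0 : NNReal) < R := hρ
    have hq := hdiff.hasFPowerSeriesOnBall 0 hR
    have hpq : p = cauchyPowerSeries f 0 R :=
      hball.hasFPowerSeriesAt.eq_formalMultilinearSeries hq.hasFPowerSeriesAt
    have hbound : ∀ θ : ℝ, ‖f (circleMap 0 ρ θ)‖ ≤ K := by
      intro θ
      have habs : ‖circleMap 0 ρ θ‖ = ρ := by
        rw [norm_circleMap_zero, abs_of_pos hρ]
      calc ‖f (circleMap 0 ρ θ)‖ = ‖f (circleMap 0 ρ θ)‖ := rfl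
        _ ≤ M * Real.exp (s * ‖circleMap 0 ρ θ‖ ^ α) := hfb _
        _ = K := by rw [habs]
    have hcont : Continuous fun θ : ℝ => ‖f (circleMap 0 ρ θ)‖ :=
      (hdiff.continuous.comp (continuous_circleMap 0 ρ)).norm
    have hint : (∫ θ : ℝ in (0)..(2 * Real.pi), ‖f (circleMap 0 ρ θ)‖) ≤ 2 * Real.pi * K := by
      calc (∫ θ : ℝ in (0)..(2 * Real.pi), ‖f (circleMap 0 ρ θ)‖)
          ≤ ∫ _ : ℝ in (0)..(2 * Real.pi), K := by
            apply intervalIntegral.integral_mono_on Real.two_pi_pos.le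
              (hcont.intervalIntegrable _ _) intervalIntegrable_const
            exact fun θ _ => hbound θ
        _ = 2 * Real.pi * K := by simp [hKdef]; ring
    have hnorm := norm_cauchyPowerSeries_le f 0 (R : ℝ) n
    have hρR : ((R : ℝ)) = ρ := rfl
    have hcn : ‖c n‖ ≤ K * (ρ⁻¹) ^ n := by
      have h1 : ‖p n‖ ≤ ((2 * Real.pi)⁻¹ * ∫ θ : ℝ in (0)..(2 * Real.pi),
          ‖f (circleMap 0 (R : ℝ) θ)‖) * |(R : ℝ)|⁻¹ ^ n := by
        rw [hpq]; exact hnorm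
      rw [hpnorm] at h1
      refine h1.trans ?_
      rw [hρR, abs_of_pos hρ]
      have h2 : (2 * Real.pi)⁻¹ * (∫ θ : ℝ in (0)..(2 * Real.pi), ‖f (circleMap 0 ρ θ)‖) ≤ K := by
        rw [inv_mul_le_iff₀ Real.two_pi_pos]
        calc (∫ θ : ℝ in (0)..(2 * Real.pi), ‖f (circleMap 0 ρ θ)‖) ≤ 2 * Real.pi * K := hint
          _ = K * (2 * Real.pi) := by ring
          _ ≤ 2 * Real.pi * K := le_of_eq (by ring)
      exact mul_le_mul_of_nonneg_right h2 (pow_nonneg (inv_nonneg.2 hρ.le) n)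
    calc ‖c n‖ * ρ ^ n ≤ K * ρ⁻¹ ^ n * ρ ^ n :=
          mul_le_mul_of_nonneg_right hcn (pow_nonneg hρ.le n)
      _ = K := by
          rw [mul_assoc, ← mul_pow, inv_mul_cancel₀ hρ.ne', one_pow, mul_one]
  -- per-term estimate with the factor `2⁻ⁿ`
  have hcn : ∀ (n : ℕ) (r : ℝ), 0 < r →
      ‖c n‖ * r ^ n ≤ M * (1 / 2 : ℝ) ^ n * Real.exp (t * r ^ α) := by
    intro n r hr
    have h2r : (2 * r) ^ α = (2 : ℝ) ^ α * r ^ α :=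
      Real.mul_rpow (by norm_num) hr.le
    have hexp : s * (2 * r) ^ α = t * r ^ α := by
      rw [h2r, hsdef]
      field_simp
    have hk := key n (2 * r) (by linarith)
    rw [hexp, mul_pow] at hk
    -- hk : |c n| * (2^n * r^n) ≤ M * exp (t r^α)
    have := mul_le_mul_of_nonneg_right hk (le_of_lt (pow_pos (by norm_num : (0:ℝ) < 1/2) n))
    calc ‖c n‖ * r ^ n
        = ‖c n‖ * ((2:ℝ) ^ n * r ^ n) * (1/2 : ℝ) ^ n := by
          rw [div_pow, one_pow]
          field_simp
      _ ≤ M * Real.exp (t * r ^ α) * (1/2 : ℝ) ^ n := this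
      _ = M * (1 / 2 : ℝ) ^ n * Real.exp (t * r ^ α) := by ring
  -- choose N₀
  obtain ⟨N₀, hN₀⟩ := exists_pow_lt_of_lt_one
    (div_pos hε (by linarith : (0:ℝ) < M + 1)) (by norm_num : (1/2 : ℝ) < 1)
  refine ⟨N₀, fun N hN z => ?_⟩
  have hMN : M * (1 / 2 : ℝ) ^ N ≤ ε := by
    have h1 : ((1:ℝ)/2) ^ N ≤ (1/2 : ℝ) ^ N₀ :=
      pow_le_pow_of_le_one (by norm_num) (by norm_num) hN
    calc M * (1 / 2 : ℝ) ^ N ≤ (M + 1) * (1/2 : ℝ) ^ N₀ := by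
          apply mul_le_mul (by linarith) h1 (by positivity) (by linarith)
      _ ≤ (M + 1) * (ε / (M + 1)) := by
          apply mul_le_mul_of_nonneg_left hN₀.le (by linarith)
      _ = ε := by field_simp
  rcases eq_or_ne z 0 with rfl | hz
  · -- `z = 0`
    have h0 : HasSum (fun n : ℕ => c n * (0:ℂ) ^ n) (c 0) := by
      convert hasSum_single (f := fun n : ℕ => c n * (0:ℂ) ^ n) 0
        (fun b hb => by simp [zero_pow hb]) using 1
      simp
    have hf0 : f 0 = c 0 := (hc 0).unique h0
    have hsum0 : (∑ n ∈ Finset.range (N + 1), c n * (0:ℂ) ^ n) = c 0 := by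
      rw [Finset.sum_eq_single 0]
      · simp
      · intro b _ hb; simp [zero_pow hb]
      · intro h; exact absurd (Finset.mem_range.2 (Nat.succ_pos N)) h
    rw [hf0, hsum0, sub_self]
    simp only [map_zero, norm_zero, zero_mul]
    exact hε.le
  · -- `z ≠ 0`
    set r : ℝ := ‖z‖ with hrdef
    have hr : 0 < r := norm_pos_iff.mpr hz
    set K : ℝ := M * Real.exp (t * r ^ α) with hKdef
    have hK0 : 0 ≤ K := mul_nonneg hM0 (Real.exp_pos _).le
    -- remainder as a sum
    have hrem : HasSum (fun n : ℕ => c (n + (N + 1)) * z ^ (n + (N + 1)))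
        (f z - ∑ i ∈ Finset.range (N + 1), c i * z ^ i) :=
      ((hasSum_nat_add_iff' (N + 1)).2 (hc z))
    have hgeo : HasSum (fun n : ℕ => K * (1/2 : ℝ) ^ (N + 1) * (1/2 : ℝ) ^ n)
        (K * (1/2 : ℝ) ^ (N + 1) * 2) := hasSum_geometric_two.mul_left _
    have hterm : ∀ n : ℕ, ‖c (n + (N + 1)) * z ^ (n + (N + 1))‖ ≤
        K * (1/2 : ℝ) ^ (N + 1) * (1/2 : ℝ) ^ n := by
      intro n
      have h1 : ‖c (n + (N + 1)) * z ^ (n + (N + 1))‖ =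
          ‖c (n + (N + 1))‖ * r ^ (n + (N + 1)) := by
        rw [norm_mul, norm_pow, hrdef]
      rw [h1]
      calc ‖c (n + (N + 1))‖ * r ^ (n + (N + 1))
          ≤ M * (1 / 2 : ℝ) ^ (n + (N + 1)) * Real.exp (t * r ^ α) := hcn _ r hr
        _ = K * (1/2 : ℝ) ^ (N + 1) * (1/2 : ℝ) ^ n := by
            rw [hKdef, pow_add]; ring
    have hnormle : ‖f z - ∑ i ∈ Finset.range (N + 1), c i * z ^ i‖ ≤
        K * (1/2 : ℝ) ^ (N + 1) * 2 := by
      rw [← hrem.tsum_eq]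
      exact tsum_of_norm_bounded hgeo hterm
    have hfinal : ‖f z - ∑ n ∈ Finset.range (N + 1), c n * z ^ n‖ ≤
        K * (1/2 : ℝ) ^ N := by
      have : K * (1/2 : ℝ) ^ (N + 1) * 2 = K * (1/2 : ℝ) ^ N := by
        rw [pow_succ]; ring
      rw [← this]
      exact hnormle
    calc ‖f z - ∑ n ∈ Finset.range (N + 1), c n * z ^ n‖ *
          Real.exp (-t * ‖z‖ ^ α)
        ≤ K * (1/2 : ℝ) ^ N * Real.exp (-t * r ^ α) :=
          mul_le_mul_of_nonneg_right hfinal (Real.exp_pos _).le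
      _ = M * (1/2 : ℝ) ^ N * (Real.exp (t * r ^ α) * Real.exp (-(t * r ^ α))) := by
          rw [hKdef, neg_mul]; ring
      _ = M * (1/2 : ℝ) ^ N := by
          rw [← Real.exp_add, add_neg_cancel, Real.exp_zero, mul_one]
      _ ≤ ε := hMN
end

section
/- Let α ∈ (0,1], let C > 0, and let (a_k)_{k≥1} be complex numbers with |a_k| ≤ C^k for all k ≥ 1. Let (φ_n)_{n≥0} be a finitely supported sequence of complex numbers, and define ψ_0 := φ_0 and, for m ≥ 1, ψ_m := (1/m!) · Σ_{(k_1,…,k_m) ∈ (ℕ_{≥1})^m} (k_1+⋯+k_m)! · a_{k_1}⋯a_{k_m} · φ_{k_1+⋯+k_m} (a finite sum, since φ is finitely supported). Then for any l, l' ∈ ℕ with 2^{l'} > C·(1 + 2^l), one has Σ_{m=0}^∞ (m!)^{1/α} · 2^{l·m} · |ψ_m| ≤ (1 − 2^l·C/(2^{l'} − C))^{−1} · Σ_{n=0}^∞ (n!)^{1/α} · 2^{l'·n} · |φ_n|. -/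
private lemma le_sig {m : ℕ} (k : Fin m → ℕ+) : m ≤ ∑ i, (k i : ℕ) := by
  have h : ∑ _i : Fin m, 1 ≤ ∑ i, (k i : ℕ) :=
    Finset.sum_le_sum fun i _ => (k i).pos
  simpa using h

private lemma single_le_sig {m : ℕ} (k : Fin m → ℕ+) (i : Fin m) :
    (k i : ℕ) ≤ ∑ j, (k j : ℕ) :=
  Finset.single_le_sum (f := fun j => (k j : ℕ)) (fun _ _ => Nat.zero_le _) (Finset.mem_univ i)

private def psum {m : ℕ} (k : Fin m → ℕ+) (i : Fin m) : ℕ := ∑ j ∈ Finset.Iic i, (k j : ℕ)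

private lemma one_le_psum {m : ℕ} (k : Fin m → ℕ+) (i : Fin m) : 1 ≤ psum k i :=
  le_trans (k i).pos (Finset.single_le_sum (f := fun j => (k j : ℕ))
    (fun _ _ => Nat.zero_le _) (Finset.mem_Iic.2 le_rfl))

private lemma psum_le_sig {m : ℕ} (k : Fin m → ℕ+) (i : Fin m) :
    psum k i ≤ ∑ j, (k j : ℕ) :=
  Finset.sum_le_sum_of_subset (Finset.subset_univ _)

private lemma psum_strictMono {m : ℕ} (k : Fin m → ℕ+) : StrictMono (psum k) := by
  intro i i' hii
  refine Finset.sum_lt_sum_of_subset (Finset.Iic_subset_Iic.2 hii.le) (Finset.mem_Iic.2 le_rfl)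
    (by simp [Finset.mem_Iic, hii.not_ge]) (k i').pos (fun j _ _ => Nat.zero_le _)

private lemma psum_eq {m : ℕ} {k k' : Fin m → ℕ+} (h : psum k = psum k') : k = k' := by
  have main : ∀ v : ℕ, ∀ i : Fin m, (i : ℕ) = v → k i = k' i := by
    intro v
    induction v using Nat.strong_induction_on with
    | _ v ih =>
      intro i hi
      have h1 : psum k i = psum k' i := congrFun h i
      unfold psum at h1
      rw [← Finset.Iio_insert, Finset.sum_insert (by simp), Finset.sum_insert (by simp)] at h1
      have h2 : ∑ j ∈ Finset.Iio i, ((k j : ℕ)) = ∑ j ∈ Finset.Iio i, ((k' j : ℕ)) := by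
        refine Finset.sum_congr rfl fun j hj => ?_
        have hj' : j < i := Finset.mem_Iio.1 hj
        have hjv : (j : ℕ) < v := by rw [← hi]; exact hj'
        rw [ih (j : ℕ) hjv j rfl]
      have h3 : (k i : ℕ) = (k' i : ℕ) := by omega
      exact PNat.coe_injective h3
  funext i
  exact main (i : ℕ) i rfl

private lemma aux_sum_powerset_pow (x : ℝ) (s : Finset ℕ) :
    ∑ t ∈ s.powerset, x ^ t.card = (x + 1) ^ s.card := by
  calc ∑ t ∈ s.powerset, x ^ t.card
      = ∑ t ∈ s.powerset, (∏ _i ∈ t, x) * ∏ _i ∈ s \ t, (1:ℝ) := by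
        refine Finset.sum_congr rfl fun t ht => ?_
        rw [Finset.prod_const, Finset.prod_const, one_pow, mul_one]
    _ = ∏ _i ∈ s, (x + 1) := (Finset.prod_add _ _ _).symm
    _ = (x + 1) ^ s.card := Finset.prod_const _

private lemma key_fact (α : ℝ) (hα : 0 < α) (hα1 : α ≤ 1) {m n : ℕ} (hmn : m ≤ n) :
    (m.factorial : ℝ) ^ (1/α) * (m.factorial : ℝ)⁻¹ * (n.factorial : ℝ)
      ≤ (n.factorial : ℝ) ^ (1/α) := by
  have hm : (0:ℝ) < m.factorial := by exact_mod_cast m.factorial_pos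
  have hn : (0:ℝ) < n.factorial := by exact_mod_cast n.factorial_pos
  have hexp : (0:ℝ) ≤ 1/α - 1 := by
    rw [sub_nonneg, le_div_iff₀ hα, one_mul]; exact hα1
  have hmn' : (m.factorial:ℝ) ≤ n.factorial := by exact_mod_cast Nat.factorial_le hmn
  have e1 : (m.factorial:ℝ)^(1/α) * (m.factorial:ℝ)⁻¹ = (m.factorial:ℝ)^(1/α - 1) := by
    rw [Real.rpow_sub hm, Real.rpow_one]; ring
  calc (m.factorial:ℝ)^(1/α) * (m.factorial:ℝ)⁻¹ * (n.factorial:ℝ)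
      = (m.factorial:ℝ)^(1/α - 1) * (n.factorial:ℝ) := by rw [e1]
    _ ≤ (n.factorial:ℝ)^(1/α - 1) * (n.factorial:ℝ) :=
        mul_le_mul_of_nonneg_right (Real.rpow_le_rpow hm.le hmn' hexp) hn.le
    _ = (n.factorial:ℝ)^((1/α - 1) + 1) := (Real.rpow_add_one hn.ne' _).symm
    _ = (n.factorial:ℝ)^(1/α) := by congr 1; ring

private def AA (M : ℕ) (m : ℕ) : Finset (Fin m → ℕ+) :=
  (Fintype.piFinset fun _ : Fin m => Finset.Iic M.succPNat).filter
    (fun k => ∑ i, (k i : ℕ) < M)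

private lemma f_zero_outside {M m : ℕ} (φ : ℕ → ℂ) (a : ℕ+ → ℂ)
    (hMz : ∀ n, M ≤ n → φ n = 0) (k : Fin m → ℕ+) (hk : k ∉ AA M m) :
    ((∑ i, (k i : ℕ)).factorial : ℂ) * (∏ i, a (k i)) * φ (∑ i, (k i : ℕ)) = 0 := by
  by_cases hs : ∑ i, (k i : ℕ) < M
  · exfalso
    apply hk
    rw [AA, Finset.mem_filter]
    refine ⟨Fintype.mem_piFinset.2 fun i => Finset.mem_Iic.2 ?_, hs⟩
    have h1 : (k i : ℕ) ≤ M + 1 := by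
      have := single_le_sig k i; omega
    rw [← PNat.coe_le_coe, Nat.succPNat_coe]
    exact h1
  · rw [hMz _ (not_lt.1 hs), mul_zero]

/-- Step 1 estimate in the proof of Theorem 3.5 (one-dimensional case):
boundedness of the umbral operator between weighted ℓ¹-coefficient norms. -/
theorem umbral_operator_estimate
    (α : ℝ) (hα : 0 < α) (hα1 : α ≤ 1) (C : ℝ) (hC : 0 < C)
    (a : ℕ+ → ℂ) (ha : ∀ k : ℕ+, ‖a k‖ ≤ C ^ (k : ℕ))
    (φ : ℕ → ℂ) (hφ : ∃ N : ℕ, ∀ n : ℕ, N ≤ n → φ n = 0)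
    (ψ : ℕ → ℂ) (hψ0 : ψ 0 = φ 0)
    (hψ : ∀ m : ℕ, 1 ≤ m → ψ m = (m.factorial : ℂ)⁻¹ *
      ∑' k : Fin m → ℕ+, ((∑ i, (k i : ℕ)).factorial : ℂ) *
        (∏ i, a (k i)) * φ (∑ i, (k i : ℕ)))
    (l l' : ℕ) (hll' : C * (1 + 2 ^ l) < 2 ^ l') :
    ∑' m : ℕ, (m.factorial : ℝ) ^ (1 / α) * 2 ^ (l * m) * ‖ψ m‖ ≤
      (1 - 2 ^ l * C / (2 ^ l' - C))⁻¹ *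
        ∑' n : ℕ, (n.factorial : ℝ) ^ (1 / α) * 2 ^ (l' * n) * ‖φ n‖ := by
  classical
  obtain ⟨N₀, hN₀⟩ := hφ
  set M := N₀ + 1 with hMdef
  have hMz : ∀ n, M ≤ n → φ n = 0 := fun n hn => hN₀ n (by omega)
  have hM1 : 1 ≤ M := by omega
  -- numeric facts
  have h2l : (0:ℝ) < 2 ^ l := by positivity
  have h2l' : (0:ℝ) < 2 ^ l' := by positivity
  have hCl' : C < 2 ^ l' := by nlinarith
  set q : ℝ := 2 ^ l * C / (2 ^ l' - C) with hqdef
  have hq0 : 0 ≤ q := div_nonneg (by positivity) (by linarith)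
  have hq1 : q < 1 := by
    rw [hqdef, div_lt_one (by linarith)]; nlinarith
  have hinv1 : 1 ≤ (1 - q)⁻¹ := by
    rw [le_inv_comm₀ (by norm_num) (by linarith)]; linarith
  -- ψ vanishes for m ≥ M
  have hψzero : ∀ m, M ≤ m → ψ m = 0 := by
    intro m hm
    rw [hψ m (le_trans hM1 hm)]
    have hz : ∑' k : Fin m → ℕ+, (((∑ i, (k i : ℕ)).factorial : ℂ) *
        (∏ i, a (k i)) * φ (∑ i, (k i : ℕ))) = 0 := by
      rw [show (fun k : Fin m → ℕ+ => (((∑ i, (k i : ℕ)).factorial : ℂ) *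
          (∏ i, a (k i)) * φ (∑ i, (k i : ℕ)))) = fun _ => 0 from
        funext fun k => by rw [hMz _ (le_trans hm (le_sig k)), mul_zero]]
      exact tsum_zero
    rw [hz, mul_zero]
  -- reduce tsums to finite ranges
  have hL : ∑' m : ℕ, (m.factorial : ℝ) ^ (1 / α) * 2 ^ (l * m) * ‖ψ m‖
      = ∑ m ∈ Finset.range M, (m.factorial : ℝ) ^ (1 / α) * 2 ^ (l * m) * ‖ψ m‖ :=
    tsum_eq_sum (fun m hm => by
      rw [hψzero m (Nat.le_of_not_lt (by simpa using hm))]; simp)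
  have hR : ∑' n : ℕ, (n.factorial : ℝ) ^ (1 / α) * 2 ^ (l' * n) * ‖φ n‖
      = ∑ n ∈ Finset.range M, (n.factorial : ℝ) ^ (1 / α) * 2 ^ (l' * n) * ‖φ n‖ :=
    tsum_eq_sum (fun n hn => by
      rw [hMz n (Nat.le_of_not_lt (by simpa using hn))]; simp)
  rw [hL, hR]
  have hrange : Finset.range M = insert 0 (Finset.Ioo 0 M) := by
    ext x; simp only [Finset.mem_range, Finset.mem_insert, Finset.mem_Ioo]; omega
  -- step bound for each 1 ≤ m < M
  have hstep : ∀ m ∈ Finset.Ioo 0 M,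
      (m.factorial : ℝ) ^ (1/α) * 2 ^ (l * m) * ‖ψ m‖ ≤
      ∑ k ∈ AA M m, 2 ^ (l * m) * (((∑ i, (k i : ℕ)).factorial : ℝ) ^ (1/α) *
        (C ^ (∑ i, (k i : ℕ)) * ‖φ (∑ i, (k i : ℕ))‖)) := by
    intro m hm
    obtain ⟨hm0, hmM⟩ := Finset.mem_Ioo.1 hm
    have habs : ‖ψ m‖ ≤ (m.factorial:ℝ)⁻¹ * ∑ k ∈ AA M m,
        ((∑ i, (k i : ℕ)).factorial : ℝ) *
          (C ^ (∑ i, (k i : ℕ)) * ‖φ (∑ i, (k i : ℕ))‖) := by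
      rw [hψ m hm0, tsum_eq_sum (f_zero_outside φ a hMz), norm_mul, norm_inv,
        Complex.norm_natCast]
      refine mul_le_mul_of_nonneg_left ?_ (by positivity)
      refine le_trans (norm_sum_le _ _) (Finset.sum_le_sum fun k hk => ?_)
      rw [norm_mul, norm_mul, Complex.norm_natCast, norm_prod]
      have hprod : ∏ i, ‖a (k i)‖ ≤ C ^ (∑ i, (k i : ℕ)) := by
        calc ∏ i, ‖a (k i)‖ ≤ ∏ i, C ^ (k i : ℕ) :=
              Finset.prod_le_prod (fun i _ => norm_nonneg _) (fun i _ => ha (k i))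
          _ = C ^ (∑ i, (k i : ℕ)) := Finset.prod_pow_eq_pow_sum _ _ _
      calc (((∑ i, (k i : ℕ)).factorial:ℝ) * ∏ i, ‖a (k i)‖) *
            ‖φ (∑ i, (k i : ℕ))‖
          ≤ (((∑ i, (k i : ℕ)).factorial:ℝ) * C ^ (∑ i, (k i : ℕ))) *
            ‖φ (∑ i, (k i : ℕ))‖ :=
            mul_le_mul_of_nonneg_right
              (mul_le_mul_of_nonneg_left hprod (by positivity)) (norm_nonneg _)
        _ = ((∑ i, (k i : ℕ)).factorial:ℝ) *
            (C ^ (∑ i, (k i : ℕ)) * ‖φ (∑ i, (k i : ℕ))‖) := by ring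
    calc (m.factorial : ℝ)^(1/α) * 2^(l*m) * ‖ψ m‖
        ≤ (m.factorial : ℝ)^(1/α) * 2^(l*m) * ((m.factorial:ℝ)⁻¹ * ∑ k ∈ AA M m,
            ((∑ i, (k i : ℕ)).factorial : ℝ) *
              (C ^ (∑ i, (k i : ℕ)) * ‖φ (∑ i, (k i : ℕ))‖)) := by
          refine mul_le_mul_of_nonneg_left habs (by positivity)
      _ = ∑ k ∈ AA M m, ((m.factorial:ℝ)^(1/α) * (m.factorial:ℝ)⁻¹ *
            ((∑ i, (k i : ℕ)).factorial : ℝ)) *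
            (2^(l*m) * (C ^ (∑ i, (k i : ℕ)) * ‖φ (∑ i, (k i : ℕ))‖)) := by
          simp only [Finset.mul_sum]
          exact Finset.sum_congr rfl fun k _ => by ring
      _ ≤ ∑ k ∈ AA M m, 2 ^ (l * m) * (((∑ i, (k i : ℕ)).factorial : ℝ) ^ (1/α) *
            (C ^ (∑ i, (k i : ℕ)) * ‖φ (∑ i, (k i : ℕ))‖)) := by
          refine Finset.sum_le_sum fun k _ => ?_
          have hkey := key_fact α hα hα1 (le_sig k)
          calc ((m.factorial:ℝ)^(1/α) * (m.factorial:ℝ)⁻¹ *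
                ((∑ i, (k i : ℕ)).factorial : ℝ)) *
                (2^(l*m) * (C ^ (∑ i, (k i : ℕ)) * ‖φ (∑ i, (k i : ℕ))‖))
              ≤ ((∑ i, (k i : ℕ)).factorial : ℝ) ^ (1/α) *
                (2^(l*m) * (C ^ (∑ i, (k i : ℕ)) * ‖φ (∑ i, (k i : ℕ))‖)) :=
                mul_le_mul_of_nonneg_right hkey (by positivity)
            _ = 2 ^ (l * m) * (((∑ i, (k i : ℕ)).factorial : ℝ) ^ (1/α) *
                (C ^ (∑ i, (k i : ℕ)) * ‖φ (∑ i, (k i : ℕ))‖)) := by ring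
  -- injection into pairs (n, S)
  have hgnonneg : ∀ p : ℕ × Finset ℕ, 0 ≤ 2 ^ (l * p.2.card) *
      ((p.1.factorial:ℝ)^(1/α) * (C ^ p.1 * ‖φ p.1‖)) := fun p => by positivity
  have hcard : ∀ (m : ℕ) (k : Fin m → ℕ+), (Finset.image (psum k) Finset.univ).card = m := by
    intro m k
    rw [Finset.card_image_of_injective _ (psum_strictMono k).injective, Finset.card_univ,
      Fintype.card_fin]
  set T : Finset (Σ m : ℕ, (Fin m → ℕ+)) := (Finset.Ioo 0 M).sigma (fun m => AA M m) with hT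
  set e : (Σ m : ℕ, (Fin m → ℕ+)) → ℕ × Finset ℕ :=
    fun x => (∑ i, (x.2 i : ℕ), Finset.image (psum x.2) Finset.univ) with he
  have hinj : Function.Injective e := by
    rintro ⟨m, k⟩ ⟨m', k'⟩ hxy
    simp only [he, Prod.mk.injEq] at hxy
    obtain ⟨h1, h2⟩ := hxy
    have hm : m = m' := by rw [← hcard m k, ← hcard m' k', h2]
    subst hm
    have hps : psum k = psum k' := by
      have c1 := hcard m k
      have hf1 := Finset.orderEmbOfFin_unique c1
        (fun x => Finset.mem_image_of_mem _ (Finset.mem_univ x)) (psum_strictMono k)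
      have hf2 := Finset.orderEmbOfFin_unique (s := Finset.image (psum k) Finset.univ) c1
        (f := psum k') (fun x => by rw [h2]; exact Finset.mem_image_of_mem _ (Finset.mem_univ x))
        (psum_strictMono k')
      exact hf1.trans hf2.symm
    rw [psum_eq hps]
  set V : Finset (ℕ × Finset ℕ) :=
    (Finset.Ioo 0 M).biUnion (fun n => (Finset.Icc 1 n).powerset.image (fun S => (n, S))) with hV
  have hTV : T.image e ⊆ V := by
    intro y hy
    obtain ⟨⟨m, k⟩, hxT, rfl⟩ := Finset.mem_image.1 hy
    rw [hT, Finset.mem_sigma] at hxT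
    obtain ⟨hm, hk⟩ := hxT
    rw [Finset.mem_Ioo] at hm
    rw [AA, Finset.mem_filter] at hk
    have hsig : (∑ i, (k i : ℕ)) ∈ Finset.Ioo 0 M :=
      Finset.mem_Ioo.2 ⟨lt_of_lt_of_le hm.1 (le_sig k), hk.2⟩
    refine Finset.mem_biUnion.2 ⟨∑ i, (k i : ℕ), hsig,
      Finset.mem_image.2 ⟨Finset.image (psum k) Finset.univ, ?_, rfl⟩⟩
    rw [Finset.mem_powerset]
    intro x hx
    obtain ⟨i, _, rfl⟩ := Finset.mem_image.1 hx
    exact Finset.mem_Icc.2 ⟨one_le_psum k i, psum_le_sig k i⟩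
  have hdisj : (↑(Finset.Ioo 0 M) : Set ℕ).PairwiseDisjoint
      (fun n => (Finset.Icc 1 n).powerset.image (fun S => (n, S))) := by
    intro n hn n' hn' hnn'
    refine Finset.disjoint_left.2 fun p hp hp' => ?_
    obtain ⟨S, _, rfl⟩ := Finset.mem_image.1 hp
    obtain ⟨S', _, hS⟩ := Finset.mem_image.1 hp'
    exact hnn' (congrArg Prod.fst hS).symm
  have hVsum : ∑ y ∈ V, 2 ^ (l * y.2.card) *
        ((y.1.factorial:ℝ)^(1/α) * (C ^ y.1 * ‖φ y.1‖))
      = ∑ n ∈ Finset.Ioo 0 M, ((2:ℝ)^l + 1)^n *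
        ((n.factorial:ℝ)^(1/α) * (C ^ n * ‖φ n‖)) := by
    rw [hV, Finset.sum_biUnion hdisj]
    refine Finset.sum_congr rfl fun n hn => ?_
    rw [Finset.sum_image (fun S₁ _ S₂ _ h => congrArg Prod.snd h)]
    calc ∑ S ∈ (Finset.Icc 1 n).powerset, 2 ^ (l * S.card) *
          ((n.factorial:ℝ)^(1/α) * (C^n * ‖φ n‖))
        = (∑ S ∈ (Finset.Icc 1 n).powerset, ((2:ℝ)^l) ^ S.card) *
          ((n.factorial:ℝ)^(1/α) * (C^n * ‖φ n‖)) := by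
          rw [Finset.sum_mul]
          exact Finset.sum_congr rfl fun S _ => by rw [pow_mul]
      _ = ((2:ℝ)^l + 1)^n * ((n.factorial:ℝ)^(1/α) * (C^n * ‖φ n‖)) := by
          rw [aux_sum_powerset_pow, Nat.card_Icc]
          simp
  have hchain : ∑ m ∈ Finset.Ioo 0 M, (m.factorial : ℝ)^(1/α) * 2^(l*m) * ‖ψ m‖
      ≤ ∑ n ∈ Finset.Ioo 0 M, ((2:ℝ)^l + 1)^n *
        ((n.factorial:ℝ)^(1/α) * (C^n * ‖φ n‖)) := by
    refine le_trans (Finset.sum_le_sum hstep) ?_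
    rw [← hVsum]
    have e1 : ∑ m ∈ Finset.Ioo 0 M, ∑ k ∈ AA M m, 2 ^ (l * m) *
          (((∑ i, (k i:ℕ)).factorial:ℝ)^(1/α) *
            (C ^ (∑ i, (k i:ℕ)) * ‖φ (∑ i, (k i:ℕ))‖))
        = ∑ x ∈ T, 2 ^ (l * (e x).2.card) *
          (((e x).1.factorial:ℝ)^(1/α) * (C ^ (e x).1 * ‖φ (e x).1‖)) := by
      rw [hT, Finset.sum_sigma]
      refine Finset.sum_congr rfl fun m hm => Finset.sum_congr rfl fun k hk => ?_
      simp only [he]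
      rw [hcard m k]
    rw [e1]
    have e2 : ∑ y ∈ T.image e, 2 ^ (l * y.2.card) *
          ((y.1.factorial:ℝ)^(1/α) * (C ^ y.1 * ‖φ y.1‖))
        = ∑ x ∈ T, 2 ^ (l * (e x).2.card) *
          (((e x).1.factorial:ℝ)^(1/α) * (C ^ (e x).1 * ‖φ (e x).1‖)) :=
      Finset.sum_image (fun x _ y _ h => hinj h)
    rw [← e2]
    exact Finset.sum_le_sum_of_subset_of_nonneg hTV (fun p _ _ => hgnonneg p)
  rw [hrange, Finset.sum_insert (by simp), Finset.sum_insert (by simp), mul_add]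
  have h0 : (Nat.factorial 0 : ℝ)^(1/α) * 2^(l*0) * ‖ψ 0‖
      ≤ (1-q)⁻¹ * ((Nat.factorial 0 : ℝ)^(1/α) * 2^(l'*0) * ‖φ 0‖) := by
    simp only [Nat.factorial_zero, Nat.cast_one, Real.one_rpow, mul_zero, pow_zero,
      one_mul, mul_one, hψ0]
    exact le_mul_of_one_le_left (norm_nonneg _) hinv1
  refine add_le_add h0 (le_trans hchain ?_)
  rw [Finset.mul_sum]
  refine Finset.sum_le_sum fun n hn => ?_
  have hbase : ((2:ℝ)^l + 1) * C ≤ 2^l' := by nlinarith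
  have hpow : ((2:ℝ)^l + 1)^n * C^n ≤ 2^(l'*n) := by
    rw [← mul_pow, pow_mul]
    exact pow_le_pow_left₀ (by positivity) hbase n
  calc ((2:ℝ)^l+1)^n * ((n.factorial:ℝ)^(1/α) * (C^n * ‖φ n‖))
      = (((2:ℝ)^l+1)^n * C^n) * ((n.factorial:ℝ)^(1/α) * ‖φ n‖) := by ring
    _ ≤ 2^(l'*n) * ((n.factorial:ℝ)^(1/α) * ‖φ n‖) :=
        mul_le_mul_of_nonneg_right hpow (by positivity)
    _ = (n.factorial:ℝ)^(1/α) * 2^(l'*n) * ‖φ n‖ := by ring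
    _ ≤ (1-q)⁻¹ * ((n.factorial:ℝ)^(1/α) * 2^(l'*n) * ‖φ n‖) :=
        le_mul_of_one_le_left (by positivity) hinv1
end

section
/- Let α ∈ (0,1], let C ≥ 1, and let (θ_k)_{k≥0} be complex numbers with |θ_k| ≤ C^k for all k ≥ 0. For a finitely supported sequence (φ_n)_{n≥0} of complex numbers define ψ_k := Σ_{n≥k} (n!/k!) · θ_{n−k} · φ_n for each k ≥ 0 (a finite sum). Then for every l ∈ ℕ there exist l' ∈ ℕ and C' > 0 such that for every finitely supported (φ_n)_{n≥0}: Σ_{k=0}^∞ (k!)^{1/α} · 2^{l·k} · |ψ_k| ≤ C' · Σ_{n=0}^∞ (n!)^{1/α} · 2^{l'·n} · |φ_n|. -/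
/-- Step 3 estimate in the proof of Theorem 3.5 (one-dimensional case):
boundedness of the transition operator from a Sheffer sequence to its basic
sequence between weighted ℓ¹-coefficient norms. -/
theorem sheffer_transition_estimate
    (α : ℝ) (hα : 0 < α) (hα1 : α ≤ 1) (C : ℝ) (hC : 1 ≤ C)
    (θ : ℕ → ℂ) (hθ : ∀ k : ℕ, ‖θ k‖ ≤ C ^ k) (l : ℕ) :
    ∃ (l' : ℕ) (C' : ℝ), 0 < C' ∧
      ∀ φ : ℕ → ℂ, (∃ N : ℕ, ∀ n : ℕ, N ≤ n → φ n = 0) →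
      ∀ ψ : ℕ → ℂ,
        (∀ k : ℕ, ψ k = ∑' n : ℕ, if k ≤ n then
          (n.factorial : ℂ) / (k.factorial : ℂ) * θ (n - k) * φ n else 0) →
        ∑' k : ℕ, (k.factorial : ℝ) ^ (1 / α) * 2 ^ (l * k) * ‖ψ k‖ ≤
          C' * ∑' n : ℕ, (n.factorial : ℝ) ^ (1 / α) * 2 ^ (l' * n) * ‖φ n‖ := by
  classical
  set m := Nat.ceil C with hm
  have hCm : C ≤ (2 : ℝ) ^ m := by
    calc C ≤ (m : ℝ) := Nat.le_ceil C
    _ ≤ (2 : ℝ) ^ m := by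
        exact_mod_cast (Nat.lt_two_pow_self (n := m)).le
  refine ⟨l + 1 + m, 1, one_pos, ?_⟩
  rintro φ ⟨N, hN⟩ ψ hψ
  have hα' : (1 : ℝ) ≤ 1 / α := one_le_one_div hα hα1
  set F : ℕ → ℕ → ℂ := fun k n => if k ≤ n then
      (n.factorial : ℂ) / (k.factorial : ℂ) * θ (n - k) * φ n else 0 with hFdef
  have hF0 : ∀ k n, N ≤ n → F k n = 0 := by
    intro k n hn
    simp only [hFdef, hN n hn, mul_zero, ite_self]
  have hψs : ∀ k, ψ k = ∑ n ∈ Finset.range N, F k n := by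
    intro k
    rw [hψ k]
    exact tsum_eq_sum (fun n hn => hF0 k n (by simpa using hn))
  have hψ0 : ∀ k, N ≤ k → ψ k = 0 := by
    intro k hk
    rw [hψs k]
    apply Finset.sum_eq_zero
    intro n hn
    simp only [Finset.mem_range] at hn
    simp only [hFdef]
    rw [if_neg (by omega)]
  rw [tsum_eq_sum (s := Finset.range N)
      (fun k hk => by rw [hψ0 k (by simpa using hk)]; simp),
      tsum_eq_sum (s := Finset.range N)
      (fun n hn => by rw [hN n (by simpa using hn)]; simp), one_mul]
  -- termwise bound
  have key : ∀ k n : ℕ,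
      (k.factorial : ℝ) ^ (1 / α) * 2 ^ (l * k) * ‖F k n‖ ≤
      (if k ≤ n then
        (n.factorial : ℝ) ^ (1 / α) * 2 ^ (l * n) * C ^ n * ‖φ n‖ else 0) := by
    intro k n
    by_cases hkn : k ≤ n
    · simp only [hFdef, if_pos hkn]
      rw [norm_mul, norm_mul, norm_div, Complex.norm_natCast, Complex.norm_natCast]
      have hfk : (0 : ℝ) < (k.factorial : ℝ) := by exact_mod_cast k.factorial_pos
      have hdvd : (k.factorial : ℝ) ≤ (n.factorial : ℝ) := by
        exact_mod_cast Nat.factorial_le hkn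
      have hq : (1 : ℝ) ≤ (n.factorial : ℝ) / (k.factorial : ℝ) := (one_le_div hfk).2 hdvd
      have h1 : (k.factorial : ℝ) ^ (1 / α) * ((n.factorial : ℝ) / (k.factorial : ℝ)) ≤
          (n.factorial : ℝ) ^ (1 / α) := by
        have hmono : (n.factorial : ℝ) / (k.factorial : ℝ) ≤
            ((n.factorial : ℝ) / (k.factorial : ℝ)) ^ (1 / α) := by
          calc (n.factorial : ℝ) / (k.factorial : ℝ)
              = ((n.factorial : ℝ) / (k.factorial : ℝ)) ^ (1 : ℝ) := (Real.rpow_one _).symm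
            _ ≤ _ := Real.rpow_le_rpow_of_exponent_le hq hα'
        calc (k.factorial : ℝ) ^ (1 / α) * ((n.factorial : ℝ) / (k.factorial : ℝ))
            ≤ (k.factorial : ℝ) ^ (1 / α) * ((n.factorial : ℝ) / (k.factorial : ℝ)) ^ (1 / α) := by
              exact mul_le_mul_of_nonneg_left hmono (Real.rpow_nonneg hfk.le _)
          _ = ((k.factorial : ℝ) * ((n.factorial : ℝ) / (k.factorial : ℝ))) ^ (1 / α) :=
              (Real.mul_rpow hfk.le (by positivity)).symm
          _ = (n.factorial : ℝ) ^ (1 / α) := by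
              congr 1
              field_simp
      have h2 : (2 : ℝ) ^ (l * k) ≤ 2 ^ (l * n) := by
        apply pow_le_pow_right₀ one_le_two (Nat.mul_le_mul_left l hkn)
      have h3 : ‖θ (n - k)‖ ≤ C ^ n :=
        (hθ _).trans (pow_le_pow_right₀ hC (Nat.sub_le n k))
      calc (k.factorial : ℝ) ^ (1 / α) * 2 ^ (l * k) *
            ((n.factorial : ℝ) / (k.factorial : ℝ) * ‖θ (n - k)‖ * ‖φ n‖)
          = ((k.factorial : ℝ) ^ (1 / α) * ((n.factorial : ℝ) / (k.factorial : ℝ))) *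
              (2 : ℝ) ^ (l * k) * ‖θ (n - k)‖ * ‖φ n‖ := by ring
        _ ≤ (n.factorial : ℝ) ^ (1 / α) * 2 ^ (l * n) * C ^ n * ‖φ n‖ := by
            gcongr
    · simp only [hFdef, if_neg hkn, norm_zero, mul_zero, le_refl]
  calc ∑ k ∈ Finset.range N, (k.factorial : ℝ) ^ (1 / α) * 2 ^ (l * k) * ‖ψ k‖
      ≤ ∑ k ∈ Finset.range N, ∑ n ∈ Finset.range N,
          (k.factorial : ℝ) ^ (1 / α) * 2 ^ (l * k) * ‖F k n‖ := by
        apply Finset.sum_le_sum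
        intro k _
        rw [hψs k, ← Finset.mul_sum]
        have := norm_sum_le (Finset.range N) (F k)
        have hw : (0:ℝ) ≤ (k.factorial : ℝ) ^ (1 / α) * 2 ^ (l * k) := by positivity
        calc (k.factorial : ℝ) ^ (1 / α) * 2 ^ (l * k) * ‖∑ n ∈ Finset.range N, F k n‖
            ≤ (k.factorial : ℝ) ^ (1 / α) * 2 ^ (l * k) * ∑ n ∈ Finset.range N, ‖F k n‖ :=
              mul_le_mul_of_nonneg_left this hw
          _ = _ := rfl
    _ ≤ ∑ k ∈ Finset.range N, ∑ n ∈ Finset.range N,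
          (if k ≤ n then (n.factorial : ℝ) ^ (1 / α) * 2 ^ (l * n) * C ^ n * ‖φ n‖ else 0) := by
        apply Finset.sum_le_sum; intro k _; apply Finset.sum_le_sum; intro n _; exact key k n
    _ = ∑ n ∈ Finset.range N, ∑ k ∈ Finset.range N,
          (if k ≤ n then (n.factorial : ℝ) ^ (1 / α) * 2 ^ (l * n) * C ^ n * ‖φ n‖ else 0) :=
        Finset.sum_comm
    _ ≤ ∑ n ∈ Finset.range N, (n.factorial : ℝ) ^ (1 / α) * 2 ^ ((l + 1 + m) * n) * ‖φ n‖ := by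
        apply Finset.sum_le_sum
        intro n hn
        simp only [Finset.mem_range] at hn
        have hfilter : ∑ k ∈ Finset.range N,
            (if k ≤ n then (n.factorial : ℝ) ^ (1 / α) * 2 ^ (l * n) * C ^ n * ‖φ n‖ else 0)
            = (n + 1 : ℝ) * ((n.factorial : ℝ) ^ (1 / α) * 2 ^ (l * n) * C ^ n * ‖φ n‖) := by
          rw [← Finset.sum_filter]
          have hset : (Finset.range N).filter (· ≤ n) = Finset.range (n + 1) := by
            ext k
            simp only [Finset.mem_filter, Finset.mem_range]
            omega
          rw [hset, Finset.sum_const, Finset.card_range, nsmul_eq_mul]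
          push_cast
          ring
        rw [hfilter]
        have hexp : (2 : ℝ) ^ ((l + 1 + m) * n) =
            2 ^ (l * n) * 2 ^ n * ((2 : ℝ) ^ m) ^ n := by
          rw [← pow_mul, ← pow_add, ← pow_add]
          congr 1
          ring
        rw [hexp]
        have hn1 : ((n : ℝ) + 1) ≤ 2 ^ n := by
          exact_mod_cast (Nat.lt_two_pow_self (n := n))
        have hCn : C ^ n ≤ ((2 : ℝ) ^ m) ^ n :=
          pow_le_pow_left₀ (le_trans zero_le_one hC) hCm n
        calc ((n : ℝ) + 1) * ((n.factorial : ℝ) ^ (1 / α) * 2 ^ (l * n) * C ^ n * ‖φ n‖)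
            = (n.factorial : ℝ) ^ (1 / α) * 2 ^ (l * n) *
                (((n : ℝ) + 1) * C ^ n) * ‖φ n‖ := by ring
          _ ≤ (n.factorial : ℝ) ^ (1 / α) * 2 ^ (l * n) *
                ((2 : ℝ) ^ n * ((2 : ℝ) ^ m) ^ n) * ‖φ n‖ := by
              gcongr
          _ = (n.factorial : ℝ) ^ (1 / α) * (2 ^ (l * n) * 2 ^ n * ((2 : ℝ) ^ m) ^ n) *
                ‖φ n‖ := by ring
end

section
/- Let β > 1, let C ≥ 1, and let (θ_k)_{k≥0} be complex numbers with |θ_k| ≤ C^k · (k!)^{1/β − 1} for all k ≥ 0. For a finitely supported sequence (φ_n)_{n≥0} of complex numbers define ψ_k := Σ_{n≥k} (n!/k!) · θ_{n−k} · φ_n for each k ≥ 0 (a finite sum). Then for every l ∈ ℕ there exist l' ∈ ℕ and C' > 0 such that for every finitely supported (φ_n)_{n≥0}: Σ_{k=0}^∞ (k!)^{1/β} · 2^{l·k} · |ψ_k| ≤ C' · Σ_{n=0}^∞ (n!)^{1/β} · 2^{l'·n} · |φ_n|. -/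
private lemma choose_le_two_pow_real {k n : ℕ} (hkn : k ≤ n) :
    ((n.choose k : ℝ)) ≤ 2 ^ n := by
  have h : n.choose k ≤ 2 ^ n := by
    calc n.choose k ≤ ∑ i ∈ Finset.range (n + 1), n.choose i :=
          Finset.single_le_sum (fun i _ => Nat.zero_le _)
            (Finset.mem_range.2 (Nat.lt_succ_of_le hkn))
      _ = 2 ^ n := Nat.sum_range_choose n
  exact_mod_cast h

private lemma factorial_rpow_est (β : ℝ) (hβ : 1 < β) {k n : ℕ} (hkn : k ≤ n) :
    (k.factorial : ℝ) ^ (1 / β) * ((n.factorial : ℝ) / (k.factorial : ℝ)) *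
      ((n - k).factorial : ℝ) ^ (1 / β - 1)
      ≤ (n.factorial : ℝ) ^ (1 / β) * 2 ^ n := by
  have hβ0 : (0:ℝ) < β := lt_trans one_pos hβ
  have h1β : 0 < 1 / β := by positivity
  have hfk : (0:ℝ) < (k.factorial : ℝ) := by exact_mod_cast k.factorial_pos
  have hfnk : (0:ℝ) < ((n - k).factorial : ℝ) := by exact_mod_cast (n - k).factorial_pos
  set b : ℝ := (n.choose k : ℝ) with hbdef
  have hb1 : (1:ℝ) ≤ b := by
    rw [hbdef]
    have : 1 ≤ n.choose k := (Nat.choose_pos hkn)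
    exact_mod_cast this
  have hb0 : (0:ℝ) < b := lt_of_lt_of_le one_pos hb1
  have hbn : b ≤ 2 ^ n := choose_le_two_pow_real hkn
  have hfac : (n.factorial : ℝ) = b * (k.factorial : ℝ) * ((n - k).factorial : ℝ) := by
    rw [hbdef]
    have := Nat.choose_mul_factorial_mul_factorial hkn
    exact_mod_cast (congrArg (fun x : ℕ => (x : ℝ)) this).symm
  have hdiv : (n.factorial : ℝ) / (k.factorial : ℝ) = b * ((n - k).factorial : ℝ) := by
    rw [hfac]; field_simp
  have hFnk : ((n - k).factorial : ℝ) * ((n - k).factorial : ℝ) ^ (1 / β - 1)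
      = ((n - k).factorial : ℝ) ^ (1 / β) := by
    calc ((n - k).factorial : ℝ) * ((n - k).factorial : ℝ) ^ (1 / β - 1)
        = ((n - k).factorial : ℝ) ^ (1:ℝ) * ((n - k).factorial : ℝ) ^ (1 / β - 1) := by
          rw [Real.rpow_one]
      _ = ((n - k).factorial : ℝ) ^ (1 + (1 / β - 1)) := (Real.rpow_add hfnk _ _).symm
      _ = ((n - k).factorial : ℝ) ^ (1 / β) := by ring_nf
  have hkey : b ≤ b ^ (1 / β) * 2 ^ n := by
    have h1 : b ^ (1 - 1 / β) ≤ b := by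
      calc b ^ (1 - 1 / β) ≤ b ^ (1:ℝ) :=
            Real.rpow_le_rpow_of_exponent_le hb1 (by linarith)
        _ = b := Real.rpow_one b
    have h2 : b = b ^ (1 / β) * b ^ (1 - 1 / β) := by
      rw [← Real.rpow_add hb0]
      ring_nf
      rw [Real.rpow_one]
    calc b = b ^ (1 / β) * b ^ (1 - 1 / β) := h2
      _ ≤ b ^ (1 / β) * 2 ^ n := by
          have hbp : (0:ℝ) ≤ b ^ (1 / β) := Real.rpow_nonneg hb0.le _
          exact mul_le_mul_of_nonneg_left (le_trans h1 hbn) hbp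
  have hrpow : (n.factorial : ℝ) ^ (1 / β)
      = b ^ (1 / β) * (k.factorial : ℝ) ^ (1 / β) * ((n - k).factorial : ℝ) ^ (1 / β) := by
    rw [hfac, Real.mul_rpow (by positivity) hfnk.le, Real.mul_rpow hb0.le hfk.le]
  calc (k.factorial : ℝ) ^ (1 / β) * ((n.factorial : ℝ) / (k.factorial : ℝ)) *
        ((n - k).factorial : ℝ) ^ (1 / β - 1)
      = b * ((k.factorial : ℝ) ^ (1 / β) *
          (((n - k).factorial : ℝ) * ((n - k).factorial : ℝ) ^ (1 / β - 1))) := by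
        rw [hdiv]; ring
    _ = b * ((k.factorial : ℝ) ^ (1 / β) * ((n - k).factorial : ℝ) ^ (1 / β)) := by
        rw [hFnk]
    _ ≤ (b ^ (1 / β) * 2 ^ n) *
          ((k.factorial : ℝ) ^ (1 / β) * ((n - k).factorial : ℝ) ^ (1 / β)) := by
        apply mul_le_mul_of_nonneg_right hkey
        positivity
    _ = (n.factorial : ℝ) ^ (1 / β) * 2 ^ n := by rw [hrpow]; ring

/-- Key estimate in the proof of Theorem 3.9 (one-dimensional case):
boundedness of the Appell--Sheffer operator between weighted ℓ¹-coefficient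
norms of exponent `β > 1`, under factorially improved coefficient bounds. -/
theorem appell_operator_estimate
    (β : ℝ) (hβ : 1 < β) (C : ℝ) (hC : 1 ≤ C)
    (θ : ℕ → ℂ)
    (hθ : ∀ k : ℕ, ‖θ k‖ ≤ C ^ k * (k.factorial : ℝ) ^ (1 / β - 1))
    (l : ℕ) :
    ∃ (l' : ℕ) (C' : ℝ), 0 < C' ∧
      ∀ φ : ℕ → ℂ, (∃ N : ℕ, ∀ n : ℕ, N ≤ n → φ n = 0) →
      ∀ ψ : ℕ → ℂ,
        (∀ k : ℕ, ψ k = ∑' n : ℕ, if k ≤ n then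
          (n.factorial : ℂ) / (k.factorial : ℂ) * θ (n - k) * φ n else 0) →
        ∑' k : ℕ, (k.factorial : ℝ) ^ (1 / β) * 2 ^ (l * k) * ‖ψ k‖ ≤
          C' * ∑' n : ℕ, (n.factorial : ℝ) ^ (1 / β) * 2 ^ (l' * n) * ‖φ n‖ := by
  obtain ⟨m, hm⟩ := pow_unbounded_of_one_lt C (one_lt_two : (1:ℝ) < 2)
  have hm' : C ≤ 2 ^ m := hm.le
  refine ⟨l + m + 2, 1, one_pos, ?_⟩
  rintro φ ⟨N, hN⟩ ψ hψ
  set l' : ℕ := l + m + 2 with hl'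
  -- ψ k vanishes for k ≥ N
  have hψzero : ∀ k, N ≤ k → ψ k = 0 := by
    intro k hk
    rw [hψ k]
    have : ∀ n : ℕ, (if k ≤ n then
        (n.factorial : ℂ) / (k.factorial : ℂ) * θ (n - k) * φ n else 0) = 0 := by
      intro n
      split_ifs with h
      · rw [hN n (le_trans hk h), mul_zero]
      · rfl
    simp [this]
  -- ψ k as a finite sum
  have hψsum : ∀ k, ψ k = ∑ n ∈ Finset.range N, (if k ≤ n then
      (n.factorial : ℂ) / (k.factorial : ℂ) * θ (n - k) * φ n else 0) := by
    intro k
    rw [hψ k]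
    apply tsum_eq_sum
    intro n hn
    have hn' : N ≤ n := by simpa using hn
    split_ifs with h
    · rw [hN n hn', mul_zero]
    · rfl
  -- reduce both tsums to finite sums
  have hL : ∑' k : ℕ, (k.factorial : ℝ) ^ (1 / β) * 2 ^ (l * k) * ‖ψ k‖
      = ∑ k ∈ Finset.range N, (k.factorial : ℝ) ^ (1 / β) * 2 ^ (l * k) * ‖ψ k‖ := by
    apply tsum_eq_sum
    intro k hk
    rw [hψzero k (by simpa using hk)]
    simp
  have hR : ∑' n : ℕ, (n.factorial : ℝ) ^ (1 / β) * 2 ^ (l' * n) * ‖φ n‖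
      = ∑ n ∈ Finset.range N, (n.factorial : ℝ) ^ (1 / β) * 2 ^ (l' * n) * ‖φ n‖ := by
    apply tsum_eq_sum
    intro n hn
    rw [hN n (by simpa using hn)]
    simp
  rw [hL, hR, one_mul]
  -- pointwise weight bound
  set w : ℕ → ℕ → ℝ := fun k n =>
    (k.factorial : ℝ) ^ (1 / β) * 2 ^ (l * k) *
      ((n.factorial : ℝ) / (k.factorial : ℝ) * ‖θ (n - k)‖ * ‖φ n‖)
    with hw
  have step1 : ∀ k, (k.factorial : ℝ) ^ (1 / β) * 2 ^ (l * k) * ‖ψ k‖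
      ≤ ∑ n ∈ Finset.range N, (if k ≤ n then w k n else 0) := by
    intro k
    have habs : ‖ψ k‖ ≤ ∑ n ∈ Finset.range N, (if k ≤ n then
        (n.factorial : ℝ) / (k.factorial : ℝ) * ‖θ (n - k)‖ * ‖φ n‖
        else 0) := by
      rw [hψsum k]
      refine le_trans (norm_sum_le _ _) ?_
      apply Finset.sum_le_sum
      intro n _
      split_ifs with h
      · rw [norm_mul, norm_mul, norm_div, Complex.norm_natCast, Complex.norm_natCast]
      · simp
    have hcoef : (0:ℝ) ≤ (k.factorial : ℝ) ^ (1 / β) * 2 ^ (l * k) := by positivity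
    calc (k.factorial : ℝ) ^ (1 / β) * 2 ^ (l * k) * ‖ψ k‖
        ≤ (k.factorial : ℝ) ^ (1 / β) * 2 ^ (l * k) *
          (∑ n ∈ Finset.range N, (if k ≤ n then
            (n.factorial : ℝ) / (k.factorial : ℝ) * ‖θ (n - k)‖ * ‖φ n‖
            else 0)) := mul_le_mul_of_nonneg_left habs hcoef
      _ = ∑ n ∈ Finset.range N, (if k ≤ n then w k n else 0) := by
          rw [Finset.mul_sum]
          apply Finset.sum_congr rfl
          intro n _
          split_ifs with h
          · rfl
          · rw [mul_zero]
    -- done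
  -- pointwise |w| bound for k ≤ n
  have hwbound : ∀ n k : ℕ, k ≤ n → w k n ≤
      (n.factorial : ℝ) ^ (1 / β) * 2 ^ (l * n) * C ^ n * 2 ^ n * ‖φ n‖ := by
    intro n k hkn
    have hθb := hθ (n - k)
    have hfk : (0:ℝ) < (k.factorial : ℝ) := by exact_mod_cast k.factorial_pos
    have hφ : (0:ℝ) ≤ ‖φ n‖ := norm_nonneg _
    have h1 : w k n ≤ (k.factorial : ℝ) ^ (1 / β) * 2 ^ (l * k) *
        ((n.factorial : ℝ) / (k.factorial : ℝ) *
          (C ^ (n - k) * ((n - k).factorial : ℝ) ^ (1 / β - 1)) * ‖φ n‖) := by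
      rw [hw]
      have hpos : (0:ℝ) ≤ (k.factorial : ℝ) ^ (1 / β) * 2 ^ (l * k) := by positivity
      apply mul_le_mul_of_nonneg_left _ hpos
      apply mul_le_mul_of_nonneg_right _ hφ
      apply mul_le_mul_of_nonneg_left hθb (by positivity)
    refine le_trans h1 ?_
    have hA := factorial_rpow_est β hβ hkn
    have h2l : (2:ℝ) ^ (l * k) ≤ 2 ^ (l * n) :=
      pow_le_pow_right₀ one_le_two (Nat.mul_le_mul_left l hkn)
    have h2C : C ^ (n - k) ≤ C ^ n := pow_le_pow_right₀ hC (Nat.sub_le n k)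
    have key : (k.factorial : ℝ) ^ (1 / β) *
        ((n.factorial : ℝ) / (k.factorial : ℝ)) * ((n - k).factorial : ℝ) ^ (1 / β - 1)
        ≤ (n.factorial : ℝ) ^ (1 / β) * 2 ^ n := hA
    have e1 : (k.factorial : ℝ) ^ (1 / β) * 2 ^ (l * k) *
        ((n.factorial : ℝ) / (k.factorial : ℝ) *
          (C ^ (n - k) * ((n - k).factorial : ℝ) ^ (1 / β - 1)) * ‖φ n‖)
        = (2:ℝ) ^ (l * k) * C ^ (n - k) *
          ((k.factorial : ℝ) ^ (1 / β) * ((n.factorial : ℝ) / (k.factorial : ℝ)) *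
            ((n - k).factorial : ℝ) ^ (1 / β - 1)) * ‖φ n‖ := by ring
    rw [e1]
    have hCn : (0:ℝ) ≤ C ^ n := by positivity
    calc (2:ℝ) ^ (l * k) * C ^ (n - k) *
          ((k.factorial : ℝ) ^ (1 / β) * ((n.factorial : ℝ) / (k.factorial : ℝ)) *
            ((n - k).factorial : ℝ) ^ (1 / β - 1)) * ‖φ n‖
        ≤ (2:ℝ) ^ (l * n) * C ^ n *
          ((n.factorial : ℝ) ^ (1 / β) * 2 ^ n) * ‖φ n‖ := by
          apply mul_le_mul_of_nonneg_right _ hφ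
          have hmid : (0:ℝ) ≤ (k.factorial : ℝ) ^ (1 / β) *
              ((n.factorial : ℝ) / (k.factorial : ℝ)) *
              ((n - k).factorial : ℝ) ^ (1 / β - 1) := by positivity
          apply mul_le_mul _ key hmid (by positivity)
          exact mul_le_mul h2l h2C (by positivity) (by positivity)
      _ = (n.factorial : ℝ) ^ (1 / β) * 2 ^ (l * n) * C ^ n * 2 ^ n * ‖φ n‖ := by
          ring
  -- put it together
  calc ∑ k ∈ Finset.range N, (k.factorial : ℝ) ^ (1 / β) * 2 ^ (l * k) * ‖ψ k‖
      ≤ ∑ k ∈ Finset.range N, ∑ n ∈ Finset.range N, (if k ≤ n then w k n else 0) :=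
        Finset.sum_le_sum (fun k _ => step1 k)
    _ = ∑ n ∈ Finset.range N, ∑ k ∈ Finset.range N, (if k ≤ n then w k n else 0) :=
        Finset.sum_comm
    _ ≤ ∑ n ∈ Finset.range N,
          (n.factorial : ℝ) ^ (1 / β) * 2 ^ (l' * n) * ‖φ n‖ := by
        apply Finset.sum_le_sum
        intro n hn
        have hnN : n < N := Finset.mem_range.1 hn
        have hsub : Finset.range (n + 1) ⊆ Finset.range N := by
          apply Finset.range_subset_range.2
          omega
        have hsum_eq : ∑ k ∈ Finset.range N, (if k ≤ n then w k n else 0)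
            = ∑ k ∈ Finset.range (n + 1), w k n := by
          rw [← Finset.sum_subset hsub (fun x _ hx => ?_)]
          · apply Finset.sum_congr rfl
            intro k hk
            rw [if_pos (Nat.lt_succ_iff.1 (Finset.mem_range.1 hk))]
          · rw [if_neg]
            intro h
            exact hx (Finset.mem_range.2 (Nat.lt_succ_of_le h))
        rw [hsum_eq]
        have hB : ∀ k ∈ Finset.range (n + 1), w k n ≤
            (n.factorial : ℝ) ^ (1 / β) * 2 ^ (l * n) * C ^ n * 2 ^ n * ‖φ n‖ := by
          intro k hk
          exact hwbound n k (Nat.lt_succ_iff.1 (Finset.mem_range.1 hk))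
        calc ∑ k ∈ Finset.range (n + 1), w k n
            ≤ (n + 1) * ((n.factorial : ℝ) ^ (1 / β) * 2 ^ (l * n) * C ^ n * 2 ^ n *
                ‖φ n‖) := by
              have := Finset.sum_le_card_nsmul (Finset.range (n + 1)) (fun k => w k n) _ hB
              simpa [Finset.card_range, nsmul_eq_mul] using this
          _ ≤ (n.factorial : ℝ) ^ (1 / β) * 2 ^ (l' * n) * ‖φ n‖ := by
              have hn1 : ((n:ℝ) + 1) ≤ 2 ^ n := by
                exact_mod_cast (Nat.lt_two_pow_self (n := n))
              have hCn : C ^ n ≤ (2:ℝ) ^ (m * n) := by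
                calc C ^ n ≤ ((2:ℝ) ^ m) ^ n :=
                      pow_le_pow_left₀ (le_trans zero_le_one hC) hm' n
                  _ = 2 ^ (m * n) := by rw [← pow_mul]
              have hφ : (0:ℝ) ≤ ‖φ n‖ := norm_nonneg _
              have hfn : (0:ℝ) ≤ (n.factorial : ℝ) ^ (1 / β) := by positivity
              have hprod : ((n:ℝ) + 1) * (2 ^ (l * n) * C ^ n * 2 ^ n)
                  ≤ 2 ^ (l' * n) := by
                have h1 : ((n:ℝ) + 1) * (2 ^ (l * n) * C ^ n * 2 ^ n)
                    ≤ (2:ℝ) ^ n * (2 ^ (l * n) * 2 ^ (m * n) * 2 ^ n) := by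
                  apply mul_le_mul hn1 _ (by positivity) (by positivity)
                  apply mul_le_mul_of_nonneg_right _ (by positivity)
                  exact mul_le_mul_of_nonneg_left hCn (by positivity)
                refine le_trans h1 (le_of_eq ?_)
                rw [hl']
                rw [← pow_add, ← pow_add, ← pow_add]
                ring_nf
              calc (n + 1 : ℝ) * ((n.factorial : ℝ) ^ (1 / β) * 2 ^ (l * n) * C ^ n * 2 ^ n *
                    ‖φ n‖)
                  = (n.factorial : ℝ) ^ (1 / β) *
                      (((n:ℝ) + 1) * (2 ^ (l * n) * C ^ n * 2 ^ n)) * ‖φ n‖ := by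
                    ring
                _ ≤ (n.factorial : ℝ) ^ (1 / β) * 2 ^ (l' * n) * ‖φ n‖ := by
                    apply mul_le_mul_of_nonneg_right _ hφ
                    exact mul_le_mul_of_nonneg_left hprod hfn
end

section
/- Let α > 1 and let (s_n)_{n≥0} be polynomials on ℂ with each s_n of degree n. Suppose there exist l ∈ ℕ and C > 0 such that for every finitely supported sequence (φ_n)_{n≥0} of complex numbers, writing Σ_n φ_n·s_n(z) = Σ_m ψ_m·z^m (a polynomial), one has Σ_m (m!)^{1/α}·|ψ_m| ≤ C · Σ_n (n!)^{1/α}·2^{l·n}·|φ_n|. Then for every (u,z) ∈ ℂ², the series G(u,z) := Σ_{n=0}^∞ (u^n/n!)·s_n(z) converges absolutely, and the function G : ℂ × ℂ → ℂ is analytic at every point of ℂ² (i.e., G is an entire function of the two variables (u,z)). -/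
open Filter Finset Topology

private lemma aux_ratio_summable {ε : ℝ} (hε : 0 < ε) {K : ℝ} (hK : 1 ≤ K) :
    Summable (fun n : ℕ => ((n : ℝ) + 1) * K ^ n * (n.factorial : ℝ) ^ (-ε)) := by
  set t : ℕ → ℝ := fun n => ((n : ℝ) + 1) * K ^ n * (n.factorial : ℝ) ^ (-ε) with ht
  have hK0 : (0:ℝ) < K := lt_of_lt_of_le one_pos hK
  have hpos : ∀ n, 0 < t n := by
    intro n
    have h2 : (0:ℝ) < K ^ n := pow_pos hK0 n
    have h3 : (0:ℝ) < (n.factorial : ℝ) ^ (-ε) :=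
      Real.rpow_pos_of_pos (by exact_mod_cast n.factorial_pos) _
    have h1 : (0:ℝ) < (n:ℝ) + 1 := by positivity
    simp only [ht]
    positivity
  set r : ℕ → ℝ := fun n => (((n : ℝ) + 2) / ((n : ℝ) + 1)) * (K * ((n : ℝ) + 1) ^ (-ε)) with hr
  have key : ∀ n : ℕ, t (n + 1) = r n * t n := by
    intro n
    have hfac : ((n + 1).factorial : ℝ) ^ (-ε)
        = ((n : ℝ) + 1) ^ (-ε) * (n.factorial : ℝ) ^ (-ε) := by
      rw [Nat.factorial_succ]
      push_cast
      rw [Real.mul_rpow (by positivity) (by positivity)]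
    have hne : ((n:ℝ) + 1) ≠ 0 := by positivity
    simp only [ht, hr]
    push_cast
    rw [hfac]
    field_simp
    ring
  have hrt : Tendsto r atTop (𝓝 0) := by
    have h1 : Tendsto (fun n : ℕ => ((n : ℝ) + 2) / ((n : ℝ) + 1)) atTop (𝓝 1) := by
      have h0 : Tendsto (fun n : ℕ => 1 + 1 / ((n : ℝ) + 1)) atTop (𝓝 (1 + 0)) :=
        tendsto_const_nhds.add tendsto_one_div_add_atTop_nhds_zero_nat
      rw [add_zero] at h0
      refine h0.congr fun n => ?_
      have hne : ((n:ℝ) + 1) ≠ 0 := by positivity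
      field_simp
      ring
    have h2 : Tendsto (fun n : ℕ => ((n : ℝ) + 1) ^ (-ε)) atTop (𝓝 0) := by
      apply (tendsto_rpow_neg_atTop hε).comp
      exact tendsto_atTop_add_const_right atTop 1 tendsto_natCast_atTop_atTop
    have := h1.mul ((tendsto_const_nhds (x := K)).mul h2)
    simpa using this
  apply summable_of_ratio_test_tendsto_lt_one (l := 0) one_pos
    (Eventually.of_forall fun n => (hpos n).ne')
  refine hrt.congr fun n => ?_
  have h := hpos n
  have h' := hpos (n + 1)
  rw [key n] at h'
  rw [Real.norm_eq_abs, Real.norm_eq_abs, key n, abs_of_pos h', abs_of_pos h,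
    mul_div_assoc, div_self h.ne', mul_one]

private lemma aux_prod {k n : ℕ} (h : n ≤ k) (x y : ℂ) :
    (∏ i : Fin k, (if (i : ℕ) < n then x else y)) = x ^ n * y ^ (k - n) := by
  obtain ⟨d, rfl⟩ : ∃ d, k = n + d := ⟨k - n, (Nat.add_sub_cancel' h).symm⟩
  rw [Fin.prod_univ_eq_prod_range (fun i => if i < n then x else y) (n + d),
    Finset.prod_range_add]
  have h1 : ∏ i ∈ Finset.range n, (if i < n then x else y) = x ^ n := by
    rw [Finset.prod_congr rfl fun i hi => if_pos (Finset.mem_range.1 hi),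
      Finset.prod_const, Finset.card_range]
  have h2 : ∏ i ∈ Finset.range d, (if n + i < n then x else y) = y ^ d := by
    rw [Finset.prod_congr rfl fun i _ => if_neg (by omega), Finset.prod_const,
      Finset.card_range]
  rw [h1, h2, Nat.add_sub_cancel_left]


private lemma fiber_hasSum (s : ℕ → Polynomial ℂ) (hdeg : ∀ n, (s n).natDegree = n)
    (u z : ℂ) (n : ℕ) :
    HasSum (fun m : ℕ => u ^ n / (n.factorial : ℂ) * ((s n).coeff m * z ^ m))
      (u ^ n / (n.factorial : ℂ) * (s n).eval z) := by
  have h0 : ∀ m ∉ Finset.range (n + 1), (s n).coeff m * z ^ m = 0 := by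
    intro m hm
    rw [Polynomial.coeff_eq_zero_of_natDegree_lt, zero_mul]
    rw [hdeg n]
    have := Finset.mem_range.not.1 hm
    omega
  have h1 : HasSum (fun m => (s n).coeff m * z ^ m) ((s n).eval z) := by
    have h2 : HasSum (fun m => (s n).coeff m * z ^ m)
        (∑ m ∈ Finset.range (n + 1), (s n).coeff m * z ^ m) := hasSum_sum_of_ne_finset_zero h0
    rwa [show (∑ m ∈ Finset.range (n + 1), (s n).coeff m * z ^ m) = (s n).eval z by
      rw [Polynomial.eval_eq_sum_range, hdeg n]] at h2
  exact h1.mul_left _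

private lemma aux_summable_norm {α C : ℝ} (hα : 1 < α) (hC : 0 ≤ C) (l : ℕ)
    (s : ℕ → Polynomial ℂ) (hdeg : ∀ n, (s n).natDegree = n)
    (hcoeff : ∀ n m, ‖(s n).coeff m‖ ≤ C * (n.factorial : ℝ) ^ (1 / α) * 2 ^ (l * n))
    (u z : ℂ) :
    Summable (fun p : ℕ × ℕ =>
      ‖u ^ p.1 / (p.1.factorial : ℂ) * ((s p.1).coeff p.2 * z ^ p.2)‖) := by
  set ε : ℝ := 1 - 1 / α with hε'
  have hε : 0 < ε := by
    have h1 : 1 / α < 1 := (div_lt_one (by linarith)).2 hα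
    simp only [hε']; linarith
  set R : ℝ := max 1 (max (‖u‖) (‖z‖)) with hR'
  have hR1 : 1 ≤ R := le_max_left _ _
  have hRu : ‖u‖ ≤ R := le_trans (le_max_left _ _) (le_max_right _ _)
  have hRz : ‖z‖ ≤ R := le_trans (le_max_right _ _) (le_max_right _ _)
  have hR0 : 0 ≤ R := le_trans zero_le_one hR1
  set K : ℝ := 2 ^ l * R ^ 2 with hK'
  have h2l : (1 : ℝ) ≤ 2 ^ l := one_le_pow₀ (by norm_num)
  have hR2 : (1 : ℝ) ≤ R ^ 2 := one_le_pow₀ hR1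
  have hK : 1 ≤ K := by nlinarith
  set D : ℕ → ℝ := fun n => C * (n.factorial : ℝ) ^ (-ε) * K ^ n with hD'
  have hD0 : ∀ n, 0 ≤ D n := by
    intro n
    have := Real.rpow_nonneg (le_of_lt (by exact_mod_cast n.factorial_pos :
      (0:ℝ) < (n.factorial : ℝ))) (-ε)
    have hK0 : (0:ℝ) ≤ K ^ n := pow_nonneg (by linarith) n
    simp only [hD']
    positivity
  set g : ℕ × ℕ → ℝ := fun p => if p.2 ≤ p.1 then D p.1 else 0 with hg'
  have hgnn : ∀ p, 0 ≤ g p := by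
    rintro ⟨n, m⟩
    by_cases h : m ≤ n <;> simp [hg', h, hD0 n]
  have hfiber : ∀ n : ℕ, ∀ m ∉ Finset.range (n + 1), g (n, m) = 0 := by
    intro n m hm
    have := Finset.mem_range.not.1 hm
    simp only [hg']
    rw [if_neg (by omega)]
  have hgsum : Summable g := by
    rw [summable_prod_of_nonneg hgnn]
    refine ⟨fun n => summable_of_ne_finset_zero (hfiber n), ?_⟩
    have hsum2 : Summable (fun n : ℕ => ((n : ℝ) + 1) * K ^ n * (n.factorial : ℝ) ^ (-ε)) :=
      aux_ratio_summable hε hK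
    refine (hsum2.mul_left C).congr fun n => ?_
    have hsumfin : ∑ m ∈ Finset.range (n + 1), g (n, m) = ((n : ℝ) + 1) * D n := by
      have hcongr : ∀ m ∈ Finset.range (n + 1), g (n, m) = D n := by
        intro m hm
        have := Finset.mem_range.1 hm
        exact if_pos (by omega)
      rw [Finset.sum_congr rfl hcongr, Finset.sum_const, Finset.card_range, nsmul_eq_mul]
      push_cast
      ring
    rw [tsum_eq_sum (hfiber n), hsumfin]
    simp only [hD']
    ring
  refine Summable.of_nonneg_of_le (fun p => norm_nonneg _) ?_ hgsum
  rintro ⟨n, m⟩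
  by_cases h : m ≤ n
  · have hA : (0:ℝ) < (n.factorial : ℝ) := by exact_mod_cast n.factorial_pos
    have hnorm : ‖u ^ n / (n.factorial : ℂ) * ((s n).coeff m * z ^ m)‖
        = ‖u‖ ^ n / (n.factorial : ℝ) *
          (‖(s n).coeff m‖ * ‖z‖ ^ m) := by
      simp [map_mul, map_div₀, map_pow, Complex.norm_natCast]
    have hcnn := norm_nonneg ((s n).coeff m)
    rw [hnorm]
    have hstep1 : ‖u‖ ^ n / (n.factorial : ℝ) *
          (‖(s n).coeff m‖ * ‖z‖ ^ m)
        ≤ R ^ n / (n.factorial : ℝ) *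
          ((C * (n.factorial : ℝ) ^ (1 / α) * 2 ^ (l * n)) * R ^ m) := by
      gcongr
      exact hcoeff n m
    have hstep2 : R ^ n / (n.factorial : ℝ) *
          ((C * (n.factorial : ℝ) ^ (1 / α) * 2 ^ (l * n)) * R ^ m)
        ≤ R ^ n / (n.factorial : ℝ) *
          ((C * (n.factorial : ℝ) ^ (1 / α) * 2 ^ (l * n)) * R ^ n) := by
      gcongr
    have heq : R ^ n / (n.factorial : ℝ) *
          ((C * (n.factorial : ℝ) ^ (1 / α) * 2 ^ (l * n)) * R ^ n) = D n := by
      have hfac : (n.factorial : ℝ) ^ (-ε) = (n.factorial : ℝ) ^ (1 / α) / (n.factorial : ℝ) := by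
        rw [show -ε = 1 / α - 1 by simp only [hε']; ring, Real.rpow_sub hA, Real.rpow_one]
      simp only [hD', hfac, hK']
      field_simp
      ring
    have : g (n, m) = D n := if_pos h
    rw [this]
    linarith [hstep1, hstep2, le_of_eq heq]
  · have : (s n).coeff m = 0 := by
      apply Polynomial.coeff_eq_zero_of_natDegree_lt
      rw [hdeg n]; omega
    simp [this, hg', h, if_neg]

/-- Proposition 3.6(i): if the Sheffer operator of `(s_n)` is bounded between
the weighted ℓ¹-coefficient norms of exponent `α > 1`, then the generating
function `G(u,z) = Σ (u^n/n!)·s_n(z)` converges absolutely everywhere and is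
an entire function of the two variables. -/
theorem generating_function_entire_of_bounded_sheffer
    (α : ℝ) (hα : 1 < α)
    (s : ℕ → Polynomial ℂ) (hdeg : ∀ n, (s n).natDegree = n)
    (hbdd : ∃ (l : ℕ) (C : ℝ), 0 < C ∧ ∀ φ : ℕ →₀ ℂ,
      ∑' m : ℕ, (m.factorial : ℝ) ^ (1 / α) *
          ‖(∑ n ∈ φ.support, φ n • s n).coeff m‖ ≤
        C * ∑' n : ℕ, (n.factorial : ℝ) ^ (1 / α) * 2 ^ (l * n) * ‖φ n‖) :
    (∀ u z : ℂ, Summable fun n : ℕ =>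
      ‖u ^ n / (n.factorial : ℂ) * (s n).eval z‖) ∧
    ∀ p : ℂ × ℂ, AnalyticAt ℂ
      (fun q : ℂ × ℂ => ∑' n : ℕ, q.1 ^ n / (n.factorial : ℂ) * (s n).eval q.2) p := by
  obtain ⟨l, C, hC, hb⟩ := hbdd
  have hα0 : (0 : ℝ) < α := lt_trans one_pos hα
  -- Step 1: coefficient bound
  have hcoeff : ∀ n m, ‖(s n).coeff m‖
      ≤ C * (n.factorial : ℝ) ^ (1 / α) * 2 ^ (l * n) := by
    intro n m
    have hsingle := hb (Finsupp.single n 1)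
    rw [Finsupp.support_single_ne_zero n one_ne_zero, Finset.sum_singleton,
      Finsupp.single_eq_same, one_smul] at hsingle
    have hR : ∑' k : ℕ, (k.factorial : ℝ) ^ (1 / α) * 2 ^ (l * k) *
        ‖(Finsupp.single n (1 : ℂ)) k‖
        = (n.factorial : ℝ) ^ (1 / α) * 2 ^ (l * n) := by
      rw [tsum_eq_single n ?_]
      · simp [Finsupp.single_eq_same]
      · intro k hk
        simp [Finsupp.single_apply, Ne.symm hk]
    rw [hR] at hsingle
    have hfin : ∀ m' ∉ Finset.range (n + 1),
        (m'.factorial : ℝ) ^ (1 / α) * ‖(s n).coeff m'‖ = 0 := by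
      intro m' hm'
      have hz : (s n).coeff m' = 0 := Polynomial.coeff_eq_zero_of_natDegree_lt
        (by rw [hdeg n]; have := Finset.mem_range.not.1 hm'; omega)
      simp [hz]
    have hsummable : Summable
        (fun m' : ℕ => (m'.factorial : ℝ) ^ (1 / α) * ‖(s n).coeff m'‖) :=
      summable_of_ne_finset_zero hfin
    have hterm := Summable.le_tsum hsummable m (fun m' _ => by positivity)
    have h2 : (1 : ℝ) ≤ (m.factorial : ℝ) ^ (1 / α) :=
      Real.one_le_rpow (by exact_mod_cast m.factorial_pos) (by positivity)
    have h1 : ‖(s n).coeff m‖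
        ≤ (m.factorial : ℝ) ^ (1 / α) * ‖(s n).coeff m‖ := by
      nlinarith [norm_nonneg ((s n).coeff m)]
    rw [mul_assoc]
    exact h1.trans (hterm.trans hsingle)
  have hC0 : (0 : ℝ) ≤ C := hC.le
  set F : ℂ → ℂ → ℕ × ℕ → ℂ :=
    fun u z p => u ^ p.1 / (p.1.factorial : ℂ) * ((s p.1).coeff p.2 * z ^ p.2) with hF'
  have hFsum : ∀ u z : ℂ, Summable fun p => ‖F u z p‖ :=
    fun u z => aux_summable_norm hα hC0 l s hdeg hcoeff u z
  have hFhas : ∀ u z : ℂ, HasSum (F u z) (∑' p, F u z p) :=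
    fun u z => ((hFsum u z).of_norm).hasSum
  have hGhas : ∀ u z : ℂ,
      HasSum (fun n => u ^ n / (n.factorial : ℂ) * (s n).eval z) (∑' p, F u z p) :=
    fun u z => (hFhas u z).prod_fiberwise (fun n => fiber_hasSum s hdeg u z n)
  constructor
  · -- absolute convergence
    intro u z
    have hsplit := (summable_prod_of_nonneg (fun p => norm_nonneg (F u z p))).1 (hFsum u z)
    refine Summable.of_nonneg_of_le (fun n => norm_nonneg _) ?_ hsplit.2
    intro n
    have heq := (fiber_hasSum s hdeg u z n).tsum_eq
    calc ‖u ^ n / (n.factorial : ℂ) * (s n).eval z‖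
        = ‖∑' m, F u z (n, m)‖ := by rw [heq]
      _ ≤ ∑' m, ‖F u z (n, m)‖ := norm_tsum_le_tsum_norm (hsplit.1 n)
  · -- analyticity
    set P : FormalMultilinearSeries ℂ (ℂ × ℂ) ℂ := fun k =>
      ∑ n ∈ Finset.range (k + 1),
        ((s n).coeff (k - n) / (n.factorial : ℂ)) •
          ((ContinuousMultilinearMap.mkPiAlgebraFin ℂ k ℂ).compContinuousLinearMap
            (fun i => if (i : ℕ) < n then ContinuousLinearMap.fst ℂ ℂ ℂ
              else ContinuousLinearMap.snd ℂ ℂ ℂ)) with hP'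
    have hPapply : ∀ (k : ℕ) (w : ℂ × ℂ), (P k fun _ => w)
        = ∑ n ∈ Finset.range (k + 1),
            (s n).coeff (k - n) / (n.factorial : ℂ) * (w.1 ^ n * w.2 ^ (k - n)) := by
      intro k w
      simp only [hP', ContinuousMultilinearMap.sum_apply, ContinuousMultilinearMap.smul_apply,
        ContinuousMultilinearMap.compContinuousLinearMap_apply,
        ContinuousMultilinearMap.mkPiAlgebraFin_apply, smul_eq_mul]
      refine Finset.sum_congr rfl fun n hn => ?_
      congr 1
      have hite : ∀ i : Fin k,
          ((if (i : ℕ) < n then ContinuousLinearMap.fst ℂ ℂ ℂ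
            else ContinuousLinearMap.snd ℂ ℂ ℂ) w) = (if (i : ℕ) < n then w.1 else w.2) :=
        fun i => by split <;> rfl
      rw [List.prod_ofFn, Finset.prod_congr rfl (fun i _ => hite i)]
      exact aux_prod (Nat.lt_succ_iff.1 (Finset.mem_range.1 hn)) w.1 w.2
    have hPnorm : ∀ k, ‖P k‖
        ≤ ∑ n ∈ Finset.range (k + 1),
            ‖(s n).coeff (k - n)‖ / (n.factorial : ℝ) := by
      intro k
      refine (norm_sum_le _ _).trans (Finset.sum_le_sum fun n hn => ?_)
      have h1 : ‖(ContinuousMultilinearMap.mkPiAlgebraFin ℂ k ℂ).compContinuousLinearMap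
          (fun i : Fin k => if (i : ℕ) < n then ContinuousLinearMap.fst ℂ ℂ ℂ
            else ContinuousLinearMap.snd ℂ ℂ ℂ)‖ ≤ 1 := by
        refine (ContinuousMultilinearMap.norm_compContinuousLinearMap_le _ _).trans ?_
        rw [ContinuousMultilinearMap.norm_mkPiAlgebraFin, one_mul]
        refine Finset.prod_le_one (fun i _ => norm_nonneg _) (fun i _ => ?_)
        split
        · exact ContinuousLinearMap.norm_fst_le ℂ ℂ ℂ
        · exact ContinuousLinearMap.norm_snd_le ℂ ℂ ℂ
      have h2 : ‖(s n).coeff (k - n) / (n.factorial : ℂ)‖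
          = ‖(s n).coeff (k - n)‖ / (n.factorial : ℝ) := by
        simp [map_div₀, Complex.norm_natCast]
      refine le_trans (norm_smul_le ((s n).coeff (k - n) / (n.factorial : ℂ))
        ((ContinuousMultilinearMap.mkPiAlgebraFin ℂ k ℂ).compContinuousLinearMap
          (fun i : Fin k => if (i : ℕ) < n then ContinuousLinearMap.fst ℂ ℂ ℂ
            else ContinuousLinearMap.snd ℂ ℂ ℂ))) ?_
      rw [h2]
      have h3 : (0 : ℝ) ≤ ‖(s n).coeff (k - n)‖ / (n.factorial : ℝ) := by
        positivity
      exact mul_le_of_le_one_right h3 h1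
    have hradius : P.radius = ⊤ := by
      apply FormalMultilinearSeries.radius_eq_top_of_summable_norm
      intro r
      have ht : (0 : ℝ) ≤ (r : ℝ) := r.coe_nonneg
      have hFr := hFsum ((r : ℝ) : ℂ) ((r : ℝ) : ℂ)
      have hgrp := hFr.hasSum.tsum_fiberwise (fun p : ℕ × ℕ => p.1 + p.2)
      refine Summable.of_nonneg_of_le (fun k => by positivity) ?_ hgrp.summable
      intro k
      have hset : ((fun p : ℕ × ℕ => p.1 + p.2) ⁻¹' {k})
          = ↑(Finset.HasAntidiagonal.antidiagonal k) := by
        ext p; simp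
      have hfib : ∑' (b : ((fun p : ℕ × ℕ => p.1 + p.2) ⁻¹' {k})),
          ‖F ((r : ℝ) : ℂ) ((r : ℝ) : ℂ) ↑b‖
          = ∑ q ∈ Finset.HasAntidiagonal.antidiagonal k, ‖F ((r : ℝ) : ℂ) ((r : ℝ) : ℂ) q‖ := by
        rw [hset]
        exact Finset.tsum_subtype' (Finset.HasAntidiagonal.antidiagonal k)
          (fun q => ‖F ((r : ℝ) : ℂ) ((r : ℝ) : ℂ) q‖)
      rw [hfib, Finset.Nat.sum_antidiagonal_eq_sum_range_succ_mk]
      have hterm : ∀ n ∈ Finset.range (k + 1),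
          ‖(s n).coeff (k - n)‖ / (n.factorial : ℝ) * (r : ℝ) ^ k
            = ‖F ((r : ℝ) : ℂ) ((r : ℝ) : ℂ) (n, k - n)‖ := by
        intro n hn
        have hnk : n ≤ k := Nat.lt_succ_iff.1 (Finset.mem_range.1 hn)
        have hF : ‖F ((r : ℝ) : ℂ) ((r : ℝ) : ℂ) (n, k - n)‖
            = (r : ℝ) ^ n / (n.factorial : ℝ) *
              (‖(s n).coeff (k - n)‖ * (r : ℝ) ^ (k - n)) := by
          simp [hF', map_mul, map_div₀, map_pow,
            Complex.norm_natCast, Complex.norm_real, Real.norm_eq_abs, abs_of_nonneg ht]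
        have hpow : (r : ℝ) ^ n * (r : ℝ) ^ (k - n) = (r : ℝ) ^ k := by
          rw [← pow_add, Nat.add_sub_cancel' hnk]
        rw [hF, ← hpow]
        ring
      calc ‖P k‖ * (r : ℝ) ^ k
          ≤ (∑ n ∈ Finset.range (k + 1),
              ‖(s n).coeff (k - n)‖ / (n.factorial : ℝ)) * (r : ℝ) ^ k := by
            exact mul_le_mul_of_nonneg_right (hPnorm k) (by positivity)
        _ = ∑ n ∈ Finset.range (k + 1),
              ‖(s n).coeff (k - n)‖ / (n.factorial : ℝ) * (r : ℝ) ^ k :=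
            Finset.sum_mul _ _ _
        _ = ∑ n ∈ Finset.range (k + 1), ‖F ((r : ℝ) : ℂ) ((r : ℝ) : ℂ) (n, k - n)‖ :=
            Finset.sum_congr rfl hterm
    have hball : HasFPowerSeriesOnBall
        (fun q : ℂ × ℂ => ∑' n : ℕ, q.1 ^ n / (n.factorial : ℂ) * (s n).eval q.2) P 0 ⊤ := by
      refine ⟨by rw [hradius], by simp, ?_⟩
      intro w hw
      have hgrp := (hFhas w.1 w.2).tsum_fiberwise (fun p : ℕ × ℕ => p.1 + p.2)
      have hkey : (fun k : ℕ => ∑' p : ((fun p : ℕ × ℕ => p.1 + p.2) ⁻¹' {k}),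
          F w.1 w.2 ↑p) = fun k => P k fun _ => w := by
        funext k
        have hset : ((fun p : ℕ × ℕ => p.1 + p.2) ⁻¹' {k})
            = ↑(Finset.HasAntidiagonal.antidiagonal k) := by
          ext p; simp
        have hfib : ∑' (p : ((fun p : ℕ × ℕ => p.1 + p.2) ⁻¹' {k})), F w.1 w.2 ↑p
            = ∑ q ∈ Finset.HasAntidiagonal.antidiagonal k, F w.1 w.2 q := by
          rw [hset]
          exact Finset.tsum_subtype' (Finset.HasAntidiagonal.antidiagonal k) (fun q => F w.1 w.2 q)
        rw [hfib, Finset.Nat.sum_antidiagonal_eq_sum_range_succ_mk, hPapply k w]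
        refine Finset.sum_congr rfl fun n _ => ?_
        simp only [hF']
        ring
      rw [hkey] at hgrp
      have hval : (∑' n : ℕ, (0 + w).1 ^ n / (n.factorial : ℂ) * (s n).eval (0 + w).2)
          = ∑' p, F w.1 w.2 p := by
        simp only [zero_add]
        exact (hGhas w.1 w.2).tsum_eq
      rw [hval]
      exact hgrp
    intro p
    exact hball.analyticAt_of_mem (by rw [EMetric.mem_ball]; exact edist_lt_top p 0)
end

section
/- Let α > 1 and let (a_k)_{k≥1} be complex numbers with a_1 = 1. Define the polynomials of binomial type p_0(z) := 1 and, for n ≥ 1, p_n(z) := n! · Σ_{m=1}^n (z^m/m!) · Σ_{(k_1,…,k_m) ∈ (ℕ_{≥1})^m, k_1+⋯+k_m=n} a_{k_1}·a_{k_2}⋯a_{k_m}. Suppose there exist l ∈ ℕ and C > 0 such that for every finitely supported sequence (φ_n)_{n≥0} of complex numbers, writing Σ_n φ_n·p_n(z) = Σ_m ψ_m·z^m, one has Σ_m (m!)^{1/α}·|ψ_m| ≤ C · Σ_n (n!)^{1/α}·2^{l·n}·|φ_n|. Then a_k = 0 for all k ≥ 2; equivalently, p_n(z) = z^n for all n.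 -/
open scoped BigOperators

namespace UmbralAux

/-- coefficient of `u^n` in `(∑ b t u^t)^m`, as a sum over compositions -/
noncomputable def Sn (b : ℕ → ℂ) (n m : ℕ) : ℂ :=
  ∑' g : Fin m → ℕ, if (∑ i, g i) = n then ∏ i, b (g i) else 0

lemma Sn_term_zero (b : ℕ → ℂ) (n m : ℕ) (g : Fin m → ℕ)
    (hg : g ∉ Fintype.piFinset fun _ : Fin m => Finset.range (n+1)) :
    (if (∑ i, g i) = n then ∏ i, b (g i) else 0) = 0 := by
  rw [Fintype.mem_piFinset] at hg
  push_neg at hg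
  obtain ⟨i, hi⟩ := hg
  rw [Finset.mem_range, not_lt] at hi
  have h2 : g i ≤ ∑ j, g j :=
    Finset.single_le_sum (fun _ _ => Nat.zero_le _) (Finset.mem_univ i)
  rw [if_neg (by omega)]

lemma Sn_summable (b : ℕ → ℂ) (n m : ℕ) :
    Summable (fun g : Fin m → ℕ => if (∑ i, g i) = n then ∏ i, b (g i) else 0) :=
  summable_of_ne_finset_zero (Sn_term_zero b n m)

lemma Sn_zero (b : ℕ → ℂ) (n : ℕ) : Sn b n 0 = if 0 = n then 1 else 0 := by
  rw [Sn, tsum_eq_single (fun i => i.elim0)]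
  · simp
  · intro g hg
    exact absurd (funext fun i => i.elim0) hg

lemma Sn_rec (b : ℕ → ℂ) (n m : ℕ) :
    Sn b n (m+1) = ∑ kl ∈ Finset.HasAntidiagonal.antidiagonal n, b kl.1 * Sn b kl.2 m := by
  classical
  have h1 : Sn b n (m+1) = ∑' p : ℕ × (Fin m → ℕ),
      (if p.1 + ∑ i, p.2 i = n then b p.1 * ∏ i, b (p.2 i) else 0) := by
    rw [Sn, ← (Fin.consEquiv fun _ : Fin (m+1) => ℕ).tsum_eq]
    apply tsum_congr
    intro p
    have hs : ∑ i, (Fin.cons p.1 p.2 : Fin (m+1) → ℕ) i = p.1 + ∑ i, p.2 i :=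
      Fin.sum_cons p.1 p.2
    have hpr : ∏ i, b ((Fin.cons p.1 p.2 : Fin (m+1) → ℕ) i)
        = b p.1 * ∏ i, b (p.2 i) := by
      rw [show (fun i => b ((Fin.cons p.1 p.2 : Fin (m+1) → ℕ) i))
            = (Fin.cons (b p.1) (fun i => b (p.2 i)) : Fin (m+1) → ℂ) from
          funext (Fin.cases rfl (fun i => rfl))]
      exact Fin.prod_cons _ _
    simp only [Fin.consEquiv_apply, hs, hpr]
  have hsum : ∀ k : ℕ, Summable (fun h : Fin m → ℕ =>
      if k + ∑ i, h i = n then b k * ∏ i, b (h i) else 0) := by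
    intro k
    apply summable_of_ne_finset_zero
      (s := Fintype.piFinset fun _ : Fin m => Finset.range (n+1))
    intro g hg
    rw [Fintype.mem_piFinset] at hg
    push_neg at hg
    obtain ⟨i, hi⟩ := hg
    rw [Finset.mem_range, not_lt] at hi
    have h2 : g i ≤ ∑ j, g j :=
      Finset.single_le_sum (fun _ _ => Nat.zero_le _) (Finset.mem_univ i)
    rw [if_neg (by omega)]
  have hprod : Summable (fun p : ℕ × (Fin m → ℕ) =>
      if p.1 + ∑ i, p.2 i = n then b p.1 * ∏ i, b (p.2 i) else 0) := by
    apply summable_of_ne_finset_zero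
      (s := Finset.range (n+1) ×ˢ Fintype.piFinset fun _ : Fin m => Finset.range (n+1))
    intro p hp
    rw [Finset.mem_product] at hp
    push_neg at hp
    by_cases h1 : p.1 ∈ Finset.range (n+1)
    · have h2 := hp h1
      rw [Fintype.mem_piFinset] at h2
      push_neg at h2
      obtain ⟨i, hi⟩ := h2
      rw [Finset.mem_range, not_lt] at hi
      have h3 : p.2 i ≤ ∑ j, p.2 j :=
        Finset.single_le_sum (fun _ _ => Nat.zero_le _) (Finset.mem_univ i)
      rw [if_neg (by omega)]
    · rw [Finset.mem_range, not_lt] at h1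
      rw [if_neg (by omega)]
  rw [h1, Summable.tsum_prod' hprod hsum]
  have h2 : ∀ k : ℕ, (∑' h : Fin m → ℕ, if k + ∑ i, h i = n then b k * ∏ i, b (h i) else 0)
      = if k ≤ n then b k * Sn b (n - k) m else 0 := by
    intro k
    by_cases hk : k ≤ n
    · rw [if_pos hk, Sn, ← tsum_mul_left]
      apply tsum_congr
      intro h
      by_cases hc : ∑ i, h i = n - k
      · rw [if_pos (by omega), if_pos hc]
      · rw [if_neg (by omega), if_neg hc, mul_zero]
    · rw [if_neg hk]
      have : ∀ h : Fin m → ℕ, (if k + ∑ i, h i = n then b k * ∏ i, b (h i) else 0) = 0 := by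
        intro h; rw [if_neg (by omega)]
      simp only [this, tsum_zero]
  simp only [h2]
  rw [tsum_eq_sum (s := Finset.range (n+1)) ?_, Finset.Nat.sum_antidiagonal_eq_sum_range_succ_mk]
  · apply Finset.sum_congr rfl
    intro k hk
    rw [Finset.mem_range] at hk
    rw [if_pos (by omega)]
  · intro k hk
    rw [Finset.mem_range, not_lt] at hk
    rw [if_neg (by omega)]

lemma Sn_pow (b : ℕ → ℂ) {u : ℂ} (hb : Summable fun t : ℕ => ‖b t * u ^ t‖) (m : ℕ) :
    Summable (fun n : ℕ => ‖Sn b n m * u ^ n‖) ∧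
      (∑' t : ℕ, b t * u ^ t) ^ m = ∑' n : ℕ, Sn b n m * u ^ n := by
  induction m with
  | zero =>
    constructor
    · apply summable_of_ne_finset_zero (s := ({0} : Finset ℕ))
      intro n hn
      rw [Finset.mem_singleton] at hn
      rw [Sn_zero, if_neg (by omega), zero_mul, norm_zero]
    · rw [pow_zero, tsum_eq_single 0 ?_]
      · rw [Sn_zero, if_pos rfl, pow_zero, mul_one]
      · intro n hn
        rw [Sn_zero, if_neg (by omega), zero_mul]
  | succ m ih =>
    have key : ∀ n : ℕ, ∑ kl ∈ Finset.HasAntidiagonal.antidiagonal n,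
        (b kl.1 * u ^ kl.1) * (Sn b kl.2 m * u ^ kl.2) = Sn b n (m+1) * u ^ n := by
      intro n
      rw [Sn_rec, Finset.sum_mul]
      apply Finset.sum_congr rfl
      intro kl hkl
      rw [Finset.HasAntidiagonal.mem_antidiagonal] at hkl
      rw [← hkl, pow_add]
      ring
    constructor
    · have h := summable_norm_sum_mul_antidiagonal_of_summable_norm hb ih.1
      simpa only [key] using h
    · rw [pow_succ', ih.2, tsum_mul_tsum_eq_tsum_sum_antidiagonal_of_summable_norm hb ih.1]
      exact tsum_congr key

lemma Sn_eq_zero_of_lt {b : ℕ → ℂ} (hb0 : b 0 = 0) {n m : ℕ} (h : n < m) : Sn b n m = 0 := by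
  rw [Sn]
  have : ∀ g : Fin m → ℕ, (if (∑ i, g i) = n then ∏ i, b (g i) else 0) = 0 := by
    intro g
    by_cases hc : (∑ i, g i) = n
    · rw [if_pos hc]
      have : ∃ i, g i = 0 := by
        by_contra hno
        push_neg at hno
        have h1 : (m : ℕ) = ∑ _i : Fin m, 1 := by simp
        have h2 : ∑ i : Fin m, 1 ≤ ∑ i, g i :=
          Finset.sum_le_sum fun i _ => Nat.one_le_iff_ne_zero.2 (hno i)
        omega
      obtain ⟨i, hi⟩ := this
      exact Finset.prod_eq_zero (Finset.mem_univ i) (by rw [hi, hb0])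
    · rw [if_neg hc]
  simp only [this, tsum_zero]

/-- extension of a sequence on positive integers by 0 at 0 -/
noncomputable def ext (a : ℕ → ℂ) : ℕ → ℂ := fun t => if t = 0 then 0 else a t

lemma Sn_ext_eq (a : ℕ → ℂ) (n m : ℕ) :
    Sn (ext a) n m
      = ∑' k : Fin m → ℕ+, if (∑ i, ((k i : ℕ))) = n then ∏ i, a (k i) else 0 := by
  classical
  rw [Sn]
  have hinj : Function.Injective (fun (g : Fin m → ℕ+) (i : Fin m) => ((g i : ℕ))) := by
    intro g h hgh
    funext i
    exact PNat.coe_injective (congrFun hgh i)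
  rw [← hinj.tsum_eq ?_]
  · apply tsum_congr
    intro g
    have hpr : ∏ i, ext a ((g i : ℕ)) = ∏ i, a (g i) :=
      Finset.prod_congr rfl fun i _ => by
        simp only [ext]
        exact if_neg (g i).2.ne'
    simp only [hpr]
  · intro x hx
    rw [Function.mem_support] at hx
    by_contra hxr
    apply hx
    by_cases hall : ∀ i, x i ≠ 0
    · exact absurd ⟨fun i => ⟨x i, Nat.pos_of_ne_zero (hall i)⟩, rfl⟩ hxr
    · push_neg at hall
      obtain ⟨i, hi⟩ := hall
      by_cases hc : (∑ j, x j) = n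
      · rw [if_pos hc]
        exact Finset.prod_eq_zero (Finset.mem_univ i) (by simp [hi, ext])
      · rw [if_neg hc]

lemma rpow_add_le {x y β : ℝ} (hx : 0 ≤ x) (hy : 0 ≤ y) (h0 : 0 < β) (h1 : β ≤ 1) :
    (x + y) ^ β ≤ x ^ β + y ^ β := by
  have h := NNReal.rpow_add_rpow_le x.toNNReal y.toNNReal h0 h1
  simp only [NNReal.rpow_one, div_one, one_div] at h
  -- h : x.toNNReal + y.toNNReal ≤ (x.toNNReal ^ β + y.toNNReal ^ β) ^ β⁻¹
  have h2 := NNReal.rpow_le_rpow h h0.le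
  rw [← NNReal.rpow_mul, inv_mul_cancel₀ h0.ne', NNReal.rpow_one] at h2
  have h3 : ((x.toNNReal + y.toNNReal : NNReal) : ℝ) ^ β
      ≤ ((x.toNNReal ^ β + y.toNNReal ^ β : NNReal) : ℝ) := by
    rw [← NNReal.coe_rpow]
    exact_mod_cast h2
  rw [NNReal.coe_add, NNReal.coe_add, Real.coe_toNNReal _ hx, Real.coe_toNNReal _ hy,
    NNReal.coe_rpow, NNReal.coe_rpow, Real.coe_toNNReal _ hx, Real.coe_toNNReal _ hy] at h3
  exact h3

lemma growth {θ : ℝ} (h0 : 0 < θ) (h1 : θ < 1) {w : ℝ} (hw : 0 ≤ w) :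
    Summable (fun n : ℕ => w ^ n / (n.factorial : ℝ) ^ θ) ∧
      ∑' n : ℕ, w ^ n / (n.factorial : ℝ) ^ θ ≤ Real.exp ((2 * w) ^ (1/θ)) + 2 := by
  set W : ℝ := (2 * w) ^ (1/θ) with hW
  have h2w : (0:ℝ) ≤ 2 * w := by linarith
  have hWnn : 0 ≤ W := Real.rpow_nonneg h2w _
  have hWθ : W ^ θ = 2 * w := by
    rw [hW, ← Real.rpow_mul h2w, one_div, inv_mul_cancel₀ h0.ne', Real.rpow_one]
  set ρ : ℝ := (1/2 : ℝ) ^ (1/(1-θ)) with hρdef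
  have hρnn : (0:ℝ) ≤ ρ := Real.rpow_nonneg (by norm_num) _
  have hρθ : ρ ^ (1 - θ) = 1/2 := by
    rw [hρdef, ← Real.rpow_mul (by norm_num), one_div (1-θ),
      inv_mul_cancel₀ (by linarith : 1 - θ ≠ 0), Real.rpow_one]
  have hρle : ρ ≤ 1/2 := by
    calc ρ = (1/2 : ℝ) ^ (1/(1-θ)) := hρdef
    _ ≤ (1/2 : ℝ) ^ (1:ℝ) := by
        apply Real.rpow_le_rpow_of_exponent_ge (by norm_num) (by norm_num)
        rw [le_div_iff₀ (by linarith)]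
        linarith
    _ = 1/2 := Real.rpow_one _
  have hmain : ∀ n : ℕ, w ^ n / (n.factorial : ℝ) ^ θ ≤ W ^ n / n.factorial + (1/2 : ℝ) ^ n := by
    intro n
    have hfpos : (0:ℝ) < (n.factorial : ℝ) := by exact_mod_cast n.factorial_pos
    set x : ℝ := W ^ n / (n.factorial : ℝ) with hx
    set y : ℝ := ρ ^ n with hy
    have hxnn : 0 ≤ x := div_nonneg (pow_nonneg hWnn n) hfpos.le
    have hynn : 0 ≤ y := pow_nonneg hρnn n
    have hxθ : x ^ θ = (2*w) ^ n / (n.factorial : ℝ) ^ θ := by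
      rw [hx, Real.div_rpow (pow_nonneg hWnn n) hfpos.le]
      congr 1
      rw [← Real.rpow_natCast W n, ← Real.rpow_mul hWnn, mul_comm,
        Real.rpow_mul hWnn, hWθ, Real.rpow_natCast]
    have hyθ : y ^ (1-θ) = (1/2 : ℝ) ^ n := by
      rw [hy, ← Real.rpow_natCast ρ n, ← Real.rpow_mul hρnn, mul_comm,
        Real.rpow_mul hρnn, hρθ, Real.rpow_natCast]
    have heq : w ^ n / (n.factorial : ℝ) ^ θ = x ^ θ * y ^ (1-θ) := by
      rw [hxθ, hyθ, div_mul_eq_mul_div, ← mul_pow]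
      ring_nf
    rw [heq]
    calc x ^ θ * y ^ (1-θ) ≤ θ * x + (1-θ) * y :=
          Real.geom_mean_le_arith_mean2_weighted h0.le (by linarith) hxnn hynn (by ring)
    _ ≤ x + y := by nlinarith
    _ ≤ W ^ n / n.factorial + (1/2:ℝ) ^ n := by
        rw [hy]
        have : ρ ^ n ≤ (1/2:ℝ) ^ n := pow_le_pow_left₀ hρnn hρle n
        exact add_le_add le_rfl this
  have hsumm : Summable (fun n : ℕ => W ^ n / (n.factorial : ℝ) + (1/2:ℝ) ^ n) :=
    (Real.summable_pow_div_factorial W).add summable_geometric_two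
  have hnn : ∀ n : ℕ, 0 ≤ w ^ n / (n.factorial : ℝ) ^ θ := fun n =>
    div_nonneg (pow_nonneg hw n) (Real.rpow_nonneg (by positivity) _)
  refine ⟨Summable.of_nonneg_of_le hnn hmain hsumm, ?_⟩
  calc ∑' n : ℕ, w ^ n / (n.factorial : ℝ) ^ θ
      ≤ ∑' n : ℕ, (W ^ n / (n.factorial : ℝ) + (1/2:ℝ) ^ n) :=
        Summable.tsum_le_tsum hmain (Summable.of_nonneg_of_le hnn hmain hsumm) hsumm
    _ = (∑' n : ℕ, W ^ n / (n.factorial : ℝ)) + ∑' n : ℕ, (1/2:ℝ) ^ n :=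
        Summable.tsum_add (Real.summable_pow_div_factorial W) summable_geometric_two
    _ = Real.exp W + 2 := by
        rw [tsum_geometric_two]
        congr 1
        rw [Real.exp_eq_exp_ℝ, NormedSpace.exp_eq_tsum_div]

end UmbralAux
set_option maxHeartbeats 2000000 in
/-- Proposition 3.6(ii): for `α > 1`, the umbral operator of a sequence of
polynomials of binomial type cannot be bounded between the weighted
ℓ¹-coefficient norms of exponent `α` unless the sequence is `(z^n)`. -/
theorem umbral_not_bounded_above_order_one
    (α : ℝ) (hα : 1 < α) (a : ℕ → ℂ) (ha1 : a 1 = 1)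
    (p : ℕ → ℂ → ℂ) (hp0 : ∀ z : ℂ, p 0 z = 1)
    (hp : ∀ n : ℕ, 1 ≤ n → ∀ z : ℂ, p n z = (n.factorial : ℂ) *
      ∑ m ∈ Finset.Icc 1 n, z ^ m / (m.factorial : ℂ) *
        ∑' k : Fin m → ℕ+,
          (if (∑ i, (k i : ℕ)) = n then ∏ i, a (k i) else 0))
    (hbdd : ∃ (l : ℕ) (C : ℝ), 0 < C ∧ ∀ φ ψ : ℕ → ℂ,
      (∃ N : ℕ, ∀ n : ℕ, N ≤ n → φ n = 0) →
      (∃ N : ℕ, ∀ m : ℕ, N ≤ m → ψ m = 0) →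
      (∀ z : ℂ, ∑' n : ℕ, φ n * p n z = ∑' m : ℕ, ψ m * z ^ m) →
      ∑' m : ℕ, (m.factorial : ℝ) ^ (1 / α) * ‖ψ m‖ ≤
        C * ∑' n : ℕ, (n.factorial : ℝ) ^ (1 / α) * 2 ^ (l * n) * ‖φ n‖) :
    (∀ k : ℕ, 2 ≤ k → a k = 0) ∧ ∀ (n : ℕ) (z : ℂ), p n z = z ^ n := by
  classical
  obtain ⟨l, C, hC, H⟩ := hbdd
  have hαpos : (0:ℝ) < α := by linarith
  have hθ0 : 0 < 1/α := by positivity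
  have hθ1 : 1/α < 1 := by rw [div_lt_one hαpos]; linarith
  set β : ℝ := 1 - 1/α with hβdef
  have hβ0 : 0 < β := by rw [hβdef]; linarith
  have hβ1 : β < 1 := by rw [hβdef]; linarith
  -- Step A : coefficient bounds from the continuity assumption
  have hSa : ∀ n m : ℕ, 1 ≤ m → m ≤ n →
      ((m.factorial:ℝ)^(1/α)) * (((n.factorial:ℝ))/((m.factorial:ℝ))
        * ‖∑' k : Fin m → ℕ+, if (∑ i, ((k i : ℕ))) = n then ∏ i, a (k i) else 0‖)
        ≤ C * ((n.factorial:ℝ)^(1/α) * 2^(l*n)) := by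
    intro n m hm1 hmn
    have hn1 : 1 ≤ n := le_trans hm1 hmn
    set φ : ℕ → ℂ := fun j => if j = n then 1 else 0 with hφ
    set ψ : ℕ → ℂ := fun m' => if m' ∈ Finset.Icc 1 n
      then (n.factorial : ℂ)/(m'.factorial : ℂ)
        * ∑' k : Fin m' → ℕ+, if (∑ i, ((k i : ℕ))) = n then ∏ i, a (k i) else 0
      else 0 with hψ
    have hfin1 : ∃ N, ∀ j, N ≤ j → φ j = 0 :=
      ⟨n+1, fun j hj => by rw [hφ]; simp only; rw [if_neg (by omega)]⟩
    have hfin2 : ∃ N, ∀ j, N ≤ j → ψ j = 0 :=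
      ⟨n+1, fun j hj => by
        rw [hψ]; simp only; rw [if_neg (by rw [Finset.mem_Icc]; omega)]⟩
    have heq : ∀ z : ℂ, ∑' j, φ j * p j z = ∑' m', ψ m' * z^m' := by
      intro z
      have hl : ∑' j, φ j * p j z = p n z := by
        rw [tsum_eq_single n ?_]
        · rw [hφ]; simp
        · intro j hj; rw [hφ]; simp [hj]
      have hr : ∑' m', ψ m' * z^m' = ∑ m' ∈ Finset.Icc 1 n, ψ m' * z^m' := by
        apply tsum_eq_sum
        intro m' hm'
        rw [hψ]; simp only; rw [if_neg hm', zero_mul]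
      rw [hl, hr, hp n hn1 z, Finset.mul_sum]
      apply Finset.sum_congr rfl
      intro m' hm'
      rw [hψ]; simp only; rw [if_pos hm']
      have hne : (m'.factorial : ℂ) ≠ 0 := by
        exact_mod_cast m'.factorial_ne_zero
      field_simp
    have hineq := H φ ψ hfin1 hfin2 heq
    have hrhs : ∑' j : ℕ, (j.factorial:ℝ)^(1/α) * 2^(l*j) * ‖φ j‖
        = (n.factorial:ℝ)^(1/α) * 2^(l*n) := by
      rw [tsum_eq_single n ?_]
      · rw [hφ]; simp
      · intro j hj; rw [hφ]; simp [hj]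
    have hψsum : Summable (fun m' => (m'.factorial:ℝ)^(1/α) * ‖ψ m'‖) := by
      apply summable_of_ne_finset_zero (s := Finset.Icc 1 n)
      intro m' hm'
      rw [hψ]; simp only; rw [if_neg hm']
      simp
    have hterm := Summable.le_tsum hψsum m (fun j _ => by positivity)
    rw [hrhs] at hineq
    have h2 : (m.factorial:ℝ)^(1/α) * ‖ψ m‖
        ≤ C * ((n.factorial:ℝ)^(1/α) * 2^(l*n)) := le_trans hterm hineq
    rw [hψ] at h2; simp only at h2
    rw [if_pos (Finset.mem_Icc.2 ⟨hm1, hmn⟩), norm_mul, norm_div,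
      Complex.norm_natCast, Complex.norm_natCast] at h2
    exact h2
  -- algebraic reshaping
  have hS : ∀ n m : ℕ, 1 ≤ m → m ≤ n →
      ‖∑' k : Fin m → ℕ+, if (∑ i, ((k i : ℕ))) = n then ∏ i, a (k i) else 0‖
        ≤ C * 2^(l*n) * ((m.factorial:ℝ)^β / (n.factorial:ℝ)^β) := by
    intro n m hm1 hmn
    have h2 := hSa n m hm1 hmn
    set s := ‖∑' k : Fin m → ℕ+, if (∑ i, ((k i : ℕ))) = n then ∏ i, a (k i) else 0‖ with hs
    have hFm : (0:ℝ) < (m.factorial:ℝ) := by exact_mod_cast m.factorial_pos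
    have hFn : (0:ℝ) < (n.factorial:ℝ) := by exact_mod_cast n.factorial_pos
    have em : (m.factorial:ℝ)^(1/α) * (m.factorial:ℝ)^β = (m.factorial:ℝ) := by
      rw [← Real.rpow_add hFm, show 1/α + β = 1 by rw [hβdef]; ring, Real.rpow_one]
    have en : (n.factorial:ℝ)^(1/α) * (n.factorial:ℝ)^β = (n.factorial:ℝ) := by
      rw [← Real.rpow_add hFn, show 1/α + β = 1 by rw [hβdef]; ring, Real.rpow_one]
    have hs_eq : s = ((m.factorial:ℝ)^(1/α) * ((n.factorial:ℝ)/(m.factorial:ℝ) * s))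
        * ((m.factorial:ℝ)/((m.factorial:ℝ)^(1/α) * (n.factorial:ℝ))) := by
      field_simp
    have hstep : s ≤ (C * ((n.factorial:ℝ)^(1/α) * 2^(l*n)))
        * ((m.factorial:ℝ)/((m.factorial:ℝ)^(1/α) * (n.factorial:ℝ))) := by
      rw [hs_eq]
      exact mul_le_mul_of_nonneg_right h2 (by positivity)
    have hkey : (n.factorial:ℝ)^(1/α) * (m.factorial:ℝ)
        / ((m.factorial:ℝ)^(1/α) * (n.factorial:ℝ))
        = (m.factorial:ℝ)^β / (n.factorial:ℝ)^β := by
      rw [div_eq_div_iff (by positivity) (by positivity)]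
      calc (n.factorial:ℝ)^(1/α) * (m.factorial:ℝ) * (n.factorial:ℝ)^β
          = ((n.factorial:ℝ)^(1/α) * (n.factorial:ℝ)^β) * (m.factorial:ℝ) := by ring
        _ = (n.factorial:ℝ) * (m.factorial:ℝ) := by rw [en]
        _ = ((m.factorial:ℝ)^(1/α) * (m.factorial:ℝ)^β) * (n.factorial:ℝ) := by
            rw [em]; ring
        _ = (m.factorial:ℝ)^β * ((m.factorial:ℝ)^(1/α) * (n.factorial:ℝ)) := by ring
    calc s ≤ (C * ((n.factorial:ℝ)^(1/α) * 2^(l*n)))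
          * ((m.factorial:ℝ)/((m.factorial:ℝ)^(1/α) * (n.factorial:ℝ))) := hstep
      _ = C * 2^(l*n) * ((n.factorial:ℝ)^(1/α) * (m.factorial:ℝ)
            / ((m.factorial:ℝ)^(1/α) * (n.factorial:ℝ))) := by ring
      _ = C * 2^(l*n) * ((m.factorial:ℝ)^β / (n.factorial:ℝ)^β) := by rw [hkey]
  -- value of the m = 1 coefficient
  have hS1 : ∀ t : ℕ, 1 ≤ t →
      (∑' k : Fin 1 → ℕ+, if (∑ i, ((k i : ℕ))) = t then ∏ i, a (k i) else 0) = a t := by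
    intro t ht
    have htpos : 0 < t := ht
    have hside : ∀ g : Fin 1 → ℕ+, g ≠ (fun _ => ⟨t, htpos⟩) →
        (if (∑ i, ((g i : ℕ))) = t then ∏ i, a (g i) else 0) = 0 := by
      intro g hg
      rw [if_neg ?_]
      intro hc
      apply hg
      rw [Fin.sum_univ_one] at hc
      funext i
      have hi : i = 0 := Subsingleton.elim _ _
      rw [hi]
      exact PNat.coe_injective (by simpa using hc)
    calc (∑' k : Fin 1 → ℕ+, if (∑ i, ((k i : ℕ))) = t then ∏ i, a (k i) else 0)
        = _ := tsum_eq_single (fun _ => ⟨t, htpos⟩) hside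
      _ = a t := by
          rw [Fin.sum_univ_one, Fin.prod_univ_one]
          simp
  have habs_a : ∀ t : ℕ, 1 ≤ t →
      ‖a t‖ ≤ C * 2^(l*t) * (1 / (t.factorial:ℝ)^β) := by
    intro t ht
    have := hS t 1 le_rfl ht
    rw [hS1 t ht] at this
    simpa [Nat.factorial_one, Real.one_rpow] using this
  set C₁ : ℝ := max C 1 with hC₁def
  have hC₁1 : (1:ℝ) ≤ C₁ := le_max_right _ _
  have hC₁C : C ≤ C₁ := le_max_left _ _
  have hC₁pos : (0:ℝ) < C₁ := lt_of_lt_of_le one_pos hC₁1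
  -- summability of the coefficient series
  have hmaj : ∀ u : ℂ, ∀ t : ℕ, ‖UmbralAux.ext a t * u^t‖
      ≤ C₁ * ((2^l * ‖u‖)^t / (t.factorial:ℝ)^β) := by
    intro u t
    rcases Nat.eq_zero_or_pos t with h0 | h1
    · subst h0
      simp [UmbralAux.ext]
      positivity
    · rw [norm_mul, norm_pow]
      have h2 : ‖UmbralAux.ext a t‖ = ‖a t‖ := by
        simp only [UmbralAux.ext]
        rw [if_neg (by omega)]
      rw [h2]
      calc ‖a t‖ * ‖u‖ ^ t
          ≤ (C * 2^(l*t) * (1/(t.factorial:ℝ)^β)) * ‖u‖ ^ t := by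
            apply mul_le_mul_of_nonneg_right (habs_a t h1) (by positivity)
        _ = C * ((2^l * ‖u‖)^t / (t.factorial:ℝ)^β) := by
            rw [pow_mul, mul_pow]; ring
        _ ≤ C₁ * ((2^l * ‖u‖)^t / (t.factorial:ℝ)^β) := by
            apply mul_le_mul_of_nonneg_right hC₁C (by positivity)
  have hb_u : ∀ u : ℂ, Summable (fun t : ℕ => ‖UmbralAux.ext a t * u^t‖) := by
    intro u
    apply Summable.of_nonneg_of_le (fun t => norm_nonneg _) (hmaj u)
    exact ((UmbralAux.growth hβ0 hβ1 (by positivity : (0:ℝ) ≤ 2^l * ‖u‖)).1).mul_left C₁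
  -- unified coefficient bound
  have hS' : ∀ n m : ℕ, ‖UmbralAux.Sn (UmbralAux.ext a) n m‖
      ≤ C₁ * 2^(l*n) * ((m.factorial:ℝ)^β / (n.factorial:ℝ)^β) := by
    intro n m
    rcases Nat.eq_zero_or_pos m with rfl | hm1
    · rw [UmbralAux.Sn_zero]
      rcases Nat.eq_zero_or_pos n with rfl | hn1
      · rw [if_pos rfl]
        simp [Nat.factorial_zero]
        linarith
      · rw [if_neg (by omega)]
        simp only [norm_zero]
        positivity
    · rcases Nat.lt_or_ge n m with hlt | hge
      · rw [UmbralAux.Sn_eq_zero_of_lt (by simp [UmbralAux.ext]) hlt]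
        simp only [norm_zero]
        positivity
      · rw [UmbralAux.Sn_ext_eq]
        refine le_trans (hS n m hm1 hge) ?_
        apply mul_le_mul_of_nonneg_right (mul_le_mul_of_nonneg_right hC₁C (by positivity))
          (by positivity)
  -- Step C : bound on the m-th power of A(u)
  have hAm : ∀ u : ℂ, ∀ m : ℕ, ‖(∑' t:ℕ, UmbralAux.ext a t * u^t)^m‖
      ≤ C₁ * (m.factorial:ℝ)^β * ∑' n:ℕ, (2^l * ‖u‖)^n/(n.factorial:ℝ)^β := by
    intro u m
    have hpow := UmbralAux.Sn_pow (UmbralAux.ext a) (hb_u u) m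
    rw [hpow.2]
    refine le_trans (norm_tsum_le_tsum_norm hpow.1) ?_
    have hterm : ∀ n:ℕ, ‖UmbralAux.Sn (UmbralAux.ext a) n m * u^n‖
        ≤ C₁ * (m.factorial:ℝ)^β * ((2^l * ‖u‖)^n/(n.factorial:ℝ)^β) := by
      intro n
      rw [norm_mul, norm_pow]
      calc ‖UmbralAux.Sn (UmbralAux.ext a) n m‖ * ‖u‖ ^ n
          ≤ (C₁ * 2^(l*n) * ((m.factorial:ℝ)^β/(n.factorial:ℝ)^β)) * ‖u‖ ^ n :=
            mul_le_mul_of_nonneg_right (hS' n m) (by positivity)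
        _ = C₁ * (m.factorial:ℝ)^β * ((2^l * ‖u‖)^n/(n.factorial:ℝ)^β) := by
            rw [pow_mul, mul_pow]; ring
    refine le_trans (Summable.tsum_le_tsum hterm hpow.1 ?_) ?_
    · exact ((UmbralAux.growth hβ0 hβ1
        (by positivity : (0:ℝ) ≤ 2^l * ‖u‖)).1).mul_left _
    · rw [tsum_mul_left]
  -- Step C : bound on exp(z * A(u))
  have hexp : ∀ z u : ℂ, ‖Complex.exp (z * (∑' t:ℕ, UmbralAux.ext a t * u^t))‖
      ≤ C₁ * (∑' n:ℕ, (2^l * ‖u‖)^n/(n.factorial:ℝ)^β)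
        * (∑' m:ℕ, (‖z‖)^m/(m.factorial:ℝ)^(1/α)) := by
    intro z u
    set A : ℂ := ∑' t:ℕ, UmbralAux.ext a t * u^t with hAdef
    set G : ℝ := ∑' n:ℕ, (2^l * ‖u‖)^n/(n.factorial:ℝ)^β with hGdef
    have hGnn : 0 ≤ G := tsum_nonneg fun n => by positivity
    rw [Complex.exp_eq_exp_ℂ, NormedSpace.exp_eq_tsum_div]
    refine le_trans (norm_tsum_le_tsum_norm (NormedSpace.norm_expSeries_div_summable _)) ?_
    have hterm : ∀ m:ℕ, ‖(z*A)^m / (m.factorial:ℂ)‖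
        ≤ (C₁ * G) * ((‖z‖)^m/(m.factorial:ℝ)^(1/α)) := by
      intro m
      have hfpos : (0:ℝ) < (m.factorial:ℝ) := by exact_mod_cast m.factorial_pos
      have em : (m.factorial:ℝ)^(1/α) * (m.factorial:ℝ)^β = (m.factorial:ℝ) := by
        rw [← Real.rpow_add hfpos, show 1/α + β = 1 by rw [hβdef]; ring, Real.rpow_one]
      have e3 : (m.factorial:ℝ)^β / (m.factorial:ℝ) = 1/(m.factorial:ℝ)^(1/α) := by
        rw [div_eq_div_iff hfpos.ne' (by positivity), one_mul, mul_comm]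
        exact em
      have h1 : ‖((m.factorial:ℂ))‖ = (m.factorial:ℝ) := by
        rw [Complex.norm_natCast]
      rw [norm_div, mul_pow, norm_mul, norm_pow, h1]
      calc ‖z‖^m * ‖A^m‖ / (m.factorial:ℝ)
          ≤ ‖z‖^m * (C₁ * (m.factorial:ℝ)^β * G) / (m.factorial:ℝ) := by
            gcongr
            exact hAm u m
        _ = (C₁ * G) * (‖z‖^m * ((m.factorial:ℝ)^β / (m.factorial:ℝ))) := by ring
        _ = (C₁ * G) * ((‖z‖)^m/(m.factorial:ℝ)^(1/α)) := by
            rw [e3]; ring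
    refine le_trans (Summable.tsum_le_tsum hterm (NormedSpace.norm_expSeries_div_summable _) ?_) ?_
    · exact ((UmbralAux.growth hθ0 hθ1 (by positivity : (0:ℝ) ≤ ‖z‖)).1).mul_left _
    · rw [tsum_mul_left]
  -- exponential-growth form of the bound
  have hkey : ∀ z u : ℂ, ‖Complex.exp (z * (∑' t:ℕ, UmbralAux.ext a t * u^t))‖
      ≤ 9*C₁ * Real.exp ((2*‖z‖)^α + (2*(2^l*‖u‖))^(1/β)) := by
    intro z u
    have h1 := hexp z u
    have hGb := (UmbralAux.growth hβ0 hβ1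
      (by positivity : (0:ℝ) ≤ 2^l * ‖u‖)).2
    have hEb := (UmbralAux.growth hθ0 hθ1 (by positivity : (0:ℝ) ≤ ‖z‖)).2
    rw [one_div_one_div] at hEb
    set X : ℝ := (2*‖z‖)^α with hX
    set Y : ℝ := (2*(2^l*‖u‖))^(1/β) with hY
    have hXnn : 0 ≤ X := Real.rpow_nonneg (by positivity) _
    have hYnn : 0 ≤ Y := Real.rpow_nonneg (by positivity) _
    have hexpX : (1:ℝ) ≤ Real.exp X := Real.one_le_exp hXnn
    have hexpY : (1:ℝ) ≤ Real.exp Y := Real.one_le_exp hYnn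
    have hG3 : (∑' n:ℕ, (2^l * ‖u‖)^n/(n.factorial:ℝ)^β) ≤ 3 * Real.exp Y := by
      refine le_trans hGb ?_; linarith
    have hE3 : (∑' m:ℕ, (‖z‖)^m/(m.factorial:ℝ)^(1/α)) ≤ 3 * Real.exp X := by
      refine le_trans hEb ?_; linarith
    have hGnn : (0:ℝ) ≤ ∑' n:ℕ, (2^l * ‖u‖)^n/(n.factorial:ℝ)^β :=
      tsum_nonneg fun n => by positivity
    have hEnn : (0:ℝ) ≤ ∑' m:ℕ, (‖z‖)^m/(m.factorial:ℝ)^(1/α) :=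
      tsum_nonneg fun m => by positivity
    refine le_trans h1 ?_
    calc C₁ * (∑' n:ℕ, (2^l * ‖u‖)^n/(n.factorial:ℝ)^β)
          * (∑' m:ℕ, (‖z‖)^m/(m.factorial:ℝ)^(1/α))
        ≤ C₁ * (3 * Real.exp Y) * (3 * Real.exp X) := by
          apply mul_le_mul ?_ hE3 hEnn (by positivity)
          exact mul_le_mul_of_nonneg_left hG3 hC₁pos.le
      _ = 9*C₁ * Real.exp (X + Y) := by rw [Real.exp_add]; ring
  -- Step C' : the generating series has linear growth
  set D : ℝ := Real.log (9*C₁) with hDdef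
  have h9 : (0:ℝ) < 9*C₁ := by linarith
  have hD : 0 < D := Real.log_pos (by linarith)
  set K1 : ℝ := (1 + (2:ℝ)^α) * (D+1)^β with hK1def
  set K2 : ℝ := (1 + (2:ℝ)^α) * (2*2^l) with hK2def
  have h2α : (0:ℝ) < (2:ℝ)^α := Real.rpow_pos_of_pos (by norm_num) _
  have hK1nn : 0 ≤ K1 := by
    rw [hK1def]
    have : (0:ℝ) ≤ (D+1)^β := Real.rpow_nonneg (by linarith) _
    nlinarith
  have hK2nn : 0 ≤ K2 := by rw [hK2def]; positivity
  have hlin : ∀ u : ℂ, ‖∑' t:ℕ, UmbralAux.ext a t * u^t‖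
      ≤ K1 + K2 * ‖u‖ := by
    intro u
    set w : ℂ := ∑' t:ℕ, UmbralAux.ext a t * u^t with hwdef
    by_cases hw0 : w = 0
    · rw [hw0, norm_zero]
      positivity
    · set M : ℝ := (2*(2^l*‖u‖))^(1/β) with hMdef
      have hMnn : 0 ≤ M := Real.rpow_nonneg (by positivity) _
      set R : ℝ := (D + M + 1)^(1/α) with hRdef
      have hR1 : 1 ≤ R := by
        rw [hRdef]
        calc (1:ℝ) = (1:ℝ)^(1/α) := (Real.one_rpow _).symm
          _ ≤ (D + M + 1)^(1/α) := Real.rpow_le_rpow (by norm_num) (by linarith) (by positivity)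
      have hRpos : (0:ℝ) < R := lt_of_lt_of_le one_pos hR1
      have hRα : R^α = D + M + 1 := by
        rw [hRdef, ← Real.rpow_mul (by linarith), one_div,
          inv_mul_cancel₀ (ne_of_gt hαpos), Real.rpow_one]
      have hwpos : 0 < ‖w‖ := by
        have := norm_ne_zero_iff.mpr hw0
        rcases lt_or_eq_of_le (norm_nonneg w) with h | h
        · exact h
        · exact absurd h.symm this
      set z : ℂ := ((R / ‖w‖ : ℝ) : ℂ) * (starRingEnd ℂ) w with hzdef
      have hzw : z * w = ((R * ‖w‖ : ℝ) : ℂ) := by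
        rw [hzdef, mul_assoc, mul_comm ((starRingEnd ℂ) w) w, Complex.mul_conj]
        rw [← Complex.ofReal_mul]
        congr 1
        rw [Complex.normSq_eq_norm_sq]
        field_simp
      have habsz : ‖z‖ = R := by
        rw [hzdef, norm_mul, Complex.norm_real, Real.norm_eq_abs, Complex.norm_conj,
          abs_of_pos (by positivity)]
        field_simp
      have h1 := hkey z u
      rw [← hwdef, hzw, Complex.norm_exp, Complex.ofReal_re, habsz, ← hMdef] at h1
      rw [show (9*C₁ : ℝ) = Real.exp D from (Real.exp_log h9).symm, ← Real.exp_add] at h1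
      have h2 : R * ‖w‖ ≤ D + ((2*R)^α + M) := Real.exp_le_exp.1 h1
      have h2R : (2*R)^α = 2^α * R^α := Real.mul_rpow (by norm_num) hRpos.le
      rw [h2R, hRα] at h2
      have h3 : ‖w‖ ≤ (1 + 2^α) * (D+M+1) / R := by
        rw [le_div_iff₀ hRpos]
        nlinarith [h2]
      have h4 : (D+M+1)/R = (D+M+1)^β := by
        rw [hβdef, Real.rpow_sub (by linarith : (0:ℝ) < D+M+1), Real.rpow_one, ← hRdef]
      have h5 : (D+M+1)^β ≤ (D+1)^β + M^β := by
        calc (D+M+1)^β = ((D+1)+M)^β := by ring_nf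
          _ ≤ (D+1)^β + M^β :=
            UmbralAux.rpow_add_le (by linarith) hMnn hβ0 (le_of_lt hβ1)
      have h6 : M^β = 2*(2^l*‖u‖) := by
        rw [hMdef, ← Real.rpow_mul (by positivity), one_div,
          inv_mul_cancel₀ (ne_of_gt hβ0), Real.rpow_one]
      calc ‖w‖ ≤ (1 + 2^α) * (D+M+1) / R := h3
        _ = (1 + 2^α) * ((D+M+1)/R) := by ring
        _ = (1 + 2^α) * (D+M+1)^β := by rw [h4]
        _ ≤ (1 + 2^α) * ((D+1)^β + M^β) := by
            apply mul_le_mul_of_nonneg_left h5 (by positivity)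
        _ = K1 + K2 * ‖u‖ := by rw [h6, hK1def, hK2def]; ring
  -- Step D : all higher coefficients vanish
  have hak : ∀ k : ℕ, 2 ≤ k → a k = 0 := by
    intro k hk2
    have hmain : ∀ r : ℝ, 1 ≤ r → ‖a k‖ * r^k ≤ K1 + K2 * r := by
      intro r hr
      have hrpos : (0:ℝ) < r := by linarith
      set f : ℕ → ℂ := fun t => UmbralAux.ext a t * ((r:ℂ))^t with hfdef
      have hfs : Summable (fun t => ‖f t‖) := hb_u _
      have hTail0 : Filter.Tendsto (fun N => ∑' i:ℕ, ‖f (i+N)‖)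
          Filter.atTop (nhds 0) := tendsto_sum_nat_add (fun t => ‖f t‖)
      have hstep : ∀ N : ℕ, k < N →
          ‖a k‖ * r^k ≤ K1 + K2*r + ∑' i:ℕ, ‖f (i+N)‖ := by
        intro N hkN
        have hN0 : N ≠ 0 := by omega
        have hNpos : 0 < N := by omega
        have hNR : (0:ℝ) < (N:ℝ) := by exact_mod_cast hNpos
        set ζ : ℂ := Complex.exp (2 * (Real.pi:ℂ) * Complex.I / (N:ℂ)) with hζdef
        have hprim : IsPrimitiveRoot ζ N := Complex.isPrimitiveRoot_exp N hN0
        have hζN : ζ^N = 1 := hprim.pow_eq_one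
        have habsζ : ‖ζ‖ = 1 := by
          rw [hζdef, Complex.norm_exp]
          have hre : (2 * (Real.pi:ℂ) * Complex.I / (N:ℂ)).re = 0 := by
            rw [show 2*(Real.pi:ℂ)*Complex.I/(N:ℂ)
                = ((2*Real.pi/(N:ℝ) : ℝ):ℂ) * Complex.I by push_cast; ring]
            simp
          rw [hre, Real.exp_zero]
        have hgeo : ∀ d : ℕ, (∑ j ∈ Finset.range N, (ζ^d)^j)
            = if N ∣ d then (N:ℂ) else 0 := by
          intro d
          by_cases hd : N ∣ d
          · rw [if_pos hd, (hprim.pow_eq_one_iff_dvd d).2 hd]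
            simp
          · rw [if_neg hd, geom_sum_eq (fun h => hd ((hprim.pow_eq_one_iff_dvd d).1 h)) N,
              ← pow_mul, mul_comm d N, pow_mul, hζN, one_pow]
            simp
        have hc1 : ∀ j : ℕ, (∑' t:ℕ, UmbralAux.ext a t * (((r:ℂ)) * ζ^j)^t) * ζ^(j*(N-k))
            = ∑' t:ℕ, f t * ζ^(j*t + j*(N-k)) := by
          intro j
          rw [← tsum_mul_right]
          apply tsum_congr
          intro t
          rw [hfdef]
          simp only
          rw [mul_pow, ← pow_mul, pow_add]
          ring
        have hsumj : ∀ j : ℕ, Summable (fun t => f t * ζ^(j*t + j*(N-k))) := by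
          intro j
          apply Summable.of_norm
          have he : (fun t => ‖f t * ζ^(j*t + j*(N-k))‖) = fun t => ‖f t‖ := by
            funext t
            rw [norm_mul, norm_pow, habsζ, one_pow, mul_one]
          rw [he]
          exact hfs
        have hc3 : ∀ t:ℕ, ∑ j ∈ Finset.range N, f t * ζ^(j*t + j*(N-k))
            = f t * (if N ∣ (t + (N-k)) then (N:ℂ) else 0) := by
          intro t
          rw [← Finset.mul_sum]
          congr 1
          rw [← hgeo (t + (N-k))]
          apply Finset.sum_congr rfl
          intro j _
          rw [← pow_mul]
          congr 1
          ring
        have hmaineq : ∑ j ∈ Finset.range N,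
            (∑' t:ℕ, UmbralAux.ext a t * (((r:ℂ)) * ζ^j)^t) * ζ^(j*(N-k))
            = ∑' t:ℕ, f t * (if N ∣ (t + (N-k)) then (N:ℂ) else 0) := by
          rw [Finset.sum_congr rfl (fun j _ => hc1 j), ← Summable.tsum_finsetSum (fun j _ => hsumj j)]
          exact tsum_congr hc3
        have hsplit : ∀ t:ℕ, f t * (if N ∣ (t + (N-k)) then (N:ℂ) else 0)
            = (if t = k then f k * (N:ℂ) else 0)
              + (if t ≠ k ∧ N ∣ (t + (N-k)) then f t * (N:ℂ) else 0) := by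
          intro t
          by_cases ht : t = k
          · have hdvd : (N:ℕ) ∣ k + (N-k) := by
              rw [show k + (N-k) = N from by omega]
            rw [ht, if_pos rfl, if_pos hdvd,
              if_neg (show ¬(k ≠ k ∧ (N:ℕ) ∣ k + (N-k)) from by simp)]
            ring
          · rw [if_neg ht]
            by_cases hd : N ∣ (t + (N-k))
            · rw [if_pos hd, if_pos ⟨ht, hd⟩, zero_add]
            · rw [if_neg hd, if_neg (by tauto), mul_zero, add_zero]
        have hs1 : Summable (fun t => if t = k then f k * (N:ℂ) else 0) := by
          apply summable_of_ne_finset_zero (s := ({k} : Finset ℕ))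
          intro t ht
          rw [Finset.mem_singleton] at ht
          rw [if_neg ht]
        have hs2norm : Summable (fun t => ‖if t ≠ k ∧ N ∣ (t + (N-k)) then f t * (N:ℂ) else 0‖) := by
          apply Summable.of_nonneg_of_le (fun t => norm_nonneg _) ?_ (hfs.mul_left (N:ℝ))
          intro t
          by_cases h : t ≠ k ∧ N ∣ (t + (N-k))
          · rw [if_pos h, norm_mul, Complex.norm_natCast]
            exact le_of_eq (mul_comm _ _)
          · rw [if_neg h, norm_zero]
            positivity
        have hs2 : Summable (fun t => if t ≠ k ∧ N ∣ (t + (N-k)) then f t * (N:ℂ) else 0) :=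
          Summable.of_norm hs2norm
        have htsum_split : ∑' t:ℕ, f t * (if N ∣ (t + (N-k)) then (N:ℂ) else 0)
            = f k * (N:ℂ) + ∑' t:ℕ, (if t ≠ k ∧ N ∣ (t + (N-k)) then f t * (N:ℂ) else 0) := by
          calc ∑' t:ℕ, f t * (if N ∣ (t + (N-k)) then (N:ℂ) else 0)
              = ∑' t:ℕ, ((if t = k then f k * (N:ℂ) else 0)
                + (if t ≠ k ∧ N ∣ (t + (N-k)) then f t * (N:ℂ) else 0)) := tsum_congr hsplit
            _ = (∑' t:ℕ, if t = k then f k * (N:ℂ) else 0)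
                + ∑' t:ℕ, (if t ≠ k ∧ N ∣ (t + (N-k)) then f t * (N:ℂ) else 0) :=
                Summable.tsum_add hs1 hs2
            _ = f k * (N:ℂ) + ∑' t:ℕ, (if t ≠ k ∧ N ∣ (t + (N-k)) then f t * (N:ℂ) else 0) := by
                rw [tsum_ite_eq k]
        -- tail estimate
        have hpt : ∀ t:ℕ, ‖(if t ≠ k ∧ N ∣ (t + (N-k)) then f t * (N:ℂ) else 0)‖
            ≤ (N:ℝ) * (if N ≤ t then ‖f t‖ else 0) := by
          intro t
          by_cases h : t ≠ k ∧ N ∣ (t + (N-k))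
          · have htN : N ≤ t := by
              rcases Nat.lt_or_ge t N with hlt | hge
              · exfalso
                have hdpos : 0 < t + (N-k) := by omega
                have h1 := Nat.le_of_dvd hdpos h.2
                by_cases he : t + (N-k) = N
                · exact h.1 (by omega)
                · have h2 : N ∣ (t + (N-k) - N) := Nat.dvd_sub h.2 dvd_rfl
                  have h3 : 0 < t + (N-k) - N := by omega
                  have h4 := Nat.le_of_dvd h3 h2
                  omega
              · exact hge
            rw [if_pos h, if_pos htN, norm_mul, Complex.norm_natCast]
            exact le_of_eq (mul_comm _ _)
          · rw [if_neg h, norm_zero]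
            positivity
        have hmaj2 : Summable (fun t => (N:ℝ) * (if N ≤ t then ‖f t‖ else 0)) := by
          apply Summable.mul_left
          apply Summable.of_nonneg_of_le (fun t => by positivity) ?_ hfs
          intro t
          by_cases h : N ≤ t
          · rw [if_pos h]
          · rw [if_neg h]
            positivity
        have hiteSummable : Summable (fun t => if N ≤ t then ‖f t‖ else 0) := by
          apply Summable.of_nonneg_of_le (fun t => by positivity) ?_ hfs
          intro t
          by_cases h : N ≤ t
          · rw [if_pos h]
          · rw [if_neg h]
            positivity
        have hshift : ∑' t:ℕ, (if N ≤ t then ‖f t‖ else 0) = ∑' i:ℕ, ‖f (i+N)‖ := by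
          have h0 := Summable.sum_add_tsum_nat_add (f := fun t => if N ≤ t then ‖f t‖ else 0) N hiteSummable
          have h1 : ∑ i ∈ Finset.range N, (if N ≤ i then ‖f i‖ else 0) = 0 := by
            apply Finset.sum_eq_zero
            intro i hi
            rw [Finset.mem_range] at hi
            rw [if_neg (by omega)]
          have h2 : ∀ i:ℕ, (if N ≤ i + N then ‖f (i+N)‖ else 0) = ‖f (i+N)‖ := by
            intro i
            rw [if_pos (by omega)]
          rw [h1, zero_add] at h0
          rw [← h0]
          exact tsum_congr h2
        have htail : ‖∑' t:ℕ, (if t ≠ k ∧ N ∣ (t + (N-k)) then f t * (N:ℂ) else 0)‖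
            ≤ (N:ℝ) * ∑' i:ℕ, ‖f (i+N)‖ := by
          refine le_trans (norm_tsum_le_tsum_norm hs2norm) ?_
          refine le_trans (Summable.tsum_le_tsum hpt hs2norm hmaj2) ?_
          rw [tsum_mul_left, hshift]
        -- bound the root-of-unity average
        have hSUMJ : ‖∑ j ∈ Finset.range N,
            (∑' t:ℕ, UmbralAux.ext a t * (((r:ℂ)) * ζ^j)^t) * ζ^(j*(N-k))‖
            ≤ (N:ℝ) * (K1 + K2 * r) := by
          refine le_trans (norm_sum_le _ _) ?_
          have hterm : ∀ j ∈ Finset.range N,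
              ‖(∑' t:ℕ, UmbralAux.ext a t * (((r:ℂ)) * ζ^j)^t) * ζ^(j*(N-k))‖
              ≤ K1 + K2 * r := by
            intro j _
            rw [norm_mul, norm_pow, habsζ, one_pow, mul_one]
            have h := hlin ((r:ℂ) * ζ^j)
            rwa [norm_mul, Complex.norm_real, Real.norm_eq_abs, norm_pow, habsζ, one_pow, mul_one,
              abs_of_pos hrpos] at h
          calc ∑ j ∈ Finset.range N,
                ‖(∑' t:ℕ, UmbralAux.ext a t * (((r:ℂ)) * ζ^j)^t) * ζ^(j*(N-k))‖
              ≤ ∑ _j ∈ Finset.range N, (K1 + K2 * r) := Finset.sum_le_sum hterm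
            _ = (N:ℝ) * (K1 + K2 * r) := by
                rw [Finset.sum_const, Finset.card_range, nsmul_eq_mul]
        have hfk : f k * (N:ℂ)
            = (∑ j ∈ Finset.range N,
                (∑' t:ℕ, UmbralAux.ext a t * (((r:ℂ)) * ζ^j)^t) * ζ^(j*(N-k)))
              - ∑' t:ℕ, (if t ≠ k ∧ N ∣ (t + (N-k)) then f t * (N:ℂ) else 0) := by
          rw [hmaineq, htsum_split]
          ring
        have hnormfk : ‖f k * (N:ℂ)‖ = ‖a k‖ * r^k * (N:ℝ) := by
          rw [norm_mul, hfdef]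
          simp only
          rw [norm_mul, norm_pow, Complex.norm_natCast,
            Complex.norm_real, Real.norm_eq_abs, abs_of_pos hrpos]
          have : ‖UmbralAux.ext a k‖ = ‖a k‖ := by
            simp only [UmbralAux.ext]
            rw [if_neg (by omega)]
          rw [this]
        have hfinal : ‖a k‖ * r^k * (N:ℝ)
            ≤ (N:ℝ) * (K1 + K2*r) + (N:ℝ) * ∑' i:ℕ, ‖f (i+N)‖ := by
          rw [← hnormfk, hfk]
          exact le_trans (norm_sub_le _ _) (add_le_add hSUMJ htail)
        have hfinal2 : (‖a k‖ * r^k) * (N:ℝ)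
            ≤ (K1 + K2*r + ∑' i:ℕ, ‖f (i+N)‖) * (N:ℝ) := by
          calc (‖a k‖ * r^k) * (N:ℝ)
              = ‖a k‖ * r^k * (N:ℝ) := by ring
            _ ≤ (N:ℝ) * (K1 + K2*r) + (N:ℝ) * ∑' i:ℕ, ‖f (i+N)‖ := hfinal
            _ = (K1 + K2*r + ∑' i:ℕ, ‖f (i+N)‖) * (N:ℝ) := by ring
        exact le_of_mul_le_mul_right hfinal2 hNR
      have hlim : Filter.Tendsto (fun N => K1 + K2*r + ∑' i:ℕ, ‖f (i+N)‖)
          Filter.atTop (nhds (K1 + K2*r + 0)) := tendsto_const_nhds.add hTail0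
      have hle := ge_of_tendsto hlim
        (Filter.eventually_atTop.2 ⟨k+1, fun N hN => hstep N (by omega)⟩)
      simpa using hle
    by_contra hne
    have habs : 0 < ‖a k‖ := by
      rcases lt_or_eq_of_le (norm_nonneg (a k)) with h | h
      · exact h
      · exact absurd h.symm (norm_ne_zero_iff.mpr hne)
    set q : ℝ := ‖a k‖ with hq
    set r : ℝ := max 1 ((K1+K2+1)/q) with hrdef
    have hr1 : (1:ℝ) ≤ r := le_max_left _ _
    have hrpos : (0:ℝ) < r := lt_of_lt_of_le one_pos hr1
    have h1 := hmain r hr1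
    have hr2 : r^2 ≤ r^k := pow_le_pow_right₀ hr1 hk2
    have h2 : q * r * r ≤ (K1+K2) * r := by nlinarith
    have h3 : q * r ≤ K1+K2 := le_of_mul_le_mul_right (by linarith) hrpos
    have h4 : K1+K2+1 ≤ q * r := by
      have hh : (K1+K2+1)/q ≤ r := le_max_right _ _
      rw [div_le_iff₀ habs] at hh
      linarith [hh]
    linarith
  -- conclusion
  refine ⟨hak, ?_⟩
  intro n z
  rcases Nat.eq_zero_or_pos n with rfl | hn
  · rw [hp0, pow_zero]
  · rw [hp n hn z]
    have hSval : ∀ m ∈ Finset.Icc 1 n,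
        (∑' k : Fin m → ℕ+, if (∑ i, ((k i : ℕ))) = n then ∏ i, a (k i) else 0)
          = if m = n then 1 else 0 := by
      intro m _
      have hside : ∀ g : Fin m → ℕ+, g ≠ (fun _ => 1) →
          (if (∑ i, ((g i : ℕ))) = n then ∏ i, a (g i) else 0) = 0 := by
        intro g hg
        have hex : ∃ i, g i ≠ 1 := by
          by_contra hall
          push_neg at hall
          exact hg (funext hall)
        obtain ⟨i, hi⟩ := hex
        have h2 : (2:ℕ) ≤ (g i : ℕ) := by
          have h3 : (g i : ℕ) ≠ 1 := fun h => hi (PNat.coe_injective (by simpa using h))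
          have h4 : 0 < ((g i : ℕ)) := (g i).pos
          omega
        have hz : a ((g i : ℕ)) = 0 := hak _ h2
        by_cases hc : (∑ i', ((g i' : ℕ))) = n
        · rw [if_pos hc]
          exact Finset.prod_eq_zero (Finset.mem_univ i) hz
        · rw [if_neg hc]
      calc (∑' k : Fin m → ℕ+, if (∑ i, ((k i : ℕ))) = n then ∏ i, a (k i) else 0)
          = _ := tsum_eq_single (fun _ => 1) hside
        _ = if m = n then 1 else 0 := by
            have hsum : (∑ i : Fin m, (((1:ℕ+) : ℕ))) = m := by simp
            rw [hsum]
            by_cases hmn : m = n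
            · rw [if_pos hmn, if_pos hmn]
              simp [ha1]
            · rw [if_neg hmn, if_neg hmn]
    rw [Finset.sum_congr rfl (fun m hm => by rw [hSval m hm])]
    simp only [mul_ite, mul_one, mul_zero]
    rw [Finset.sum_ite_eq' (Finset.Icc 1 n) n (fun m => z^m/(m.factorial:ℂ))]
    rw [if_pos (Finset.mem_Icc.2 ⟨hn, le_rfl⟩)]
    have hne : (n.factorial:ℂ) ≠ 0 := by exact_mod_cast n.factorial_ne_zero
    field_simp
end

section
/- Let α > 1, and for s ∈ [0,∞) define φ(s) := Σ_{n=0}^∞ (n!)^{1/α − 1} · s^n. Then: (a) the series converges for every s ≥ 0 and φ is strictly increasing on [0,∞); and (b) for every A ≥ 1 and B ≥ 1 there exists D > 0 such that A · φ(B·s) ≤ φ(D·s) for all s ≥ 1. -/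
open Filter Topology
set_option maxHeartbeats 1000000

/-- Auxiliary comparison inequality used in the proof of Proposition 3.6(ii):
properties of `φ(s) = Σ (n!)^{1/α−1} s^n` for `α > 1`. -/
theorem phi_comparison
    (α : ℝ) (hα : 1 < α) (φ : ℝ → ℝ)
    (hφ : ∀ s : ℝ, φ s = ∑' n : ℕ, (n.factorial : ℝ) ^ (1 / α - 1) * s ^ n) :
    (∀ s : ℝ, 0 ≤ s → Summable fun n : ℕ => (n.factorial : ℝ) ^ (1 / α - 1) * s ^ n) ∧
    StrictMonoOn φ (Set.Ici 0) ∧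
    ∀ A B : ℝ, 1 ≤ A → 1 ≤ B → ∃ D : ℝ, 0 < D ∧
      ∀ s : ℝ, 1 ≤ s → A * φ (B * s) ≤ φ (D * s) := by
  set β : ℝ := 1 / α - 1 with hβdef
  have hα0 : (0:ℝ) < α := lt_trans one_pos hα
  have hβneg : β < 0 := by
    have h : 1 / α < 1 := by
      rw [div_lt_one hα0]; exact hα
    rw [hβdef]; linarith
  have hβm1 : (-1:ℝ) ≤ β := by
    have h : 0 < 1 / α := by positivity
    rw [hβdef]; linarith
  have hfacpos : ∀ n : ℕ, (0:ℝ) < (n.factorial : ℝ) := by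
    intro n; exact_mod_cast n.factorial_pos
  have hcpos : ∀ n : ℕ, (0:ℝ) < (n.factorial : ℝ) ^ β :=
    fun n => Real.rpow_pos_of_pos (hfacpos n) β
  -- factorization of c_{n+1}
  have hfacsucc : ∀ n : ℕ, ((n+1).factorial : ℝ) ^ β = ((n:ℝ)+1) ^ β * (n.factorial : ℝ) ^ β := by
    intro n
    have : ((n+1).factorial : ℝ) = ((n:ℝ)+1) * (n.factorial : ℝ) := by
      rw [Nat.factorial_succ]; push_cast; ring
    rw [this, Real.mul_rpow (by positivity) (hfacpos n).le]
  -- Summability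
  have hsum : ∀ s : ℝ, 0 ≤ s → Summable fun n : ℕ => (n.factorial : ℝ) ^ β * s ^ n := by
    intro s hs
    apply summable_of_ratio_norm_eventually_le (r := 1/2) (by norm_num)
    have h0 : Tendsto (fun n : ℕ => ((n:ℝ)+1) ^ β * s) atTop (𝓝 0) := by
      have h1 : Tendsto (fun x : ℝ => x ^ β) atTop (𝓝 0) := by
        have := tendsto_rpow_neg_atTop (y := -β) (by linarith)
        simpa using this
      have h2 : Tendsto (fun n : ℕ => ((n:ℝ)+1)) atTop atTop :=
        tendsto_natCast_atTop_atTop.atTop_add tendsto_const_nhds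
      have := (h1.comp h2).mul_const s
      simpa using this
    have hev : ∀ᶠ n : ℕ in atTop, ((n:ℝ)+1) ^ β * s ≤ 1/2 := by
      have := h0.eventually (eventually_le_nhds (by norm_num : (0:ℝ) < 1/2))
      exact this
    filter_upwards [hev] with n hn
    have hterm : ((n+1).factorial : ℝ) ^ β * s ^ (n+1)
        = (((n:ℝ)+1) ^ β * s) * ((n.factorial : ℝ) ^ β * s ^ n) := by
      rw [hfacsucc n, pow_succ]; ring
    rw [Real.norm_eq_abs, Real.norm_eq_abs,
      abs_of_nonneg (mul_nonneg (hcpos _).le (pow_nonneg hs _)),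
      abs_of_nonneg (mul_nonneg (hcpos _).le (pow_nonneg hs _)), hterm]
    exact mul_le_mul_of_nonneg_right hn (mul_nonneg (hcpos _).le (pow_nonneg hs _))
  refine ⟨hsum, ?_, ?_⟩
  · -- strict mono
    intro a ha b hb hab
    rw [hφ a, hφ b]
    refine Summable.tsum_lt_tsum (i := 1) (fun n => ?_) ?_ (hsum a ha) (hsum b (le_of_lt (lt_of_le_of_lt ha hab)))
    · exact mul_le_mul_of_nonneg_left (pow_le_pow_left₀ ha hab.le n) (hcpos n).le
    · have : a ^ 1 < b ^ 1 := by simpa using hab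
      exact mul_lt_mul_of_pos_left this (hcpos 1)
  · intro A B hA hB
    have hA0 : (0:ℝ) ≤ A := le_trans zero_le_one hA
    have hB0 : (0:ℝ) ≤ B := le_trans zero_le_one hB
    refine ⟨2*A*B, by nlinarith [mul_pos (lt_of_lt_of_le one_pos hA) (lt_of_lt_of_le one_pos hB)], fun s hs => ?_⟩
    have hs0 : (0:ℝ) ≤ s := le_trans zero_le_one hs
    set D : ℝ := 2*A*B with hD
    have hDs : (0:ℝ) ≤ D * s := mul_nonneg (mul_nonneg (mul_nonneg two_pos.le hA0) hB0) hs0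
    have hBs : (0:ℝ) ≤ B * s := mul_nonneg hB0 hs0
    have gsum : Summable fun n : ℕ => (n.factorial : ℝ) ^ β * (D*s) ^ n := hsum _ hDs
    have gsum' : Summable fun n : ℕ => ((n+1).factorial : ℝ) ^ β * (D*s) ^ (n+1) := by
      exact (summable_nat_add_iff (f := fun n : ℕ => (n.factorial : ℝ) ^ β * (D*s) ^ n) 1).mpr gsum
    have fsum : Summable fun n : ℕ => A * ((n.factorial : ℝ) ^ β * (B*s) ^ n) :=
      (hsum _ hBs).mul_left A
    -- termwise inequality
    have key : ∀ n : ℕ, A * ((n.factorial : ℝ) ^ β * (B*s) ^ n)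
        ≤ ((n+1).factorial : ℝ) ^ β * (D*s) ^ (n+1) := by
      intro n
      have h4 : ((n:ℝ)+1) ≤ 2 ^ (n+1) := by
        have : n+1 < 2^(n+1) := Nat.lt_two_pow_self
        exact_mod_cast this.le
      have hbig : A * B ^ n * s ^ n * ((n:ℝ)+1)
          ≤ 2 ^ (n+1) * A ^ (n+1) * B ^ (n+1) * s ^ (n+1) := by
        have h1 : A ≤ A ^ (n+1) := le_self_pow₀ hA n.succ_ne_zero
        have h2 : B ^ n ≤ B ^ (n+1) := pow_le_pow_right₀ hB (Nat.le_succ n)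
        have h3 : s ^ n ≤ s ^ (n+1) := pow_le_pow_right₀ hs (Nat.le_succ n)
        calc A * B ^ n * s ^ n * ((n:ℝ)+1)
            ≤ A ^ (n+1) * B ^ (n+1) * s ^ (n+1) * 2 ^ (n+1) := by
              refine mul_le_mul (mul_le_mul (mul_le_mul h1 h2 (pow_nonneg hB0 n)
                (pow_nonneg hA0 _)) h3 (pow_nonneg hs0 n)
                (mul_nonneg (pow_nonneg hA0 _) (pow_nonneg hB0 _))) h4 (by positivity)
                (mul_nonneg (mul_nonneg (pow_nonneg hA0 _) (pow_nonneg hB0 _)) (pow_nonneg hs0 _))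
          _ = 2 ^ (n+1) * A ^ (n+1) * B ^ (n+1) * s ^ (n+1) := by ring
      have hinv : ((n:ℝ)+1)⁻¹ ≤ ((n:ℝ)+1) ^ β := by
        have := Real.rpow_le_rpow_of_exponent_le (x := (n:ℝ)+1)
          (by exact_mod_cast Nat.one_le_iff_ne_zero.mpr (Nat.succ_ne_zero n) : (1:ℝ) ≤ (n:ℝ)+1) hβm1
        rwa [Real.rpow_neg_one] at this
      have hnp : (0:ℝ) < (n:ℝ)+1 := by positivity
      have step1 : A * B ^ n * s ^ n ≤ ((n:ℝ)+1)⁻¹ * (2 ^ (n+1) * A ^ (n+1) * B ^ (n+1) * s ^ (n+1)) := by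
        rw [inv_mul_eq_div, le_div_iff₀ hnp]
        linarith [hbig]
      have step2 : A * B ^ n * s ^ n ≤ ((n:ℝ)+1) ^ β * (2 ^ (n+1) * A ^ (n+1) * B ^ (n+1) * s ^ (n+1)) :=
        le_trans step1 (by
          have hbignn : (0:ℝ) ≤ 2 ^ (n+1) * A ^ (n+1) * B ^ (n+1) * s ^ (n+1) :=
            mul_nonneg (mul_nonneg (mul_nonneg (by positivity) (pow_nonneg hA0 _))
              (pow_nonneg hB0 _)) (pow_nonneg hs0 _)
          exact mul_le_mul_of_nonneg_right hinv hbignn)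
      calc A * ((n.factorial : ℝ) ^ β * (B*s) ^ n)
          = (n.factorial : ℝ) ^ β * (A * B ^ n * s ^ n) := by rw [mul_pow]; ring
        _ ≤ (n.factorial : ℝ) ^ β * (((n:ℝ)+1) ^ β * (2 ^ (n+1) * A ^ (n+1) * B ^ (n+1) * s ^ (n+1))) :=
            mul_le_mul_of_nonneg_left step2 (hcpos n).le
        _ = ((n+1).factorial : ℝ) ^ β * (D*s) ^ (n+1) := by
            rw [hfacsucc n, mul_pow, hD, mul_pow, mul_pow]; ring
    have h1 : A * φ (B*s) = ∑' n : ℕ, A * ((n.factorial : ℝ) ^ β * (B*s) ^ n) := by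
      rw [hφ]; exact (tsum_mul_left).symm
    have h2 : (∑' n : ℕ, A * ((n.factorial : ℝ) ^ β * (B*s) ^ n))
        ≤ ∑' n : ℕ, ((n+1).factorial : ℝ) ^ β * (D*s) ^ (n+1) :=
      Summable.tsum_le_tsum key fsum gsum'
    have h3 : (∑' n : ℕ, ((n+1).factorial : ℝ) ^ β * (D*s) ^ (n+1)) ≤ φ (D*s) := by
      rw [hφ]
      rw [Summable.tsum_eq_zero_add gsum]
      have : (0:ℝ) ≤ ((0:ℕ).factorial : ℝ) ^ β * (D*s) ^ 0 :=
        mul_nonneg (hcpos 0).le (pow_nonneg hDs 0)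
      linarith
    linarith [h1, h2, h3]
end
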